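/- arXiv:1509.05815 — 4 statements merged into one kernel-verified Lean document; each statement's English description precedes it below -/
import Mathlib

section
/- Tropical weighted Cramer's rule: let A be an (N−1) × N tw-matrix (total weight N−1). Then the vector of maximal tw-minors of A (whose j-th entry is the j-th maximal tw-minor) lies in the tw-kernel of A. Moreover, every vector in the tw-kernel of A equals this vector plus a constant multiple of (1, …, 1) if and only if every maximal tw-minor of A is tw-nonsingular. -/
/-- An ordered partition of the column set `Fin N` into blocks of sizes `m i`. -/
def IsTWPartition {M N : ℕ} (m : Fin M → ℕ) (P : Fin M → Finset (Fin N)) : Prop :=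
  (∀ i, (P i).card = m i) ∧ ∀ j : Fin N, ∃! i, j ∈ P i

/-- The sum `Σ_i Σ_{j ∈ I_i} A_{ij}` associated to an ordered partition. -/
def partSum {M N : ℕ} (A : Fin M → Fin N → ℝ) (P : Fin M → Finset (Fin N)) : ℝ :=
  ∑ i, ∑ j ∈ P i, A i j

/-- The tw-permanent: the minimum of `partSum` over all ordered partitions. -/
noncomputable def twPerm {M N : ℕ} (m : Fin M → ℕ) (A : Fin M → Fin N → ℝ) : ℝ :=
  sInf (partSum A '' {P | IsTWPartition m P})

/-- `A` is tw-singular: the minimum in the tw-permanent is attained by at least two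
distinct ordered partitions. -/
def TWSingular {M N : ℕ} (m : Fin M → ℕ) (A : Fin M → Fin N → ℝ) : Prop :=
  ∃ P Q : Fin M → Finset (Fin N), IsTWPartition m P ∧ IsTWPartition m Q ∧ P ≠ Q ∧
    partSum A P = partSum A Q ∧ ∀ R, IsTWPartition m R → partSum A P ≤ partSum A R

/-- `x` lies in the tw-kernel of `A`. -/
def InTWKernel {M N : ℕ} (m : Fin M → ℕ) (A : Fin M → Fin N → ℝ) (x : Fin N → ℝ) : Prop :=
  ∀ i, m i + 1 ≤ {j : Fin N | ∀ k, x j + A i j ≤ x k + A i k}.ncard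

/-- The tw-matrix obtained by deleting column `j`. -/
def minorMatrix {M K : ℕ} (A : Fin M → Fin (K + 1) → ℝ) (j : Fin (K + 1)) :
    Fin M → Fin K → ℝ :=
  fun i k => A i (j.succAbove k)

/-- The `j`-th maximal tw-minor of an `(N-1) × N` tw-matrix. -/
noncomputable def maxMinor {M K : ℕ} (m : Fin M → ℕ) (A : Fin M → Fin (K + 1) → ℝ)
    (j : Fin (K + 1)) : ℝ :=
  twPerm m (minorMatrix A j)

namespace TWC

variable {M N : ℕ}

/-- An ordered partition of a finset `U` of columns into blocks of sizes `m i`. -/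
def PartOn (m : Fin M → ℕ) (U : Finset (Fin N)) (P : Fin M → Finset (Fin N)) : Prop :=
  (∀ i, (P i).card = m i) ∧ (∀ i, P i ⊆ U) ∧ ∀ j ∈ U, ∃! i, j ∈ P i

theorem PartOn.biUnion_eq {m : Fin M → ℕ} {U : Finset (Fin N)} {P : Fin M → Finset (Fin N)}
    (h : PartOn m U P) : Finset.univ.biUnion P = U := by
  ext k
  simp only [Finset.mem_biUnion, Finset.mem_univ, true_and]
  constructor
  · rintro ⟨i, hi⟩; exact h.2.1 i hi
  · intro hk; exact ⟨(h.2.2 k hk).exists.choose, (h.2.2 k hk).exists.choose_spec⟩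

theorem PartOn.disj {m : Fin M → ℕ} {U : Finset (Fin N)} {P : Fin M → Finset (Fin N)}
    (h : PartOn m U P) {i i' : Fin M} {k : Fin N} (hk : k ∈ P i) (hk' : k ∈ P i') : i = i' := by
  have hU : k ∈ U := h.2.1 i hk
  obtain ⟨w, _, hw⟩ := h.2.2 k hU
  rw [hw i hk, hw i' hk']

theorem PartOn.sum_eq {m : Fin M → ℕ} {U : Finset (Fin N)} {P : Fin M → Finset (Fin N)}
    (h : PartOn m U P) {β : Type*} [AddCommMonoid β] (g : Fin N → β) :
    ∑ i, ∑ k ∈ P i, g k = ∑ k ∈ U, g k := by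
  rw [← h.biUnion_eq, Finset.sum_biUnion]
  intro i _ i' _ hne
  simp only [Finset.disjoint_left]
  intro k hk hk'
  exact hne (h.disj hk hk')

theorem PartOn.card_eq {m : Fin M → ℕ} {U : Finset (Fin N)} {P : Fin M → Finset (Fin N)}
    (h : PartOn m U P) : U.card = ∑ i, m i := by
  have := h.sum_eq (fun _ => (1 : ℕ))
  simp only [Finset.sum_const, smul_eq_mul, mul_one] at this
  rw [← this]
  exact Finset.sum_congr rfl fun i _ => h.1 i

theorem partOn_exists : ∀ {M : ℕ} (m : Fin M → ℕ) (U : Finset (Fin N)),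
    (∑ i, m i = U.card) → ∃ P, PartOn m U P := by
  intro M
  induction M with
  | zero =>
    intro m U hU
    refine ⟨fun i => ∅, fun i => i.elim0, fun i => i.elim0, ?_⟩
    intro j hj
    simp only [Finset.univ_eq_empty, Finset.sum_empty] at hU
    have : U = ∅ := by
      apply Finset.card_eq_zero.mp hU.symm
    rw [this] at hj
    simp at hj
  | succ M ih =>
    intro m U hU
    rw [Fin.sum_univ_succ] at hU
    obtain ⟨T, hTU, hTcard⟩ := U.exists_subset_card_eq (le_trans (Nat.le_add_right _ _) hU.le)
    obtain ⟨P', hP'⟩ := ih (fun i => m i.succ) (U \ T) (by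
      show ∑ i : Fin M, m i.succ = (U \ T).card
      rw [Finset.card_sdiff_of_subset hTU, hTcard, ← hU]
      omega)
    refine ⟨Fin.cases T P', ?_, ?_, ?_⟩
    · intro i
      induction i using Fin.cases with
      | zero => simpa using hTcard
      | succ i => simpa using hP'.1 i
    · intro i
      induction i using Fin.cases with
      | zero => simpa using hTU
      | succ i => simpa using (hP'.2.1 i).trans (Finset.sdiff_subset)
    · intro j hj
      by_cases hjT : j ∈ T
      · refine ⟨0, by simpa using hjT, ?_⟩
        intro i hi
        induction i using Fin.cases with
        | zero => rfl
        | succ i =>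
          exfalso
          have : j ∈ U \ T := hP'.2.1 i (by simpa using hi)
          exact (Finset.mem_sdiff.mp this).2 hjT
      · have hjUT : j ∈ U \ T := Finset.mem_sdiff.mpr ⟨hj, hjT⟩
        obtain ⟨i, hi, hiu⟩ := hP'.2.2 j hjUT
        refine ⟨i.succ, by simpa using hi, ?_⟩
        intro i' hi'
        induction i' using Fin.cases with
        | zero => exact absurd (by simpa using hi') hjT
        | succ i' => simp only at hi'; rw [hiu i' (by simpa using hi')]

end TWC


section Bmin

open TWC

variable {M N : ℕ}

/-- minimal partSum over partitions of `U`. -/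
noncomputable def TWC.mval (m : Fin M → ℕ) (A : Fin M → Fin N → ℝ) (U : Finset (Fin N)) : ℝ :=
  sInf (partSum A '' {P | PartOn m U P})

theorem TWC.mval_le {m : Fin M → ℕ} {A : Fin M → Fin N → ℝ} {U : Finset (Fin N)}
    {P : Fin M → Finset (Fin N)} (h : PartOn m U P) :
    TWC.mval m A U ≤ partSum A P := by
  apply csInf_le ((Set.toFinite _).bddBelow)
  exact ⟨P, h, rfl⟩

theorem TWC.exists_mval {m : Fin M → ℕ} (A : Fin M → Fin N → ℝ) {U : Finset (Fin N)}
    (h : ∑ i, m i = U.card) :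
    ∃ P, PartOn m U P ∧ partSum A P = TWC.mval m A U := by
  obtain ⟨P₀, hP₀⟩ := partOn_exists _ _ h
  have hne : (partSum A '' {P | PartOn m U P}).Nonempty := ⟨_, P₀, hP₀, rfl⟩
  obtain ⟨P, hP, hPe⟩ := hne.csInf_mem (Set.toFinite _)
  exact ⟨P, hP, hPe⟩

/-- replace one column of one block by a fresh column. -/
theorem TWC.surgery {m : Fin M → ℕ} {A : Fin M → Fin N → ℝ} {U : Finset (Fin N)}
    {P : Fin M → Finset (Fin N)} (h : PartOn m U P) {i₀ : Fin M} {k : Fin N} (hk : k ∈ P i₀)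
    {j : Fin N} (hj : j ∉ U) :
    PartOn m (insert j (U.erase k)) (Function.update P i₀ (insert j ((P i₀).erase k))) ∧
      partSum A (Function.update P i₀ (insert j ((P i₀).erase k)))
        = partSum A P + A i₀ j - A i₀ k := by
  have hjk : j ≠ k := fun hh => hj (hh ▸ h.2.1 i₀ hk)
  have hjPi : j ∉ (P i₀).erase k := fun hh => hj (h.2.1 i₀ (Finset.mem_of_mem_erase hh))
  constructor
  · refine ⟨?_, ?_, ?_⟩
    · intro i
      rcases eq_or_ne i i₀ with rfl | hne
      · rw [Function.update_self, Finset.card_insert_of_notMem hjPi,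
          Finset.card_erase_of_mem hk]
        have : 1 ≤ (P i).card := Finset.card_pos.mpr ⟨k, hk⟩
        rw [h.1 i] at this ⊢
        omega
      · rw [Function.update_of_ne hne]; exact h.1 i
    · intro i
      rcases eq_or_ne i i₀ with rfl | hne
      · rw [Function.update_self]
        intro a ha
        rcases Finset.mem_insert.mp ha with rfl | ha
        · exact Finset.mem_insert_self _ _
        · exact Finset.mem_insert_of_mem (Finset.mem_erase.mpr
            ⟨(Finset.mem_erase.mp ha).1, h.2.1 i (Finset.mem_of_mem_erase ha)⟩)
      · rw [Function.update_of_ne hne]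
        intro a ha
        have haU : a ∈ U := h.2.1 i ha
        have hak : a ≠ k := by
          rintro rfl
          exact hne (h.disj ha hk)
        exact Finset.mem_insert_of_mem (Finset.mem_erase.mpr ⟨hak, haU⟩)
    · intro a ha
      rcases Finset.mem_insert.mp ha with ha | ha
      · subst ha
        refine ⟨i₀, ?_, ?_⟩
        · show a ∈ Function.update P i₀ (insert a ((P i₀).erase k)) i₀
          rw [Function.update_self]
          exact Finset.mem_insert_self _ _
        · intro i hi
          by_contra hne
          rw [Function.update_of_ne hne] at hi
          exact hj (h.2.1 i hi)
      · obtain ⟨hak, haU⟩ := Finset.mem_erase.mp ha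
        obtain ⟨i, hi, hiu⟩ := h.2.2 a haU
        refine ⟨i, ?_, ?_⟩
        · show a ∈ Function.update P i₀ (insert j ((P i₀).erase k)) i
          rcases eq_or_ne i i₀ with h' | hne
          · subst h'
            rw [Function.update_self]
            exact Finset.mem_insert_of_mem (Finset.mem_erase.mpr ⟨hak, hi⟩)
          · rw [Function.update_of_ne hne]; exact hi
        intro i' hi'
        have hi'' : a ∈ Function.update P i₀ (insert j ((P i₀).erase k)) i' := hi'
        rcases eq_or_ne i' i₀ with rfl | hne
        · rw [Function.update_self] at hi''
          rcases Finset.mem_insert.mp hi'' with haj | hi''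
          · exact absurd (haj ▸ haU) hj
          · exact hiu i' (Finset.mem_of_mem_erase hi'')
        · rw [Function.update_of_ne hne] at hi''
          exact hiu i' hi''
  · have hsplit : ∀ Q : Fin M → Finset (Fin N),
        partSum A Q = (∑ i ∈ Finset.univ.erase i₀, ∑ a ∈ Q i, A i a) + ∑ a ∈ Q i₀, A i₀ a := by
      intro Q
      rw [Finset.sum_erase_add _ _ (Finset.mem_univ i₀)]
      rfl
    rw [hsplit, hsplit]
    have h1 : ∑ i ∈ Finset.univ.erase i₀,
        ∑ a ∈ Function.update P i₀ (insert j ((P i₀).erase k)) i, A i a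
        = ∑ i ∈ Finset.univ.erase i₀, ∑ a ∈ P i, A i a := by
      apply Finset.sum_congr rfl
      intro i hi
      rw [Function.update_of_ne (Finset.mem_erase.mp hi).1]
    have h2 : ∑ a ∈ Function.update P i₀ (insert j ((P i₀).erase k)) i₀, A i₀ a
        = (∑ a ∈ P i₀, A i₀ a) + A i₀ j - A i₀ k := by
      rw [Function.update_self, Finset.sum_insert hjPi, Finset.sum_erase_eq_sub hk]
      ring
    rw [h1, h2]
    ring

end Bmin


namespace TWC

variable {M K : ℕ}

def toMinor (j : Fin (K + 1)) (P : Fin M → Finset (Fin K)) : Fin M → Finset (Fin (K + 1)) :=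
  fun i => (P i).map (Fin.succAboveEmb j)

theorem mem_toMinor {j : Fin (K + 1)} {P : Fin M → Finset (Fin K)} {i : Fin M}
    {k : Fin (K + 1)} : k ∈ toMinor j P i ↔ ∃ l ∈ P i, j.succAbove l = k := by
  simp [toMinor]

theorem toMinor_partOn {m : Fin M → ℕ} {j : Fin (K + 1)} {P : Fin M → Finset (Fin K)}
    (h : IsTWPartition m P) : PartOn m (Finset.univ.erase j) (toMinor j P) := by
  refine ⟨?_, ?_, ?_⟩
  · intro i; simp [toMinor, h.1 i]
  · intro i k hk
    obtain ⟨l, _, rfl⟩ := mem_toMinor.mp hk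
    exact Finset.mem_erase.mpr ⟨Fin.succAbove_ne j l, Finset.mem_univ _⟩
  · intro k hk
    obtain ⟨l, rfl⟩ := Fin.exists_succAbove_eq (Finset.mem_erase.mp hk).1
    obtain ⟨i, hi, hiu⟩ := h.2 l
    refine ⟨i, mem_toMinor.mpr ⟨l, hi, rfl⟩, ?_⟩
    intro i' hi'
    obtain ⟨l', hl', hll⟩ := mem_toMinor.mp hi'
    have : l' = l := Fin.succAbove_right_injective hll
    exact hiu i' (this ▸ hl')

theorem partSum_toMinor (A : Fin M → Fin (K + 1) → ℝ) (j : Fin (K + 1))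
    (P : Fin M → Finset (Fin K)) :
    partSum A (toMinor j P) = partSum (minorMatrix A j) P := by
  unfold partSum toMinor
  refine Finset.sum_congr rfl fun i _ => ?_
  rw [Finset.sum_map]
  rfl

theorem toMinor_inj {j : Fin (K + 1)} : Function.Injective (toMinor (M := M) j) := by
  intro P Q h
  funext i
  have := congrFun h i
  exact Finset.map_injective _ this

theorem ofMinor {m : Fin M → ℕ} {j : Fin (K + 1)} {Q : Fin M → Finset (Fin (K + 1))}
    (h : PartOn m (Finset.univ.erase j) Q) :
    ∃ P, IsTWPartition m P ∧ toMinor j P = Q := by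
  classical
  refine ⟨fun i => Finset.univ.filter (fun l => j.succAbove l ∈ Q i), ?_, ?_⟩
  · constructor
    · intro i
      rw [← h.1 i]
      apply Finset.card_bij (fun l _ => j.succAbove l)
      · intro l hl; simpa using (Finset.mem_filter.mp hl).2
      · intro l _ l' _ hll; exact Fin.succAbove_right_injective hll
      · intro k hk
        have hkj : k ≠ j := (Finset.mem_erase.mp (h.2.1 i hk)).1
        obtain ⟨l, rfl⟩ := Fin.exists_succAbove_eq hkj
        exact ⟨l, by simpa using hk, rfl⟩
    · intro l
      obtain ⟨i, hi, hiu⟩ := h.2.2 (j.succAbove l)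
        (Finset.mem_erase.mpr ⟨Fin.succAbove_ne j l, Finset.mem_univ _⟩)
      refine ⟨i, by simpa using hi, ?_⟩
      intro i' hi'
      exact hiu i' (by simpa using hi')
  · funext i
    ext k
    rw [mem_toMinor]
    constructor
    · rintro ⟨l, hl, rfl⟩
      simpa using (Finset.mem_filter.mp hl).2
    · intro hk
      have hkj : k ≠ j := (Finset.mem_erase.mp (h.2.1 i hk)).1
      obtain ⟨l, rfl⟩ := Fin.exists_succAbove_eq hkj
      exact ⟨l, by simpa using hk, rfl⟩

theorem minor_image_eq (m : Fin M → ℕ) (A : Fin M → Fin (K + 1) → ℝ) (j : Fin (K + 1)) :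
    partSum (minorMatrix A j) '' {P | IsTWPartition m P}
      = partSum A '' {Q | PartOn m (Finset.univ.erase j) Q} := by
  ext r
  constructor
  · rintro ⟨P, hP, rfl⟩
    exact ⟨toMinor j P, toMinor_partOn hP, partSum_toMinor A j P⟩
  · rintro ⟨Q, hQ, rfl⟩
    obtain ⟨P, hP, rfl⟩ := ofMinor hQ
    exact ⟨P, hP, (partSum_toMinor A j P).symm⟩

theorem maxMinor_eq (m : Fin M → ℕ) (A : Fin M → Fin (K + 1) → ℝ) (j : Fin (K + 1)) :
    maxMinor m A j = TWC.mval m A (Finset.univ.erase j) := by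
  unfold maxMinor twPerm TWC.mval
  rw [minor_image_eq]

theorem twSingular_minor_iff (m : Fin M → ℕ) (A : Fin M → Fin (K + 1) → ℝ) (j : Fin (K + 1)) :
    TWSingular m (minorMatrix A j) ↔
      ∃ P Q : Fin M → Finset (Fin (K + 1)), PartOn m (Finset.univ.erase j) P ∧
        PartOn m (Finset.univ.erase j) Q ∧ P ≠ Q ∧ partSum A P = partSum A Q ∧
        ∀ R, PartOn m (Finset.univ.erase j) R → partSum A P ≤ partSum A R := by
  constructor
  · rintro ⟨P, Q, hP, hQ, hne, heq, hopt⟩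
    refine ⟨toMinor j P, toMinor j Q, toMinor_partOn hP, toMinor_partOn hQ,
      fun hh => hne (toMinor_inj hh), by rw [partSum_toMinor, partSum_toMinor, heq], ?_⟩
    intro R hR
    obtain ⟨R', hR', rfl⟩ := ofMinor hR
    rw [partSum_toMinor, partSum_toMinor]
    exact hopt R' hR'
  · rintro ⟨P, Q, hP, hQ, hne, heq, hopt⟩
    obtain ⟨P', hP', rfl⟩ := ofMinor hP
    obtain ⟨Q', hQ', rfl⟩ := ofMinor hQ
    refine ⟨P', Q', hP', hQ', fun hh => hne (by rw [hh]), ?_, ?_⟩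
    · rw [← partSum_toMinor A j, ← partSum_toMinor A j, heq]
    · intro R hR
      rw [← partSum_toMinor A j]
      have := hopt (toMinor j R) (toMinor_partOn hR)
      rwa [partSum_toMinor A j R] at this

end TWC


namespace TWC

variable {M K : ℕ}

theorem erase_card_eq {m : Fin M → ℕ} (hw : ∑ i, m i = K) (j : Fin (K + 1)) :
    ∑ i, m i = (Finset.univ.erase j).card := by
  rw [Finset.card_erase_of_mem (Finset.mem_univ j)]
  simp [hw]

theorem insert_erase_swap {j k : Fin (K + 1)} (hjk : k ≠ j) :
    insert j ((Finset.univ.erase j).erase k) = Finset.univ.erase k := by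
  ext a
  simp only [Finset.mem_insert, Finset.mem_erase, Finset.mem_univ, and_true]
  constructor
  · rintro (rfl | ⟨hak, _⟩)
    · exact hjk.symm
    · exact hak
  · intro hak
    rcases eq_or_ne a j with rfl | haj
    · exact Or.inl rfl
    · exact Or.inr ⟨hak, haj⟩

theorem part1 (m : Fin M → ℕ) (A : Fin M → Fin (K + 1) → ℝ) (hw : ∑ i, m i = K) :
    InTWKernel m A (fun j => maxMinor m A j) := by
  classical
  intro i
  set y : Fin (K + 1) → ℝ := fun j => maxMinor m A j with hy
  set g : Fin (K + 1) → ℝ := fun k => y k + A i k with hg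
  obtain ⟨js, _, hjs⟩ := Finset.exists_min_image Finset.univ g ⟨0, Finset.mem_univ 0⟩
  obtain ⟨P, hP, hPe⟩ := TWC.exists_mval A (erase_card_eq hw js)
  have hjP : js ∉ P i := fun hh => (Finset.mem_erase.mp (hP.2.1 i hh)).1 rfl
  set F : Finset (Fin (K + 1)) := insert js (P i) with hF
  have hFcard : F.card = m i + 1 := by
    rw [hF, Finset.card_insert_of_notMem hjP, hP.1 i]
  have hkey : ∀ k ∈ F, ∀ l, g k ≤ g l := by
    intro k hk l
    have hgood : g k ≤ g js := by
      rcases Finset.mem_insert.mp hk with rfl | hkP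
      · exact le_refl _
      · have hkj : k ≠ js := fun hh => hjP (hh ▸ hkP)
        obtain ⟨hQpart, hQsum⟩ := TWC.surgery (A := A) hP hkP
          (j := js) (by simp)
        rw [insert_erase_swap hkj] at hQpart
        have hyk : y k ≤ partSum A P + A i js - A i k := by
          rw [← hQsum, hy]
          simp only [maxMinor_eq]
          exact TWC.mval_le hQpart
        have : y k + A i k ≤ y js + A i js := by
          rw [hPe] at hyk
          have : y js = TWC.mval m A (Finset.univ.erase js) := by
            rw [hy]; simp only [maxMinor_eq]
          rw [this]
          linarith
        exact this
    exact le_trans hgood (hjs l (Finset.mem_univ l))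
  have hsub : (↑F : Set (Fin (K + 1))) ⊆ {j | ∀ k, y j + A i j ≤ y k + A i k} := by
    intro k hk
    exact hkey k hk
  calc m i + 1 = F.card := hFcard.symm
    _ = (↑F : Set (Fin (K + 1))).ncard := (Set.ncard_coe_finset F).symm
    _ ≤ _ := Set.ncard_le_ncard hsub (Set.toFinite _)

end TWC


namespace TWC

variable {M K : ℕ}

/-- argmin columns of row `i` relative to potential `x`. -/
noncomputable def Zset (A : Fin M → Fin (K + 1) → ℝ) (x : Fin (K + 1) → ℝ) (i : Fin M) :
    Finset (Fin (K + 1)) :=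
  Finset.univ.filter (fun k => ∀ l, x k + A i k ≤ x l + A i l)

/-- row minimum relative to potential `x`. -/
noncomputable def Vval (A : Fin M → Fin (K + 1) → ℝ) (x : Fin (K + 1) → ℝ) (i : Fin M) : ℝ :=
  Finset.inf' Finset.univ ⟨0, Finset.mem_univ 0⟩ (fun k => x k + A i k)

theorem Vval_le (A : Fin M → Fin (K + 1) → ℝ) (x : Fin (K + 1) → ℝ) (i : Fin M)
    (k : Fin (K + 1)) : Vval A x i ≤ x k + A i k :=
  Finset.inf'_le _ (Finset.mem_univ k)

theorem mem_Zset_iff {A : Fin M → Fin (K + 1) → ℝ} {x : Fin (K + 1) → ℝ} {i : Fin M}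
    {k : Fin (K + 1)} : k ∈ Zset A x i ↔ x k + A i k = Vval A x i := by
  simp only [Zset, Finset.mem_filter, Finset.mem_univ, true_and]
  constructor
  · intro h
    obtain ⟨l, _, hl⟩ := Finset.exists_mem_eq_inf' ⟨0, Finset.mem_univ 0⟩
      (fun k => x k + A i k)
    refine le_antisymm ?_ (Vval_le A x i k)
    calc x k + A i k ≤ x l + A i l := h l
      _ = Vval A x i := hl.symm
  · intro h l
    rw [h]
    exact Vval_le A x i l

/-- normalized matrix. -/
noncomputable def Bmat (A : Fin M → Fin (K + 1) → ℝ) (x : Fin (K + 1) → ℝ)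
    (i : Fin M) (k : Fin (K + 1)) : ℝ :=
  x k + A i k - Vval A x i

theorem Bmat_nonneg (A : Fin M → Fin (K + 1) → ℝ) (x : Fin (K + 1) → ℝ) (i : Fin M)
    (k : Fin (K + 1)) : 0 ≤ Bmat A x i k :=
  sub_nonneg.mpr (Vval_le A x i k)

theorem Bmat_eq_zero_iff {A : Fin M → Fin (K + 1) → ℝ} {x : Fin (K + 1) → ℝ} {i : Fin M}
    {k : Fin (K + 1)} : Bmat A x i k = 0 ↔ k ∈ Zset A x i := by
  rw [mem_Zset_iff, Bmat, sub_eq_zero]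

theorem Zset_card (m : Fin M → ℕ) {A : Fin M → Fin (K + 1) → ℝ} {x : Fin (K + 1) → ℝ}
    (hx : InTWKernel m A x) (i : Fin M) : m i + 1 ≤ (Zset A x i).card := by
  have := hx i
  have hset : {j : Fin (K + 1) | ∀ k, x j + A i j ≤ x k + A i k} = ↑(Zset A x i) := by
    ext j; simp [Zset]
  rw [hset, Set.ncard_coe_finset] at this
  exact this

/-- total normalized weight of a partition. -/
noncomputable def wB (A : Fin M → Fin (K + 1) → ℝ) (x : Fin (K + 1) → ℝ)
    (Q : Fin M → Finset (Fin (K + 1))) : ℝ :=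
  ∑ i, ∑ k ∈ Q i, Bmat A x i k

theorem wB_nonneg (A : Fin M → Fin (K + 1) → ℝ) (x : Fin (K + 1) → ℝ)
    (Q : Fin M → Finset (Fin (K + 1))) : 0 ≤ wB A x Q :=
  Finset.sum_nonneg fun i _ => Finset.sum_nonneg fun k _ => Bmat_nonneg A x i k

theorem wB_eq {m : Fin M → ℕ} {A : Fin M → Fin (K + 1) → ℝ} (x : Fin (K + 1) → ℝ)
    {U : Finset (Fin (K + 1))} {Q : Fin M → Finset (Fin (K + 1))} (h : PartOn m U Q) :
    wB A x Q = partSum A Q + (∑ k ∈ U, x k) - ∑ i, (m i : ℝ) * Vval A x i := by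
  unfold wB partSum Bmat
  rw [← h.sum_eq (g := x)]
  have : ∀ i : Fin M, ∑ k ∈ Q i, (x k + A i k - Vval A x i)
      = (∑ k ∈ Q i, x k) + (∑ k ∈ Q i, A i k) - (m i : ℝ) * Vval A x i := by
    intro i
    rw [Finset.sum_sub_distrib, Finset.sum_add_distrib, Finset.sum_const, h.1 i,
      nsmul_eq_mul]
  rw [Finset.sum_congr rfl fun i _ => this i]
  rw [Finset.sum_sub_distrib, Finset.sum_add_distrib]
  ring

/-- difference of weights of two partitions of the same support, in normalized terms. -/
theorem partSum_eq_of_wB_eq {m : Fin M → ℕ} {A : Fin M → Fin (K + 1) → ℝ}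
    (x : Fin (K + 1) → ℝ) {U : Finset (Fin (K + 1))} {Q Q' : Fin M → Finset (Fin (K + 1))}
    (h : PartOn m U Q) (h' : PartOn m U Q') (heq : wB A x Q = wB A x Q') :
    partSum A Q = partSum A Q' := by
  have e1 := wB_eq (A := A) x h
  have e2 := wB_eq (A := A) x h'
  rw [e1, e2] at heq
  linarith

end TWC


namespace TWC

variable {M : ℕ}

theorem orbit_exists (S : Finset (Fin M)) (hS : S.Nonempty) (σ : Fin M → Fin M)
    (hmap : ∀ i ∈ S, σ i ∈ S) (hne : ∀ i ∈ S, σ i ≠ i) :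
    ∃ O : Finset (Fin M), O.Nonempty ∧ O ⊆ S ∧ ∃ pre : Fin M → Fin M,
      ∀ r ∈ O, σ r ∈ O ∧ pre r ∈ O ∧ σ (pre r) = r ∧ pre (σ r) = r ∧ pre r ≠ r := by
  classical
  obtain ⟨i₀, hi₀⟩ := hS
  have hit : ∀ n, σ^[n] i₀ ∈ S := by
    intro n
    induction n with
    | zero => simpa using hi₀
    | succ n ih => rw [Function.iterate_succ_apply']; exact hmap _ ih
  have hcard : (Finset.univ : Finset (Fin M)).card < (Finset.range (M + 1)).card := by
    simp
  obtain ⟨a, ha, b, hb, hab, heq⟩ := Finset.exists_ne_map_eq_of_card_lt_of_maps_to hcard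
    (fun n _ => Finset.mem_univ (σ^[n] i₀))
  wlog hlt : a < b generalizing a b
  · exact this b hb a ha hab.symm heq.symm (by omega)
  set e := b - a with he
  have he1 : 1 ≤ e := by omega
  set i₁ := σ^[a] i₀ with hi₁
  have hper : σ^[e] i₁ = i₁ := by
    rw [hi₁, ← Function.iterate_add_apply, he]
    have : b - a + a = b := by omega
    rw [this, ← heq]
  have hitS : ∀ n, σ^[n] i₁ ∈ S := fun n => by
    rw [hi₁, ← Function.iterate_add_apply]; exact hit _
  set O := (Finset.range e).image (fun l => σ^[l] i₁) with hO
  have hmem : ∀ l, σ^[l] i₁ ∈ O := by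
    intro l
    induction l using Nat.strong_induction_on with
    | _ l ih =>
      by_cases hl : l < e
      · exact Finset.mem_image.mpr ⟨l, Finset.mem_range.mpr hl, rfl⟩
      · have h3 : σ^[l] i₁ = σ^[l - e] i₁ := by
          conv_lhs => rw [show l = (l - e) + e by omega]
          rw [Function.iterate_add_apply, hper]
        rw [h3]
        exact ih (l - e) (by omega)
  refine ⟨O, ⟨i₁, by simpa using hmem 0⟩, ?_, σ^[e-1], ?_⟩
  · intro r hr
    obtain ⟨l, _, rfl⟩ := Finset.mem_image.mp hr
    exact hitS l
  · intro r hr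
    obtain ⟨l, _, rfl⟩ := Finset.mem_image.mp hr
    have hrS : σ^[l] i₁ ∈ S := hitS l
    have h1 : σ (σ^[l] i₁) = σ^[l+1] i₁ := (Function.iterate_succ_apply' σ l i₁).symm
    have h2 : σ^[e-1] (σ^[l] i₁) = σ^[e-1+l] i₁ := (Function.iterate_add_apply σ (e-1) l i₁).symm
    have hσO : σ (σ^[l] i₁) ∈ O := h1 ▸ hmem (l+1)
    have hpreO : σ^[e-1] (σ^[l] i₁) ∈ O := h2 ▸ hmem (e-1+l)
    have hσpre : σ (σ^[e-1] (σ^[l] i₁)) = σ^[l] i₁ := by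
      rw [← Function.iterate_succ_apply' σ (e-1), ← Function.iterate_add_apply]
      have : e - 1 + 1 + l = l + e := by omega
      rw [this, Function.iterate_add_apply, hper]
    have hpreσ : σ^[e-1] (σ (σ^[l] i₁)) = σ^[l] i₁ := by
      rw [← Function.iterate_succ_apply σ (e-1), ← Function.iterate_add_apply]
      have : e - 1 + 1 + l = l + e := by omega
      rw [this, Function.iterate_add_apply, hper]
    refine ⟨hσO, hpreO, hσpre, hpreσ, ?_⟩
    intro hcon
    have : σ (σ^[l] i₁) = σ^[l] i₁ := by
      conv_lhs => rw [← hcon]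
      rw [hσpre]
    exact hne _ hrS this

end TWC


namespace TWC

variable {M K : ℕ}

/-- Shifting a partition along a cycle of rows: each row `r` in `O` takes column `z r`
and gives up column `z (pre r)`. -/
theorem cycle_shift {m : Fin M → ℕ} {U : Finset (Fin (K + 1))}
    {P : Fin M → Finset (Fin (K + 1))} (hP : PartOn m U P)
    {O : Finset (Fin M)} (hOne : O.Nonempty)
    {z : Fin M → Fin (K + 1)} {σ : Fin M → Fin M} {pre : Fin M → Fin M}
    (hzP : ∀ r ∈ O, z r ∉ P r) (hzσ : ∀ r ∈ O, z r ∈ P (σ r))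
    (horb : ∀ r ∈ O, σ r ∈ O ∧ pre r ∈ O ∧ σ (pre r) = r ∧ pre (σ r) = r ∧ pre r ≠ r) :
    ∃ P' : Fin M → Finset (Fin (K + 1)), PartOn m U P' ∧ P' ≠ P ∧
      ∀ c : Fin M → Fin (K + 1) → ℝ,
        ∑ i, ∑ k ∈ P' i, c i k
          = (∑ i, ∑ k ∈ P i, c i k) + ∑ r ∈ O, (c r (z r) - c r (z (pre r))) := by
  classical
  have hzinj : ∀ r ∈ O, ∀ r' ∈ O, z r = z r' → r = r' := by
    intro r hr r' hr' hz
    have h1 : z r ∈ P (σ r) := hzσ r hr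
    have h2 : z r ∈ P (σ r') := hz ▸ hzσ r' hr'
    have hσ : σ r = σ r' := hP.disj h1 h2
    rw [← (horb r hr).2.2.2.1, hσ, (horb r' hr').2.2.2.1]
  have hzpre : ∀ r ∈ O, z (pre r) ∈ P r := by
    intro r hr
    have := hzσ (pre r) (horb r hr).2.1
    rwa [(horb r hr).2.2.1] at this
  have hzne : ∀ r ∈ O, z r ≠ z (pre r) := by
    intro r hr hcon
    exact hzP r hr (hcon ▸ hzpre r hr)
  set P' : Fin M → Finset (Fin (K + 1)) :=
    fun r => if r ∈ O then insert (z r) ((P r).erase (z (pre r))) else P r with hP'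
  have hmemP' : ∀ r ∈ O, ∀ a, a ∈ P' r ↔ (a = z r ∨ (a ∈ P r ∧ a ≠ z (pre r))) := by
    intro r hr a
    rw [hP']
    simp only [if_pos hr, Finset.mem_insert, Finset.mem_erase]
    tauto
  have hmemP'' : ∀ r ∉ O, P' r = P r := by
    intro r hr; rw [hP']; simp only [if_neg hr]
  refine ⟨P', ⟨?_, ?_, ?_⟩, ?_, ?_⟩
  · intro r
    by_cases hr : r ∈ O
    · rw [hP']
      simp only [if_pos hr]
      rw [Finset.card_insert_of_notMem
        (fun hh => hzP r hr (Finset.mem_of_mem_erase hh)),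
        Finset.card_erase_of_mem (hzpre r hr), hP.1 r]
      have : 1 ≤ (P r).card := Finset.card_pos.mpr ⟨z (pre r), hzpre r hr⟩
      rw [hP.1 r] at this
      omega
    · rw [hmemP'' r hr]; exact hP.1 r
  · intro r
    by_cases hr : r ∈ O
    · intro a ha
      rcases (hmemP' r hr a).mp ha with rfl | ⟨haP, _⟩
      · exact hP.2.1 (σ r) (hzσ r hr)
      · exact hP.2.1 r haP
    · rw [hmemP'' r hr]; exact hP.2.1 r
  · intro a haU
    obtain ⟨i₀, hi₀, hu₀⟩ := hP.2.2 a haU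
    by_cases haz : ∃ r ∈ O, z r = a
    · obtain ⟨r, hr, rfl⟩ := haz
      refine ⟨r, (hmemP' r hr _).mpr (Or.inl rfl), ?_⟩
      intro i hi
      have hi' : z r ∈ P' i := hi
      by_cases hiO : i ∈ O
      · rcases (hmemP' i hiO _).mp hi' with hz | ⟨hzPi, hzne'⟩
        · exact (hzinj r hr i hiO hz).symm
        · have h4 : i = σ r := hP.disj hzPi (hzσ r hr)
          subst h4
          refine absurd ?_ hzne'
          rw [(horb r hr).2.2.2.1]
      · rw [hmemP'' i hiO] at hi'
        have h4 : i = σ r := hP.disj hi' (hzσ r hr)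
        exact absurd (h4 ▸ (horb r hr).1) hiO
    · push_neg at haz
      refine ⟨i₀, ?_, ?_⟩
      · show a ∈ P' i₀
        by_cases hiO : i₀ ∈ O
        · exact (hmemP' i₀ hiO a).mpr (Or.inr ⟨hi₀,
            fun hh => haz (pre i₀) (horb i₀ hiO).2.1 hh.symm⟩)
        · rw [hmemP'' i₀ hiO]; exact hi₀
      · intro i hi
        have hi' : a ∈ P' i := hi
        by_cases hiO : i ∈ O
        · rcases (hmemP' i hiO a).mp hi' with hz | ⟨hPi, _⟩
          · exact absurd (haz i hiO) (by rw [hz]; simp)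
          · exact hu₀ i hPi
        · rw [hmemP'' i hiO] at hi'
          exact hu₀ i hi'
  · obtain ⟨r₀, hr₀⟩ := hOne
    intro hcon
    have h1 : z r₀ ∈ P' r₀ := (hmemP' r₀ hr₀ _).mpr (Or.inl rfl)
    rw [hcon] at h1
    exact hzP r₀ hr₀ h1
  · intro c
    have hrow : ∀ r ∈ O, ∑ k ∈ P' r, c r k
        = (∑ k ∈ P r, c r k) + (c r (z r) - c r (z (pre r))) := by
      intro r hr
      rw [hP']
      simp only [if_pos hr]
      rw [Finset.sum_insert (fun hh => hzP r hr (Finset.mem_of_mem_erase hh)),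
        Finset.sum_erase_eq_sub (hzpre r hr)]
      ring
    have hrow' : ∀ r, r ∉ O → ∑ k ∈ P' r, c r k = ∑ k ∈ P r, c r k := by
      intro r hr; rw [hmemP'' r hr]
    have : ∀ r, ∑ k ∈ P' r, c r k
        = ∑ k ∈ P r, c r k + (if r ∈ O then c r (z r) - c r (z (pre r)) else 0) := by
      intro r
      by_cases hr : r ∈ O
      · rw [if_pos hr, hrow r hr]
      · rw [if_neg hr, hrow' r hr]; ring
    rw [Finset.sum_congr rfl fun r _ => this r, Finset.sum_add_distrib]
    congr 1
    rw [Finset.sum_ite_mem, Finset.univ_inter]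

end TWC


namespace TWC

variable {M K : ℕ}

theorem left_dir (m : Fin M → ℕ) (A : Fin M → Fin (K + 1) → ℝ) (hw : ∑ i, m i = K)
    (hns : ∀ j, ¬ TWSingular m (minorMatrix A j)) (x : Fin (K + 1) → ℝ)
    (hx : InTWKernel m A x) : ∃ c, x = fun j => maxMinor m A j + c := by
  classical
  set Z := Zset A x with hZ
  have hZc : ∀ i, m i + 1 ≤ (Z i).card := Zset_card m hx
  set w : Fin (K + 1) → ℝ :=
    fun j => TWC.mval m A (Finset.univ.erase j) + ∑ k ∈ Finset.univ.erase j, x k with hwdef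
  obtain ⟨j₁, _, hj₁⟩ := Finset.exists_min_image Finset.univ w ⟨0, Finset.mem_univ 0⟩
  have key : ∀ j₂, w j₂ ≤ w j₁ := by
    intro j₂
    obtain ⟨P, hP, hPe⟩ := TWC.exists_mval A (erase_card_eq hw j₁)
    set C : Fin M → Finset (Fin (K + 1)) := fun i => (P i ∪ Z i).erase j₂ with hC
    by_cases hhall : ∀ s : Finset ((i : Fin M) × Fin (m i)),
        s.card ≤ (s.biUnion fun p => C p.1).card
    · obtain ⟨f, hfinj, hfmem⟩ :=
        (Finset.all_card_le_biUnion_card_iff_exists_injective (fun p : (i : Fin M) × Fin (m i) => C p.1)).mp hhall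
      set Q : Fin M → Finset (Fin (K + 1)) :=
        fun i => (Finset.univ : Finset (Fin (m i))).image (fun c => f ⟨i, c⟩) with hQ
      have hQmem : ∀ i k, k ∈ Q i ↔ ∃ c : Fin (m i), f ⟨i, c⟩ = k := by
        intro i k; simp [hQ]
      have hQcard : ∀ i, (Q i).card = m i := by
        intro i
        rw [hQ]
        rw [Finset.card_image_of_injective _ (fun c c' h => sigma_mk_injective (hfinj h))]
        simp
      have hQsub : ∀ i, Q i ⊆ Finset.univ.erase j₂ := by
        intro i k hk
        obtain ⟨c, rfl⟩ := (hQmem i k).mp hk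
        have := hfmem ⟨i, c⟩
        rw [hC] at this
        exact Finset.mem_erase.mpr ⟨(Finset.mem_erase.mp this).1, Finset.mem_univ _⟩
      have hdisj : ∀ i ∈ Finset.univ, ∀ i' ∈ Finset.univ, i ≠ i' →
          Disjoint (Q i) (Q (i' : Fin M)) := by
        intro i _ i' _ hne
        rw [Finset.disjoint_left]
        intro k hk hk'
        obtain ⟨c, hc⟩ := (hQmem i k).mp hk
        obtain ⟨c', hc'⟩ := (hQmem i' k).mp hk'
        have := hfinj (hc.trans hc'.symm)
        exact hne (congrArg Sigma.fst this)
      have hcover : Finset.univ.biUnion Q = Finset.univ.erase j₂ := by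
        apply Finset.eq_of_subset_of_card_le
        · intro k hk
          obtain ⟨i, _, hki⟩ := Finset.mem_biUnion.mp hk
          exact hQsub i hki
        · rw [Finset.card_biUnion hdisj]
          rw [Finset.card_erase_of_mem (Finset.mem_univ _)]
          simp only [hQcard, Finset.card_univ, Fintype.card_fin]
          rw [hw]
          omega
      have hQpart : PartOn m (Finset.univ.erase j₂) Q := by
        refine ⟨hQcard, hQsub, ?_⟩
        intro k hk
        rw [← hcover] at hk
        obtain ⟨i, _, hki⟩ := Finset.mem_biUnion.mp hk
        refine ⟨i, hki, ?_⟩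
        intro i' hki'
        by_contra hne
        exact (Finset.disjoint_left.mp (hdisj i' (Finset.mem_univ _) i (Finset.mem_univ _) hne))
          hki' hki
      have hQw : wB A x Q ≤ wB A x P := by
        unfold wB
        apply Finset.sum_le_sum
        intro i _
        have hzero : ∑ k ∈ Q i \ Z i, Bmat A x i k = ∑ k ∈ Q i, Bmat A x i k := by
          apply Finset.sum_subset (Finset.sdiff_subset)
          intro k hk hk'
          have : k ∈ Z i := by
            by_contra hcon
            exact hk' (Finset.mem_sdiff.mpr ⟨hk, hcon⟩)
          exact Bmat_eq_zero_iff.mpr this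
        rw [← hzero]
        apply Finset.sum_le_sum_of_subset_of_nonneg
        · intro k hk
          obtain ⟨hkQ, hkZ⟩ := Finset.mem_sdiff.mp hk
          obtain ⟨c, rfl⟩ := (hQmem i k).mp hkQ
          have := hfmem ⟨i, c⟩
          rw [hC] at this
          rcases Finset.mem_union.mp (Finset.mem_of_mem_erase this) with h | h
          · exact h
          · exact absurd h hkZ
        · intro k _ _
          exact Bmat_nonneg A x i k
      have e1 := wB_eq (A := A) x hQpart
      have e2 := wB_eq (A := A) x hP
      have h3 : TWC.mval m A (Finset.univ.erase j₂) ≤ partSum A Q := TWC.mval_le hQpart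
      rw [hwdef]
      simp only
      rw [hPe] at e2
      linarith
    · push_neg at hhall
      exfalso
      obtain ⟨s, hs⟩ := hhall
      set S := s.image Sigma.fst with hS
      have hcard1 : s.card ≤ ∑ i ∈ S, m i := by
        calc s.card ≤ (S.sigma fun i => (Finset.univ : Finset (Fin (m i)))).card := by
              apply Finset.card_le_card
              intro p hp
              exact Finset.mem_sigma.mpr ⟨Finset.mem_image_of_mem _ hp, Finset.mem_univ _⟩
          _ = ∑ i ∈ S, m i := by
              rw [Finset.card_sigma]
              simp
      have hbi : s.biUnion (fun p => C p.1) = S.biUnion C := by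
        ext k
        simp only [Finset.mem_biUnion, hS, Finset.mem_image]
        constructor
        · rintro ⟨p, hp, hk⟩; exact ⟨p.1, ⟨p, hp, rfl⟩, hk⟩
        · rintro ⟨i, ⟨p, hp, rfl⟩, hk⟩; exact ⟨p, hp, hk⟩
      have hSC : (S.biUnion C).card < ∑ i ∈ S, m i := by
        rw [← hbi]; exact lt_of_lt_of_le hs hcard1
      have hPdisj : ∀ i ∈ S, ∀ i' ∈ S, i ≠ i' → Disjoint (P i) (P i') := by
        intro i _ i' _ hne
        rw [Finset.disjoint_left]
        intro k hk hk'
        exact hne (hP.disj hk hk')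
      set W := S.biUnion P with hW
      have hWcard : W.card = ∑ i ∈ S, m i := by
        rw [hW, Finset.card_biUnion hPdisj]
        exact Finset.sum_congr rfl fun i _ => hP.1 i
      have hWsub : W.erase j₂ ⊆ S.biUnion C := by
        intro k hk
        obtain ⟨hkj, hkW⟩ := Finset.mem_erase.mp hk
        obtain ⟨i, hiS, hki⟩ := Finset.mem_biUnion.mp hkW
        exact Finset.mem_biUnion.mpr ⟨i, hiS,
          Finset.mem_erase.mpr ⟨hkj, Finset.mem_union_left _ hki⟩⟩
      have hj₂W : j₂ ∈ W := by
        by_contra hcon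
        rw [Finset.erase_eq_of_notMem hcon] at hWsub
        have := Finset.card_le_card hWsub
        omega
      have heq2 : W.erase j₂ = S.biUnion C := by
        apply Finset.eq_of_subset_of_card_le hWsub
        rw [Finset.card_erase_of_mem hj₂W, hWcard]
        omega
      have hZW : ∀ i ∈ S, Z i ⊆ W := by
        intro i hiS k hk
        rcases eq_or_ne k j₂ with rfl | hkj
        · exact hj₂W
        · have : k ∈ C i := Finset.mem_erase.mpr ⟨hkj, Finset.mem_union_right _ hk⟩
          have : k ∈ S.biUnion C := Finset.mem_biUnion.mpr ⟨i, hiS, this⟩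
          rw [← heq2] at this
          exact Finset.mem_of_mem_erase this
      have hex : ∀ i ∈ S, ∃ p : Fin (K + 1) × Fin M,
          p.1 ∈ Z i ∧ p.1 ∉ P i ∧ p.2 ∈ S ∧ p.1 ∈ P p.2 := by
        intro i hiS
        have : ¬ Z i ⊆ P i := by
          intro hcon
          have := Finset.card_le_card hcon
          rw [hP.1 i] at this
          have := hZc i
          omega
        obtain ⟨zz, hzZ, hzP⟩ := Finset.not_subset.mp this
        have hzW : zz ∈ W := hZW i hiS hzZ
        obtain ⟨i', hi'S, hi'P⟩ := Finset.mem_biUnion.mp hzW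
        exact ⟨(zz, i'), hzZ, hzP, hi'S, hi'P⟩
      choose! pfun hp1 hp2 hp3 hp4 using hex
      set z : Fin M → Fin (K + 1) := fun i => (pfun i).1 with hzdef
      set σ : Fin M → Fin M := fun i => (pfun i).2 with hσdef
      have hSne : S.Nonempty := by
        rw [← Finset.card_pos]
        have : 0 < s.card := by omega
        have : s.Nonempty := Finset.card_pos.mp this
        obtain ⟨p, hp⟩ := this
        exact Finset.card_pos.mpr ⟨p.1, Finset.mem_image_of_mem _ hp⟩
      have hσS : ∀ i ∈ S, σ i ∈ S := fun i hi => hp3 i hi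
      have hσne : ∀ i ∈ S, σ i ≠ i := by
        intro i hi hcon
        have h1 : z i ∈ P (σ i) := hp4 i hi
        rw [hcon] at h1
        exact hp2 i hi h1
      obtain ⟨O, hOne, hOS, pre, horb⟩ := orbit_exists S hSne σ hσS hσne
      obtain ⟨P', hP'part, hP'ne, hsum⟩ := cycle_shift hP hOne
        (z := z) (σ := σ) (pre := pre)
        (fun r hr => hp2 r (hOS hr)) (fun r hr => hp4 r (hOS hr))
        (fun r hr => horb r hr)
      have hwBzero : ∀ r ∈ O, Bmat A x r (z r) = 0 :=
        fun r hr => Bmat_eq_zero_iff.mpr (hp1 r (hOS hr))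
      have hsumB := hsum (Bmat A x)
      have hge : partSum A P ≤ partSum A P' := by
        rw [hPe]; exact TWC.mval_le hP'part
      have e1 := wB_eq (A := A) x hP'part
      have e2 := wB_eq (A := A) x hP
      have hdiff : wB A x P' ≤ wB A x P := by
        show (∑ i, ∑ k ∈ P' i, Bmat A x i k) ≤ ∑ i, ∑ k ∈ P i, Bmat A x i k
        rw [hsumB]
        have : ∑ r ∈ O, (Bmat A x r (z r) - Bmat A x r (z (pre r))) ≤ 0 := by
          apply Finset.sum_nonpos
          intro r hr
          rw [hwBzero r hr]
          have := Bmat_nonneg A x r (z (pre r))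
          linarith
        linarith
      have hps : partSum A P' = partSum A P := by
        have : wB A x P' - wB A x P = partSum A P' - partSum A P := by
          rw [e1, e2]; ring
        have h5 : partSum A P' ≤ partSum A P := by linarith [hdiff, this]
        linarith
      apply hns j₁
      rw [twSingular_minor_iff]
      refine ⟨P', P, hP'part, hP, hP'ne, hps, ?_⟩
      intro R hR
      rw [hps, hPe]
      exact TWC.mval_le hR
  have hconst : ∀ j, w j = w j₁ := fun j => le_antisymm (key j) (hj₁ j (Finset.mem_univ j))
  refine ⟨(∑ k, x k) - w j₁, ?_⟩
  funext j
  have h6 := hconst j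
  rw [hwdef] at h6
  simp only at h6
  have h7 : ∑ k ∈ Finset.univ.erase j, x k = (∑ k, x k) - x j := by
    rw [Finset.sum_erase_eq_sub (Finset.mem_univ j)]
  rw [h7] at h6
  have h8 : w j₁ = TWC.mval m A (Finset.univ.erase j₁) + ∑ k ∈ Finset.univ.erase j₁, x k := by
    rw [hwdef]
  rw [maxMinor_eq]
  linarith

end TWC


namespace TWC

variable {M K : ℕ}

/-- remaining budget of row `i` for the fixing process. -/
def cost (Z : Fin M → Finset (Fin (K + 1))) (m : Fin M → ℕ) (C : Finset (Fin (K + 1)))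
    (i : Fin M) : ℕ :=
  (m i + 1) - max 1 ((Z i ∩ C).card)

theorem cost_le (Z : Fin M → Finset (Fin (K + 1))) (m : Fin M → ℕ) (C : Finset (Fin (K + 1)))
    (i : Fin M) : cost Z m C i ≤ m i := by
  unfold cost; omega

theorem fixproc (Z : Fin M → Finset (Fin (K + 1))) (m : Fin M → ℕ)
    (hZc : ∀ i, m i + 1 ≤ (Z i).card) :
    ∀ (n : ℕ) (C : Finset (Fin (K + 1))), (∑ i, cost Z m C i) ≤ n →
    ∃ C', C ⊆ C' ∧ C'.card ≤ C.card + ∑ i, cost Z m C i ∧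
      ∀ i, (Z i ∩ C').card = 0 ∨ m i + 1 ≤ (Z i ∩ C').card := by
  classical
  intro n
  induction n with
  | zero =>
    intro C hC
    refine ⟨C, le_refl _, Nat.le_add_right _ _, ?_⟩
    intro i
    have h1 : cost Z m C i ≤ ∑ i, cost Z m C i :=
      Finset.single_le_sum (f := cost Z m C) (fun _ _ => Nat.zero_le _) (Finset.mem_univ i)
    have h0 : cost Z m C i = 0 := by omega
    unfold cost at h0
    omega
  | succ n ih =>
    intro C hC
    by_cases hviol : ∃ i, 1 ≤ (Z i ∩ C).card ∧ (Z i ∩ C).card ≤ m i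
    · obtain ⟨i₀, hκ1, hκ2⟩ := hviol
      have hcost : cost Z m C i₀ = m i₀ + 1 - (Z i₀ ∩ C).card := by
        unfold cost; omega
      have hsd : m i₀ + 1 - (Z i₀ ∩ C).card ≤ (Z i₀ \ C).card := by
        have h1 : (Z i₀ ∩ C).card + (Z i₀ \ C).card = (Z i₀).card :=
          Finset.card_inter_add_card_sdiff _ _
        have h2 := hZc i₀
        omega
      obtain ⟨D, hDsub, hDcard⟩ := (Z i₀ \ C).exists_subset_card_eq hsd
      set C₁ := C ∪ D with hC₁
      have hDC : Disjoint D C := by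
        rw [Finset.disjoint_left]
        intro a haD haC
        exact (Finset.mem_sdiff.mp (hDsub haD)).2 haC
      have hCsub : C ⊆ C₁ := Finset.subset_union_left
      have hC₁card : C₁.card = C.card + (m i₀ + 1 - (Z i₀ ∩ C).card) := by
        rw [hC₁, Finset.union_comm, Finset.card_union_of_disjoint hDC, hDcard]
        omega
      have hinter : Z i₀ ∩ C₁ = (Z i₀ ∩ C) ∪ D := by
        rw [hC₁, Finset.inter_union_distrib_left]
        congr 1
        exact (Finset.inter_eq_right.mpr (fun a ha => (Finset.mem_sdiff.mp (hDsub ha)).1))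
      have hinter_card : (Z i₀ ∩ C₁).card = m i₀ + 1 := by
        rw [hinter, Finset.card_union_of_disjoint]
        · rw [hDcard]; omega
        · exact Finset.disjoint_of_subset_left (Finset.inter_subset_right) hDC.symm
      have hcost₁ : cost Z m C₁ i₀ = 0 := by
        unfold cost; rw [hinter_card]; omega
      have hsum₁ : ∑ i, cost Z m C₁ i + cost Z m C i₀ ≤ ∑ i, cost Z m C i := by
        have e1 : ∑ i, cost Z m C₁ i
            = ∑ i ∈ Finset.univ.erase i₀, cost Z m C₁ i + cost Z m C₁ i₀ :=
          (Finset.sum_erase_add _ _ (Finset.mem_univ i₀)).symm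
        have e2 : ∑ i, cost Z m C i
            = ∑ i ∈ Finset.univ.erase i₀, cost Z m C i + cost Z m C i₀ :=
          (Finset.sum_erase_add _ _ (Finset.mem_univ i₀)).symm
        have e3 : ∑ i ∈ Finset.univ.erase i₀, cost Z m C₁ i
            ≤ ∑ i ∈ Finset.univ.erase i₀, cost Z m C i :=
          Finset.sum_le_sum fun i _ => by
            unfold cost
            have : (Z i ∩ C).card ≤ (Z i ∩ C₁).card :=
              Finset.card_le_card (Finset.inter_subset_inter (le_refl _) hCsub)
            omega
        omega
      have hstep : ∑ i, cost Z m C₁ i ≤ n := by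
        have : 1 ≤ cost Z m C i₀ := by rw [hcost]; omega
        omega
      obtain ⟨C', hsub', hcard', hprop'⟩ := ih C₁ hstep
      refine ⟨C', hCsub.trans hsub', ?_, hprop'⟩
      calc C'.card ≤ C₁.card + ∑ i, cost Z m C₁ i := hcard'
        _ ≤ C.card + (m i₀ + 1 - (Z i₀ ∩ C).card) + ∑ i, cost Z m C₁ i := by
            rw [hC₁card]
        _ ≤ C.card + ∑ i, cost Z m C i := by
            rw [← hcost]
            omega
    · push_neg at hviol
      refine ⟨C, le_refl _, Nat.le_add_right _ _, ?_⟩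
      intro i
      rcases Nat.eq_zero_or_pos (Z i ∩ C).card with h | h
      · exact Or.inl h
      · exact Or.inr (by have := hviol i h; omega)

/-- Hall failure for the zero pattern yields a valid column set. -/
theorem wall (Z : Fin M → Finset (Fin (K + 1))) (m : Fin M → ℕ) (hw : ∑ i, m i = K)
    (hZc : ∀ i, m i + 1 ≤ (Z i).card) (R : Finset (Fin M))
    (hR : (R.biUnion Z).card < ∑ i ∈ R, m i) :
    ∃ C : Finset (Fin (K + 1)), C.Nonempty ∧ C.card ≤ K ∧
      ∀ i, (Z i ∩ C).card = 0 ∨ m i + 1 ≤ (Z i ∩ C).card := by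
  classical
  set C₀ := R.biUnion Z with hC₀
  have hRne : R.Nonempty := by
    rcases R.eq_empty_or_nonempty with rfl | h
    · simp at hR
    · exact h
  obtain ⟨i₁, hi₁⟩ := hRne
  have hC₀ne : C₀.Nonempty := by
    have h1 : 1 ≤ (Z i₁).card := le_trans (by omega) (hZc i₁)
    obtain ⟨a, ha⟩ := Finset.card_pos.mp (show 0 < (Z i₁).card by omega)
    exact ⟨a, Finset.mem_biUnion.mpr ⟨i₁, hi₁, ha⟩⟩
  have hcostR : ∀ i ∈ R, cost Z m C₀ i = 0 := by
    intro i hiR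
    have hZC : Z i ∩ C₀ = Z i := Finset.inter_eq_left.mpr
      (fun a ha => Finset.mem_biUnion.mpr ⟨i, hiR, ha⟩)
    unfold cost
    rw [hZC]
    have := hZc i
    omega
  have hcostsum : ∑ i, cost Z m C₀ i ≤ ∑ i ∈ Rᶜ, m i := by
    rw [← Finset.sum_add_sum_compl R (cost Z m C₀)]
    have h1 : ∑ i ∈ R, cost Z m C₀ i = 0 := Finset.sum_eq_zero hcostR
    rw [h1]
    simpa using Finset.sum_le_sum (fun i _ => cost_le Z m C₀ i)
  obtain ⟨C', hsub, hcard, hprop⟩ := fixproc Z m hZc _ C₀ (le_refl _)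
  refine ⟨C', hC₀ne.mono hsub, ?_, hprop⟩
  have h2 : ∑ i ∈ R, m i + ∑ i ∈ Rᶜ, m i = K := by
    rw [Finset.sum_add_sum_compl]; exact hw
  calc C'.card ≤ C₀.card + ∑ i, cost Z m C₀ i := hcard
    _ ≤ C₀.card + ∑ i ∈ Rᶜ, m i := by omega
    _ ≤ K := by omega

end TWC


namespace TWC

variable {M K : ℕ}

theorem cycle_seed (Z : Fin M → Finset (Fin (K + 1))) (m : Fin M → ℕ) (hw : ∑ i, m i = K)
    (hm : ∀ i, 1 ≤ m i) (hZc : ∀ i, m i + 1 ≤ (Z i).card) {j₀ : Fin (K + 1)}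
    {P Q : Fin M → Finset (Fin (K + 1))}
    (hP : PartOn m (Finset.univ.erase j₀) P) (hQ : PartOn m (Finset.univ.erase j₀) Q)
    (hne : P ≠ Q) (hPZ : ∀ i, P i ⊆ Z i) (hQZ : ∀ i, Q i ⊆ Z i) :
    ∃ C : Finset (Fin (K + 1)), C.Nonempty ∧ C.card ≤ K ∧
      ∀ i, (Z i ∩ C).card = 0 ∨ m i + 1 ≤ (Z i ∩ C).card := by
  classical
  set D := Finset.univ.filter (fun r => P r ≠ Q r) with hD
  have hDne : D.Nonempty := by
    obtain ⟨r, hr⟩ := Function.ne_iff.mp hne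
    exact ⟨r, Finset.mem_filter.mpr ⟨Finset.mem_univ _, hr⟩⟩
  have hex : ∀ r ∈ D, ∃ p : Fin (K + 1) × Fin M,
      p.1 ∈ P r ∧ p.1 ∉ Q r ∧ p.1 ∈ Q p.2 ∧ p.2 ∈ D := by
    intro r hr
    have hPQr : P r ≠ Q r := (Finset.mem_filter.mp hr).2
    have : ¬ P r ⊆ Q r := by
      intro hcon
      exact hPQr (Finset.eq_of_subset_of_card_le hcon (by rw [hP.1 r, hQ.1 r]))
    obtain ⟨a, haP, haQ⟩ := Finset.not_subset.mp this
    have haU : a ∈ Finset.univ.erase j₀ := hP.2.1 r haP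
    obtain ⟨i', hi', _⟩ := hQ.2.2 a haU
    have hi'r : i' ≠ r := fun hh => haQ (hh ▸ hi')
    have haPi' : a ∉ P i' := by
      intro hcon
      exact hi'r (hP.disj hcon haP)
    have hi'D : i' ∈ D := Finset.mem_filter.mpr ⟨Finset.mem_univ _,
      fun hh => haPi' (hh ▸ hi')⟩
    exact ⟨(a, i'), haP, haQ, hi', hi'D⟩
  choose! pf h1 h2 h3 h4 using hex
  set a : Fin M → Fin (K + 1) := fun r => (pf r).1 with ha
  set σ : Fin M → Fin M := fun r => (pf r).2 with hσ
  have h1' : ∀ r ∈ D, a r ∈ P r := h1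
  have h2' : ∀ r ∈ D, a r ∉ Q r := h2
  have h3' : ∀ r ∈ D, a r ∈ Q (σ r) := h3
  have hσne : ∀ r ∈ D, σ r ≠ r := by
    intro r hr hcon
    have h9 := h3' r hr
    rw [hcon] at h9
    exact h2' r hr h9
  obtain ⟨O, hOne, hOD, pre, horb⟩ := orbit_exists D hDne σ (fun r hr => h4 r hr) hσne
  set C₀ := O.image a with hC₀
  have hainj : ∀ r ∈ O, ∀ r' ∈ O, a r = a r' → r = r' := by
    intro r hr r' hr' haa
    apply hP.disj (h1' r (hOD hr))
    rw [haa]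
    exact h1' r' (hOD hr')
  have hC₀card : C₀.card = O.card := Finset.card_image_of_injOn hainj
  have hpair : ∀ r ∈ O, 2 ≤ (Z r ∩ C₀).card := by
    intro r hr
    have hrD := hOD hr
    have h5 : a r ∈ Z r ∩ C₀ := Finset.mem_inter.mpr
      ⟨hPZ r (h1' r hrD), Finset.mem_image_of_mem _ hr⟩
    have hpre := horb r hr
    have h6 : a (pre r) ∈ Q r := by
      have h9 := h3' (pre r) (hOD hpre.2.1)
      rwa [hpre.2.2.1] at h9
    have h7 : a (pre r) ∈ Z r ∩ C₀ := Finset.mem_inter.mpr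
      ⟨hQZ r h6, Finset.mem_image_of_mem _ hpre.2.1⟩
    have h8 : a r ≠ a (pre r) := by
      intro hcon
      apply h2' r hrD
      rw [hcon]
      exact h6
    calc 2 = ({a r, a (pre r)} : Finset (Fin (K + 1))).card := (Finset.card_pair h8).symm
      _ ≤ (Z r ∩ C₀).card := Finset.card_le_card (by
          intro u hu
          rcases Finset.mem_insert.mp hu with rfl | hu
          · exact h5
          · rw [Finset.mem_singleton.mp hu]; exact h7)
  have hsum : ∑ i, cost Z m C₀ i + O.card ≤ K := by
    have e0 : ∑ i ∈ O, cost Z m C₀ i + ∑ i ∈ Oᶜ, cost Z m C₀ i = ∑ i, cost Z m C₀ i :=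
      Finset.sum_add_sum_compl O _
    have e1 : ∑ i ∈ O, (cost Z m C₀ i + 1) ≤ ∑ i ∈ O, m i := by
      apply Finset.sum_le_sum
      intro r hr
      have := hpair r hr
      have := hm r
      unfold cost
      omega
    have e2 : ∑ i ∈ Oᶜ, cost Z m C₀ i ≤ ∑ i ∈ Oᶜ, m i :=
      Finset.sum_le_sum fun i _ => cost_le Z m C₀ i
    have e3 : ∑ i ∈ O, m i + ∑ i ∈ Oᶜ, m i = K := by
      rw [Finset.sum_add_sum_compl]; exact hw
    rw [Finset.sum_add_distrib, Finset.sum_const, smul_eq_mul, mul_one] at e1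
    omega
  obtain ⟨C', hsub, hcard, hprop⟩ := fixproc Z m hZc _ C₀ (le_refl _)
  refine ⟨C', ?_, ?_, hprop⟩
  · obtain ⟨r, hr⟩ := hOne
    exact ⟨a r, hsub (Finset.mem_image_of_mem _ hr)⟩
  · omega

end TWC


namespace TWC

variable {M K : ℕ}

theorem witness (m : Fin M → ℕ) (A : Fin M → Fin (K + 1) → ℝ) (hw : ∑ i, m i = K)
    (C : Finset (Fin (K + 1))) (hCne : C.Nonempty) (hCcard : C.card ≤ K)
    (hprop : ∀ i, (Zset A (fun j => maxMinor m A j) i ∩ C).card = 0 ∨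
      m i + 1 ≤ (Zset A (fun j => maxMinor m A j) i ∩ C).card) :
    ∃ x, InTWKernel m A x ∧ ∀ c : ℝ, x ≠ fun j => maxMinor m A j + c := by
  classical
  set y : Fin (K + 1) → ℝ := fun j => maxMinor m A j with hy
  have hZc : ∀ i, m i + 1 ≤ (Zset A y i).card := Zset_card m (part1 m A hw)
  set Gs : Finset (Fin M × Fin (K + 1)) :=
    (Finset.univ ×ˢ Finset.univ).filter (fun p => p.2 ∉ Zset A y p.1) with hGs
  set ε : ℝ := if h : Gs.Nonempty then
      Gs.inf' h (fun p => y p.2 + A p.1 p.2 - Vval A y p.1) else 1 with hε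
  have hBpos : ∀ p : Fin M × Fin (K + 1), p ∈ Gs → 0 < y p.2 + A p.1 p.2 - Vval A y p.1 := by
    intro p hp
    have hp2 : p.2 ∉ Zset A y p.1 := (Finset.mem_filter.mp hp).2
    have h1 := Bmat_nonneg A y p.1 p.2
    have h2 : Bmat A y p.1 p.2 ≠ 0 := fun hc => hp2 (Bmat_eq_zero_iff.mp hc)
    have h3 : 0 < Bmat A y p.1 p.2 := lt_of_le_of_ne h1 (Ne.symm h2)
    unfold Bmat at h3
    linarith
  have hεpos : 0 < ε := by
    rw [hε]
    split_ifs with h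
    · rw [Finset.lt_inf'_iff]
      exact hBpos
    · norm_num
  have hεle : ∀ i l, l ∉ Zset A y i → ε ≤ y l + A i l - Vval A y i := by
    intro i l hl
    have hmem : (i, l) ∈ Gs := Finset.mem_filter.mpr
      ⟨Finset.mem_product.mpr ⟨Finset.mem_univ _, Finset.mem_univ _⟩, hl⟩
    rw [hε]
    split_ifs with h
    · exact Finset.inf'_le _ hmem
    · exact absurd ⟨_, hmem⟩ h
  set x : Fin (K + 1) → ℝ := fun k => y k + (if k ∈ C then 0 else ε) with hx
  have hval : ∀ i k, x k + A i k = y k + A i k + (if k ∈ C then 0 else ε) := by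
    intro i k; rw [hx]; ring
  refine ⟨x, ?_, ?_⟩
  · intro i
    rcases hprop i with h0 | h1
    · -- Z i misses C
      have hint : Zset A y i ∩ C = ∅ := Finset.card_eq_zero.mp h0
      have hkey : ∀ k ∈ Zset A y i, ∀ l, x k + A i k ≤ x l + A i l := by
        intro k hk l
        have hkC : k ∉ C := by
          intro hc
          have : k ∈ Zset A y i ∩ C := Finset.mem_inter.mpr ⟨hk, hc⟩
          rw [hint] at this
          simp at this
        have hkval : x k + A i k = Vval A y i + ε := by
          rw [hval, if_neg hkC, mem_Zset_iff.mp hk]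
        rw [hkval, hval]
        by_cases hlC : l ∈ C
        · rw [if_pos hlC]
          have hlZ : l ∉ Zset A y i := by
            intro hc
            have : l ∈ Zset A y i ∩ C := Finset.mem_inter.mpr ⟨hc, hlC⟩
            rw [hint] at this
            simp at this
          have := hεle i l hlZ
          linarith
        · rw [if_neg hlC]
          have := Vval_le A y i l
          linarith
      have hsub : (↑(Zset A y i) : Set (Fin (K + 1)))
          ⊆ {j | ∀ k, x j + A i j ≤ x k + A i k} := fun k hk => hkey k hk
      calc m i + 1 ≤ (Zset A y i).card := hZc i
        _ = (↑(Zset A y i) : Set (Fin (K + 1))).ncard := (Set.ncard_coe_finset _).symm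
        _ ≤ _ := Set.ncard_le_ncard hsub (Set.toFinite _)
    · -- Z i hits C with multiplicity
      have hkey : ∀ k ∈ Zset A y i ∩ C, ∀ l, x k + A i k ≤ x l + A i l := by
        intro k hk l
        obtain ⟨hkZ, hkC⟩ := Finset.mem_inter.mp hk
        have hkval : x k + A i k = Vval A y i := by
          rw [hval, if_pos hkC, mem_Zset_iff.mp hkZ]
          ring
        rw [hkval, hval]
        have h2 := Vval_le A y i l
        by_cases hlC : l ∈ C
        · rw [if_pos hlC]; linarith
        · rw [if_neg hlC]; linarith
      have hsub : (↑(Zset A y i ∩ C) : Set (Fin (K + 1)))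
          ⊆ {j | ∀ k, x j + A i j ≤ x k + A i k} := fun k hk => hkey k hk
      calc m i + 1 ≤ (Zset A y i ∩ C).card := h1
        _ = (↑(Zset A y i ∩ C) : Set (Fin (K + 1))).ncard := (Set.ncard_coe_finset _).symm
        _ ≤ _ := Set.ncard_le_ncard hsub (Set.toFinite _)
  · intro c hcon
    obtain ⟨k, hk⟩ := hCne
    have hout : ((Finset.univ : Finset (Fin (K + 1))) \ C).Nonempty := by
      rw [← Finset.card_pos, Finset.card_sdiff_of_subset (Finset.subset_univ C)]
      rw [Finset.card_univ, Fintype.card_fin]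
      omega
    obtain ⟨k', hk'⟩ := hout
    have hk'C : k' ∉ C := (Finset.mem_sdiff.mp hk').2
    have e1 := congrFun hcon k
    have e2 := congrFun hcon k'
    rw [hx] at e1 e2
    simp only [if_pos hk, if_neg hk'C] at e1 e2
    have : c = 0 := by rw [hy] at e1; linarith [e1]
    have : c = ε := by rw [hy] at e2; linarith [e2]
    linarith

end TWC


namespace TWC

variable {M K : ℕ}

theorem right_dir (m : Fin M → ℕ) (A : Fin M → Fin (K + 1) → ℝ) (hm : ∀ i, 1 ≤ m i)
    (hw : ∑ i, m i = K)
    (hL : ∀ x, InTWKernel m A x → ∃ c, x = fun j => maxMinor m A j + c) :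
    ∀ j, ¬ TWSingular m (minorMatrix A j) := by
  classical
  intro j₀ hsing
  rw [twSingular_minor_iff] at hsing
  obtain ⟨P, Q, hP, hQ, hne, heq, hopt⟩ := hsing
  set y : Fin (K + 1) → ℝ := fun j => maxMinor m A j with hy
  have hker := part1 m A hw
  set Z := Zset A y with hZ
  have hZc : ∀ i, m i + 1 ≤ (Z i).card := Zset_card m hker
  have hC : ∃ C : Finset (Fin (K + 1)), C.Nonempty ∧ C.card ≤ K ∧
      ∀ i, (Z i ∩ C).card = 0 ∨ m i + 1 ≤ (Z i ∩ C).card := by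
    by_cases hhall : ∃ R : Finset (Fin M), (R.biUnion Z).card < ∑ i ∈ R, m i
    · obtain ⟨R, hR⟩ := hhall
      exact wall Z m hw hZc R hR
    · push_neg at hhall
      have hhall2 : ∀ s : Finset ((i : Fin M) × Fin (m i)),
          s.card ≤ (s.biUnion fun p => Z p.1).card := by
        intro s
        set S := s.image Sigma.fst with hS
        have hcard1 : s.card ≤ ∑ i ∈ S, m i := by
          calc s.card ≤ (S.sigma fun i => (Finset.univ : Finset (Fin (m i)))).card := by
                apply Finset.card_le_card
                intro p hp
                exact Finset.mem_sigma.mpr ⟨Finset.mem_image_of_mem _ hp, Finset.mem_univ _⟩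
            _ = ∑ i ∈ S, m i := by
                rw [Finset.card_sigma]
                simp
        have hbi : s.biUnion (fun p => Z p.1) = S.biUnion Z := by
          ext k
          simp only [Finset.mem_biUnion, hS, Finset.mem_image]
          constructor
          · rintro ⟨p, hp, hk⟩; exact ⟨p.1, ⟨p, hp, rfl⟩, hk⟩
          · rintro ⟨i, ⟨p, hp, rfl⟩, hk⟩; exact ⟨p, hp, hk⟩
        rw [hbi]
        exact le_trans hcard1 (hhall S)
      obtain ⟨f, hfinj, hfmem⟩ :=
        (Finset.all_card_le_biUnion_card_iff_exists_injective
          (fun p : (i : Fin M) × Fin (m i) => Z p.1)).mp hhall2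
      set G : Fin M → Finset (Fin (K + 1)) :=
        fun i => (Finset.univ : Finset (Fin (m i))).image (fun c => f ⟨i, c⟩) with hG
      have hGmem : ∀ i k, k ∈ G i ↔ ∃ c : Fin (m i), f ⟨i, c⟩ = k := by
        intro i k; simp [hG]
      have hGcard : ∀ i, (G i).card = m i := by
        intro i
        rw [hG]
        rw [Finset.card_image_of_injective _ (fun c c' h => sigma_mk_injective (hfinj h))]
        simp
      have hGZ : ∀ i, G i ⊆ Z i := by
        intro i k hk
        obtain ⟨c, rfl⟩ := (hGmem i k).mp hk
        exact hfmem ⟨i, c⟩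
      have hdisj : ∀ i ∈ Finset.univ, ∀ i' ∈ Finset.univ, i ≠ i' →
          Disjoint (G i) (G (i' : Fin M)) := by
        intro i _ i' _ hnei
        rw [Finset.disjoint_left]
        intro k hk hk'
        obtain ⟨c, hc⟩ := (hGmem i k).mp hk
        obtain ⟨c', hc'⟩ := (hGmem i' k).mp hk'
        exact hnei (congrArg Sigma.fst (hfinj (hc.trans hc'.symm)))
      set U := Finset.univ.biUnion G with hU
      have hUcard : U.card = K := by
        rw [hU, Finset.card_biUnion hdisj]
        simp only [hGcard]
        exact hw
      have hcompl : ((Finset.univ : Finset (Fin (K + 1))) \ U).card = 1 := by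
        rw [Finset.card_sdiff_of_subset (Finset.subset_univ U), Finset.card_univ, Fintype.card_fin,
          hUcard]
        omega
      obtain ⟨js, hjs⟩ := Finset.card_eq_one.mp hcompl
      have hjsU : js ∉ U := by
        have : js ∈ (Finset.univ : Finset (Fin (K + 1))) \ U := by
          rw [hjs]; exact Finset.mem_singleton_self js
        exact (Finset.mem_sdiff.mp this).2
      have hUeq : ∀ k, k ≠ js → k ∈ U := by
        intro k hk
        by_contra hcon
        have : k ∈ (Finset.univ : Finset (Fin (K + 1))) \ U :=
          Finset.mem_sdiff.mpr ⟨Finset.mem_univ _, hcon⟩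
        rw [hjs] at this
        exact hk (Finset.mem_singleton.mp this)
      have hGpart : PartOn m (Finset.univ.erase js) G := by
        refine ⟨hGcard, ?_, ?_⟩
        · intro i k hk
          have hkU : k ∈ U := Finset.mem_biUnion.mpr ⟨i, Finset.mem_univ _, hk⟩
          exact Finset.mem_erase.mpr ⟨fun hh => hjsU (hh ▸ hkU), Finset.mem_univ _⟩
        · intro k hk
          have hkU : k ∈ U := hUeq k (Finset.mem_erase.mp hk).1
          obtain ⟨i, _, hki⟩ := Finset.mem_biUnion.mp hkU
          refine ⟨i, hki, ?_⟩
          intro i' hki'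
          by_contra hnei
          exact (Finset.disjoint_left.mp
            (hdisj i' (Finset.mem_univ _) i (Finset.mem_univ _) hnei)) hki' hki
      -- weight of G is zero
      have hwBG : wB A y G = 0 := by
        unfold wB
        apply Finset.sum_eq_zero
        intro i _
        apply Finset.sum_eq_zero
        intro k hk
        exact Bmat_eq_zero_iff.mpr (hZ ▸ hGZ i hk)
      have eG := wB_eq (A := A) y hGpart
      have eGm : TWC.mval m A (Finset.univ.erase js) ≤ partSum A G := TWC.mval_le hGpart
      have eGv : TWC.mval m A (Finset.univ.erase js) = y js := (maxMinor_eq m A js).symm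
      have esum : ∀ j : Fin (K + 1), ∑ k ∈ Finset.univ.erase j, y k = (∑ k, y k) - y j :=
        fun j => Finset.sum_erase_eq_sub (Finset.mem_univ j)
      have hYSV : (∑ k, y k) - ∑ i, (m i : ℝ) * Vval A y i ≤ 0 := by
        rw [esum js] at eG
        rw [hwBG] at eG
        rw [eGv] at eGm
        linarith
      -- P is optimal, so its normalized weight is Σy - SV ≥ 0, hence = 0
      have hPopt : partSum A P = TWC.mval m A (Finset.univ.erase j₀) := by
        apply le_antisymm
        · obtain ⟨R₀, hR₀, hR₀e⟩ := TWC.exists_mval A (erase_card_eq hw j₀)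
          rw [← hR₀e]
          exact hopt R₀ hR₀
        · exact TWC.mval_le hP
      have eP := wB_eq (A := A) y hP
      have ePv : TWC.mval m A (Finset.univ.erase j₀) = y j₀ := (maxMinor_eq m A j₀).symm
      have hwBP : wB A y P = 0 := by
        have h1 : 0 ≤ wB A y P := wB_nonneg A y P
        rw [esum j₀] at eP
        rw [hPopt, ePv] at eP
        linarith
      have hwBQ : wB A y Q = 0 := by
        have h1 : 0 ≤ wB A y Q := wB_nonneg A y Q
        have eQ := wB_eq (A := A) y hQ
        rw [esum j₀] at eQ
        rw [← heq, hPopt, ePv] at eQ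
        linarith
      have hPZ : ∀ i, P i ⊆ Z i := by
        intro i k hk
        have h1 : ∀ i ∈ Finset.univ, (0:ℝ) ≤ ∑ k ∈ P i, Bmat A y i k :=
          fun i _ => Finset.sum_nonneg fun k _ => Bmat_nonneg A y i k
        have h2 := (Finset.sum_eq_zero_iff_of_nonneg h1).mp hwBP i (Finset.mem_univ i)
        have h3 := (Finset.sum_eq_zero_iff_of_nonneg
          (fun k _ => Bmat_nonneg A y i k)).mp h2 k hk
        rw [hZ]
        exact Bmat_eq_zero_iff.mp h3
      have hQZ : ∀ i, Q i ⊆ Z i := by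
        intro i k hk
        have h1 : ∀ i ∈ Finset.univ, (0:ℝ) ≤ ∑ k ∈ Q i, Bmat A y i k :=
          fun i _ => Finset.sum_nonneg fun k _ => Bmat_nonneg A y i k
        have h2 := (Finset.sum_eq_zero_iff_of_nonneg h1).mp hwBQ i (Finset.mem_univ i)
        have h3 := (Finset.sum_eq_zero_iff_of_nonneg
          (fun k _ => Bmat_nonneg A y i k)).mp h2 k hk
        rw [hZ]
        exact Bmat_eq_zero_iff.mp h3
      exact cycle_seed Z m hw hm hZc hP hQ hne hPZ hQZ
  obtain ⟨C, hCne, hCcard, hprop⟩ := hC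
  obtain ⟨x, hxker, hxne⟩ := witness m A hw C hCne hCcard hprop
  obtain ⟨c, hc⟩ := hL x hxker
  exact hxne c hc

end TWC



/-- Tropical weighted Cramer's rule.  For an `(N-1) × N` tw-matrix `A` (total weight `N-1`),
the vector of maximal tw-minors lies in the tw-kernel of `A`, and every vector in the
tw-kernel of `A` equals that vector plus a constant multiple of `(1, …, 1)` iff every
maximal tw-minor of `A` is tw-nonsingular. -/
theorem tw_cramer {M K : ℕ} (m : Fin M → ℕ) (A : Fin M → Fin (K + 1) → ℝ)
    (hm : ∀ i, 1 ≤ m i) (hw : ∑ i, m i = K) :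
    InTWKernel m A (fun j => maxMinor m A j) ∧
      ((∀ x : Fin (K + 1) → ℝ, InTWKernel m A x →
          ∃ c : ℝ, x = fun j => maxMinor m A j + c) ↔
        ∀ j : Fin (K + 1), ¬ TWSingular m (minorMatrix A j)) := by
  refine ⟨TWC.part1 m A hw, ?_, ?_⟩
  · intro hL
    exact TWC.right_dir m A hm hw hL
  · intro hns x hx
    exact TWC.left_dir m A hw hns x hx
end

section
/- Let a be a saturated tropical polynomial with support Δ and dual complex 𝒫 = 𝒫_a. Let x_1, …, x_K ∈ ℝⁿ and positive integers m_1, …, m_K be such that V(a) has multiplicity at least m_i at x_i for each i, and no two of the x_i lie in the relative interior of the same polyhedron of 𝒯_a. Define a weighting μ of 𝒫 by μ(conv(B(x_i))) = m_i for each i and μ(P) = 0 for all other members P of 𝒫. Then the following are equivalent: (1) every saturated tropical polynomial a' with support Δ such that V(a') has multiplicity at least m_i at x_i for each i satisfies a' = a + c·(1, …, 1) for some c ∈ ℝ; (2) μ is rigid. -/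
open Set
open scoped Classical

/-- A point of `ℝⁿ` with integer coordinates. -/
def IsLatticePoint {n : ℕ} (x : Fin n → ℝ) : Prop := ∀ i, ∃ z : ℤ, x i = (z : ℝ)

/-- The lattice points of a subset of `ℝⁿ`. -/
def latticePts {n : ℕ} (P : Set (Fin n → ℝ)) : Set (Fin n → ℝ) :=
  {x ∈ P | IsLatticePoint x}

/-- A lattice polytope: the convex hull of finitely many lattice points. -/
def IsLatticePolytope {n : ℕ} (P : Set (Fin n → ℝ)) : Prop :=
  ∃ S : Finset (Fin n → ℝ), (∀ x ∈ S, IsLatticePoint x) ∧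
    P = convexHull ℝ (S : Set (Fin n → ℝ))

/-- The inclusion of `ℤⁿ` in `ℝⁿ`. -/
def toR {n : ℕ} (I : Fin n → ℤ) : Fin n → ℝ := fun k => (I k : ℝ)

/-- `I · x`. -/
def dotIR {n : ℕ} (I : Fin n → ℤ) (x : Fin n → ℝ) : ℝ := ∑ k, (I k : ℝ) * x k

/-- `B(x)`: the set of exponents `I ∈ L(Δ)` at which `a_I + I · x` is minimal. -/
noncomputable def Bset {n : ℕ} (LΔ : Finset (Fin n → ℤ)) (a : (Fin n → ℤ) → ℝ)
    (x : Fin n → ℝ) : Finset (Fin n → ℤ) :=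
  LΔ.filter fun I => ∀ J ∈ LΔ, a I + dotIR I x ≤ a J + dotIR J x

/-- `a` is saturated: every exponent attains the minimum somewhere. -/
def Saturated {n : ℕ} (LΔ : Finset (Fin n → ℤ)) (a : (Fin n → ℤ) → ℝ) : Prop :=
  ∀ I ∈ LΔ, ∃ x : Fin n → ℝ, I ∈ Bset LΔ a x

/-- The member `conv(B(x))` of the dual complex. -/
noncomputable def dualCell {n : ℕ} (LΔ : Finset (Fin n → ℤ)) (a : (Fin n → ℤ) → ℝ)
    (x : Fin n → ℝ) : Set (Fin n → ℝ) :=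
  convexHull ℝ (toR '' (Bset LΔ a x : Set (Fin n → ℤ)))

/-- The dual complex `𝒫_a`: all polytopes `conv(B(x))`, `x ∈ ℝⁿ`. -/
def dualComplex {n : ℕ} (LΔ : Finset (Fin n → ℤ)) (a : (Fin n → ℤ) → ℝ) :
    Set (Set (Fin n → ℝ)) :=
  {S | ∃ x : Fin n → ℝ, S = dualCell LΔ a x}

/-- The vertices (`0`-dimensional members) of a collection of polytopes. -/
def vertexSet {n : ℕ} (cplx : Set (Set (Fin n → ℝ))) : Set (Fin n → ℝ) :=
  {x | ({x} : Set (Fin n → ℝ)) ∈ cplx}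

/-- `L` is deformable with respect to `μ`. -/
def Deformable {n : ℕ} (Δ : Set (Fin n → ℝ)) (cplx : Set (Set (Fin n → ℝ)))
    (μ : Set (Fin n → ℝ) → ℤ) (L : Set (Fin n → ℝ)) : Prop :=
  L.Nonempty ∧ L ⊆ latticePts Δ ∧ ¬ vertexSet cplx ⊆ L ∧
    ∀ P ∈ cplx, P ∩ L = ∅ ∨ μ P + 1 ≤ ((P ∩ L).ncard : ℤ)

/-- `μ` is rigid if no `L` is deformable. -/
def Rigid {n : ℕ} (Δ : Set (Fin n → ℝ)) (cplx : Set (Set (Fin n → ℝ)))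
    (μ : Set (Fin n → ℝ) → ℤ) : Prop :=
  ¬ ∃ L, Deformable Δ cplx μ L


namespace TropAux

variable {n : ℕ}

lemma toR_injective : Function.Injective (toR (n := n)) := by
  intro I J h
  funext k
  have h1 : (I k : ℝ) = (J k : ℝ) := congrFun h k
  exact_mod_cast h1

lemma dot_of_comb {s : Finset (Fin n → ℤ)} (lam : (Fin n → ℤ) → ℝ) (I : Fin n → ℤ)
    (h : ∑ J ∈ s, lam J • toR J = toR I) (y : Fin n → ℝ) :
    ∑ J ∈ s, lam J * dotIR J y = dotIR I y := by
  have hk : ∀ k, ∑ J ∈ s, lam J * (J k : ℝ) = (I k : ℝ) := by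
    intro k
    have h1 := congrFun h k
    simpa [toR, Finset.sum_apply] using h1
  calc ∑ J ∈ s, lam J * dotIR J y = ∑ J ∈ s, ∑ k, lam J * ((J k : ℝ) * y k) := by
        simp [dotIR, Finset.mul_sum]
    _ = ∑ k, ∑ J ∈ s, lam J * ((J k : ℝ) * y k) := Finset.sum_comm
    _ = ∑ k, (∑ J ∈ s, lam J * (J k : ℝ)) * y k := by
        refine Finset.sum_congr rfl fun k _ => ?_
        rw [Finset.sum_mul]
        refine Finset.sum_congr rfl fun J _ => by ring
    _ = ∑ k, (I k : ℝ) * y k := by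
        refine Finset.sum_congr rfl fun k _ => by rw [hk]
    _ = dotIR I y := rfl

lemma mem_Bset {LΔ : Finset (Fin n → ℤ)} {a : (Fin n → ℤ) → ℝ} {x : Fin n → ℝ}
    {I : Fin n → ℤ} :
    I ∈ Bset LΔ a x ↔ I ∈ LΔ ∧ ∀ J ∈ LΔ, a I + dotIR I x ≤ a J + dotIR J x :=
  Finset.mem_filter

lemma Bset_nonempty {LΔ : Finset (Fin n → ℤ)} (a : (Fin n → ℤ) → ℝ) (x : Fin n → ℝ)
    (h : LΔ.Nonempty) : (Bset LΔ a x).Nonempty := by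
  obtain ⟨I, hI, hmin⟩ := LΔ.exists_min_image (fun J => a J + dotIR J x) h
  exact ⟨I, mem_Bset.2 ⟨hI, hmin⟩⟩

/-- Lemma A: a lattice point of a dual cell is an exponent of the cell (needs saturation). -/
lemma latticePoint_of_dualCell {LΔ : Finset (Fin n → ℤ)} {a : (Fin n → ℤ) → ℝ}
    (hsat : Saturated LΔ a) {x : Fin n → ℝ} {I : Fin n → ℤ} (hI : I ∈ LΔ)
    (hmem : toR I ∈ dualCell LΔ a x) : I ∈ Bset LΔ a x := by
  by_contra hIB
  -- get convex combination weights
  classical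
  set B : Finset (Fin n → ℤ) := Bset LΔ a x with hBdef
  have himg : (toR '' (B : Set (Fin n → ℤ))) = ((B.image toR : Finset (Fin n → ℝ)) : Set (Fin n → ℝ)) := by
    simp [Finset.coe_image]
  rw [dualCell, himg, Finset.convexHull_eq] at hmem
  obtain ⟨w, hw0, hw1, hwc⟩ := hmem
  -- transfer weights to exponents
  set lam : (Fin n → ℤ) → ℝ := fun J => w (toR J) with hlam
  have hinj : Set.InjOn toR (B : Set (Fin n → ℤ)) := toR_injective.injOn
  have hsum1 : ∑ J ∈ B, lam J = 1 := by
    rw [← hw1]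
    exact (Finset.sum_image (fun p hp q hq h => hinj hp hq h)).symm
  have hcomb : ∑ J ∈ B, lam J • toR J = toR I := by
    have h2 : (B.image toR).centerMass w id = ∑ z ∈ B.image toR, w z • z := by
      rw [Finset.centerMass_eq_of_sum_1 _ _ hw1]
      simp [id]
    have h3 : ∑ z ∈ B.image toR, w z • z = ∑ J ∈ B, lam J • toR J :=
      Finset.sum_image (fun p hp q hq h => hinj hp hq h)
    rw [← hwc, h2, h3]
  have hlam0 : ∀ J ∈ B, 0 ≤ lam J := fun J hJ => hw0 _ (Finset.mem_image_of_mem _ hJ)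
  -- strict inequality at x
  have hBx : ∀ J ∈ B, a J + dotIR J x ≤ a I + dotIR I x := by
    intro J hJ
    exact (mem_Bset.1 hJ).2 I hI
  have hstrict : ∃ J₀ ∈ LΔ, a J₀ + dotIR J₀ x < a I + dotIR I x := by
    by_contra hc
    push_neg at hc
    exact hIB (mem_Bset.2 ⟨hI, fun J hJ => hc J hJ⟩)
  obtain ⟨J₀, hJ₀, hJ₀lt⟩ := hstrict
  have hBne : B.Nonempty := by
    rcases Finset.eq_empty_or_nonempty B with h | h
    · exfalso
      have := hsum1
      rw [h] at this
      simp at this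
    · exact h
  -- value of the minimum
  obtain ⟨J₁, hJ₁B⟩ := hBne
  have hval : ∀ J ∈ B, a J + dotIR J x = a J₁ + dotIR J₁ x := by
    intro J hJ
    have h1 := (mem_Bset.1 hJ).2 J₁ (mem_Bset.1 hJ₁B).1
    have h2 := (mem_Bset.1 hJ₁B).2 J (mem_Bset.1 hJ).1
    linarith
  have hvalmin : a J₁ + dotIR J₁ x < a I + dotIR I x := by
    have := (mem_Bset.1 hJ₁B).2 J₀ hJ₀
    linarith
  -- a I > ∑ lam J * a J
  have hdot : ∑ J ∈ B, lam J * dotIR J x = dotIR I x := dot_of_comb lam I hcomb x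
  have hkey : ∑ J ∈ B, lam J * a J < a I := by
    have hsumval : ∑ J ∈ B, lam J * (a J + dotIR J x) = a J₁ + dotIR J₁ x := by
      calc ∑ J ∈ B, lam J * (a J + dotIR J x)
          = ∑ J ∈ B, lam J * (a J₁ + dotIR J₁ x) := by
            refine Finset.sum_congr rfl fun J hJ => by rw [hval J hJ]
        _ = (∑ J ∈ B, lam J) * (a J₁ + dotIR J₁ x) := by rw [← Finset.sum_mul]
        _ = a J₁ + dotIR J₁ x := by rw [hsum1, one_mul]
    have hexp : ∑ J ∈ B, lam J * (a J + dotIR J x)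
        = ∑ J ∈ B, lam J * a J + dotIR I x := by
      rw [← hdot, ← Finset.sum_add_distrib]
      refine Finset.sum_congr rfl fun J _ => by ring
    have : ∑ J ∈ B, lam J * a J + dotIR I x < a I + dotIR I x := by
      rw [← hexp, hsumval]; exact hvalmin
    linarith
  -- contradiction with saturation of a at I
  obtain ⟨y, hy⟩ := hsat I hI
  have hy' := mem_Bset.1 hy
  have hge : ∀ J ∈ B, a J + dotIR J y ≥ a I + dotIR I y := by
    intro J hJ
    exact hy'.2 J (mem_Bset.1 hJ).1
  have hdoty : ∑ J ∈ B, lam J * dotIR J y = dotIR I y := dot_of_comb lam I hcomb y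
  have hsumy : ∑ J ∈ B, lam J * (a J + dotIR J y) ≥ a I + dotIR I y := by
    calc ∑ J ∈ B, lam J * (a J + dotIR J y)
        ≥ ∑ J ∈ B, lam J * (a I + dotIR I y) := by
          refine Finset.sum_le_sum fun J hJ => ?_
          exact mul_le_mul_of_nonneg_left (hge J hJ) (hlam0 J hJ)
      _ = a I + dotIR I y := by rw [← Finset.sum_mul, hsum1, one_mul]
  have hsumy' : ∑ J ∈ B, lam J * (a J + dotIR J y)
      = ∑ J ∈ B, lam J * a J + dotIR I y := by
    rw [← hdoty, ← Finset.sum_add_distrib]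
    refine Finset.sum_congr rfl fun J _ => by ring
  rw [hsumy'] at hsumy
  linarith

end TropAux

namespace TropAux

variable {n : ℕ}

lemma dotIR_add_smul (J : Fin n → ℤ) (y d : Fin n → ℝ) (t : ℝ) :
    dotIR J (y + t • d) = dotIR J y + t * dotIR J d := by
  simp only [dotIR, Pi.add_apply, Pi.smul_apply, smul_eq_mul, mul_add, Finset.mul_sum]
  rw [Finset.sum_add_distrib]
  congr 1
  exact Finset.sum_congr rfl fun k _ => by ring

lemma Bset_val_eq {LΔ : Finset (Fin n → ℤ)} {a : (Fin n → ℤ) → ℝ} {y : Fin n → ℝ}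
    {J K : Fin n → ℤ} (hJ : J ∈ Bset LΔ a y) (hK : K ∈ Bset LΔ a y) :
    a J + dotIR J y = a K + dotIR K y := by
  have h1 := (mem_Bset.1 hJ).2 K (mem_Bset.1 hK).1
  have h2 := (mem_Bset.1 hK).2 J (mem_Bset.1 hJ).1
  linarith

lemma perturb (LΔ : Finset (Fin n → ℤ)) (a : (Fin n → ℤ) → ℝ) (y d : Fin n → ℝ) :
    ∃ t : ℝ, 0 < t ∧ Bset LΔ a (y + t • d) =
      (Bset LΔ a y).filter (fun J => ∀ K ∈ Bset LΔ a y, dotIR J d ≤ dotIR K d) := by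
  classical
  rcases Finset.eq_empty_or_nonempty LΔ with hLΔ | hLΔ
  · refine ⟨1, one_pos, ?_⟩
    simp [Bset, hLΔ]
  set B := Bset LΔ a y with hB
  obtain ⟨J₁, hJ₁⟩ := Bset_nonempty a y hLΔ
  set v : ℝ := a J₁ + dotIR J₁ y with hv
  have hvmem : ∀ J ∈ B, a J + dotIR J y = v := fun J hJ => Bset_val_eq hJ hJ₁
  have hvle : ∀ J ∈ LΔ, v ≤ a J + dotIR J y := fun J hJ => (mem_Bset.1 hJ₁).2 J hJ
  set g : ℝ := if h : (LΔ \ B).Nonempty then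
      ((LΔ \ B).inf' h fun J => a J + dotIR J y) - v else 1 with hg
  have hgpos : 0 < g := by
    rw [hg]
    split_ifs with h
    · obtain ⟨J₂, hJ₂mem, hJ₂⟩ := Finset.exists_mem_eq_inf' h (fun J => a J + dotIR J y)
      rw [hJ₂]
      have hJ₂' := Finset.mem_sdiff.1 hJ₂mem
      have : a J₂ + dotIR J₂ y ≠ v := by
        intro he
        exact hJ₂'.2 (mem_Bset.2 ⟨hJ₂'.1, fun K hK => by rw [he]; exact hvle K hK⟩)
      have := lt_of_le_of_ne (hvle J₂ hJ₂'.1) (Ne.symm this)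
      linarith
    · norm_num
  have hgap : ∀ J ∈ LΔ, J ∉ B → v + g ≤ a J + dotIR J y := by
    intro J hJ hJB
    have hne : (LΔ \ B).Nonempty := ⟨J, Finset.mem_sdiff.2 ⟨hJ, hJB⟩⟩
    rw [hg, dif_pos hne]
    have := Finset.inf'_le (fun J => a J + dotIR J y) (Finset.mem_sdiff.2 ⟨hJ, hJB⟩)
    linarith
  set D : ℝ := LΔ.sup' hLΔ fun J => |dotIR J d| with hD
  have hDbd : ∀ J ∈ LΔ, |dotIR J d| ≤ D := fun J hJ =>
    Finset.le_sup' (fun J => |dotIR J d|) hJ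
  have hD0 : 0 ≤ D := le_trans (abs_nonneg _) (hDbd J₁ (mem_Bset.1 hJ₁).1)
  set t : ℝ := g / (2 * (D + 1)) with ht
  have htpos : 0 < t := div_pos hgpos (by linarith)
  have htD : t * D < g / 2 := by
    rw [ht]
    rw [div_mul_eq_mul_div, div_lt_div_iff₀ (by linarith) (by norm_num : (0:ℝ) < 2)]
    nlinarith
  refine ⟨t, htpos, ?_⟩
  have hbd : ∀ J ∈ LΔ, |t * dotIR J d| ≤ t * D := by
    intro J hJ
    rw [abs_mul, abs_of_pos htpos]
    exact mul_le_mul_of_nonneg_left (hDbd J hJ) htpos.le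
  ext J
  simp only [Finset.mem_filter]
  constructor
  · intro hJmem
    have hJ' := mem_Bset.1 hJmem
    have hJLΔ := hJ'.1
    have hJB : J ∈ B := by
      by_contra hJB
      have h1 : v + g ≤ a J + dotIR J y := hgap J hJLΔ hJB
      have h2 := hJ'.2 J₁ (mem_Bset.1 hJ₁).1
      rw [dotIR_add_smul, dotIR_add_smul] at h2
      have b1 := abs_le.1 (hbd J hJLΔ)
      have b2 := abs_le.1 (hbd J₁ (mem_Bset.1 hJ₁).1)
      -- a J + dot J y + t dot J d ≤ v + t dot J₁ d
      have : v + g - t*D ≤ v + t*D := by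
        have hv' : a J₁ + (dotIR J₁ y + t * dotIR J₁ d) = v + t * dotIR J₁ d := by
          rw [hv]; ring
        rw [hv'] at h2
        linarith [b1.1, b2.2]
      linarith
    refine ⟨hJB, fun K hK => ?_⟩
    have h2 := hJ'.2 K (mem_Bset.1 hK).1
    rw [dotIR_add_smul, dotIR_add_smul] at h2
    have e1 := hvmem J hJB
    have e2 := hvmem K hK
    have : t * dotIR J d ≤ t * dotIR K d := by linarith
    exact le_of_mul_le_mul_left this htpos
  · rintro ⟨hJB, hmin⟩
    have hJLΔ := (mem_Bset.1 hJB).1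
    refine mem_Bset.2 ⟨hJLΔ, fun K hK => ?_⟩
    rw [dotIR_add_smul, dotIR_add_smul]
    by_cases hKB : K ∈ B
    · have e1 := hvmem J hJB
      have e2 := hvmem K hKB
      have := mul_le_mul_of_nonneg_left (hmin K hKB) htpos.le
      linarith
    · have h1 : v + g ≤ a K + dotIR K y := hgap K hK hKB
      have b1 := abs_le.1 (hbd J hJLΔ)
      have b2 := abs_le.1 (hbd K hK)
      have e1 := hvmem J hJB
      linarith [b1.2, b2.1]

lemma exists_vertex_in (LΔ : Finset (Fin n → ℤ)) (a : (Fin n → ℤ) → ℝ)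
    (S' : Finset (Fin n → ℤ)) :
    ∀ (N : ℕ) (y : Fin n → ℝ), (Bset LΔ a y).Nonempty → (Bset LΔ a y).card ≤ N →
      Bset LΔ a y ⊆ S' → ∃ J ∈ S', ∃ y', Bset LΔ a y' = {J} := by
  intro N
  induction N with
  | zero =>
    intro y hne hcard _
    exact absurd (Finset.card_pos.2 hne) (by omega)
  | succ N ih =>
    intro y hne hcard hsub
    rcases eq_or_lt_of_le (Finset.one_le_card.2 hne) with h1 | h1
    · obtain ⟨J, hJ⟩ := Finset.card_eq_one.1 h1.symm
      exact ⟨J, hsub (by rw [hJ]; exact Finset.mem_singleton_self J), y, hJ⟩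
    · obtain ⟨J, hJ, Kk, hK, hJK⟩ := Finset.one_lt_card.1 h1
      set d : Fin n → ℝ := toR J - toR Kk with hd
      obtain ⟨t, htpos, hBt⟩ := perturb LΔ a y d
      set F := (Bset LΔ a y).filter (fun P => ∀ Q ∈ Bset LΔ a y, dotIR P d ≤ dotIR Q d) with hF
      have hdJK : dotIR Kk d < dotIR J d := by
        have hne' : toR J ≠ toR Kk := fun h => hJK (toR_injective h)
        have : ∃ k, toR J k ≠ toR Kk k := by
          by_contra hc
          push_neg at hc
          exact hne' (funext hc)
        obtain ⟨k₀, hk₀⟩ := this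
        have hdiff : dotIR J d - dotIR Kk d = ∑ k, (d k)^2 := by
          rw [dotIR, dotIR, ← Finset.sum_sub_distrib]
          refine Finset.sum_congr rfl fun k _ => ?_
          have : d k = (J k : ℝ) - (Kk k : ℝ) := by simp [hd, toR]
          rw [this]
          ring
        have hpos : 0 < ∑ k, (d k)^2 := by
          have hk0' : 0 < (d k₀)^2 := by
            have : d k₀ ≠ 0 := by
              simp only [hd, Pi.sub_apply]
              exact sub_ne_zero.2 hk₀
            positivity
          refine lt_of_lt_of_le hk0' ?_
          exact Finset.single_le_sum (f := fun k => (d k)^2) (fun k _ => sq_nonneg _)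
            (Finset.mem_univ k₀)
        linarith
      have hJF : J ∉ F := by
        intro hJF
        have := (Finset.mem_filter.1 hJF).2 Kk hK
        linarith
      have hFsub : F ⊆ Bset LΔ a y := Finset.filter_subset _ _
      have hFne : (Bset LΔ a (y + t • d)).Nonempty := by
        apply Bset_nonempty
        obtain ⟨P, hP⟩ := hne
        exact ⟨J, (mem_Bset.1 hJ).1⟩
      rw [hBt] at hFne
      have hcard' : F.card ≤ N := by
        have hss : F ⊂ Bset LΔ a y := ⟨hFsub, fun hsup => hJF (hsup hJ)⟩
        have := Finset.card_lt_card hss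
        omega
      exact ih (y + t • d) (by rw [hBt]; exact hFne) (by rw [hBt]; exact hcard')
        (by rw [hBt]; exact fun P hP => hsub (hFsub hP))

end TropAux

namespace TropAux

lemma deformable_of_nonunique {n K : ℕ}
    (Δ : Set (Fin n → ℝ)) (LΔ : Finset (Fin n → ℤ)) (a : (Fin n → ℤ) → ℝ)
    (hLΔ : ∀ I : Fin n → ℤ, I ∈ LΔ ↔ toR I ∈ Δ)
    (hsat : Saturated LΔ a)
    (x : Fin K → Fin n → ℝ) (m : Fin K → ℕ)
    (μ : Set (Fin n → ℝ) → ℤ)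
    (hμ₁ : ∀ i, μ (dualCell LΔ a (x i)) = m i)
    (hμ₀ : ∀ P ∈ dualComplex LΔ a, (∀ i, P ≠ dualCell LΔ a (x i)) → μ P = 0)
    (a' : (Fin n → ℤ) → ℝ) (hsat' : Saturated LΔ a')
    (hmult' : ∀ i, m i + 1 ≤ (Bset LΔ a' (x i)).card)
    (hnc : ¬ ∃ c : ℝ, ∀ I ∈ LΔ, a' I = a I + c) :
    ∃ L, Deformable Δ (dualComplex LΔ a) μ L := by
  classical
  have hLne : LΔ.Nonempty := by
    rcases Finset.eq_empty_or_nonempty LΔ with h | h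
    · exact absurd ⟨0, fun I hI => by simp [h] at hI⟩ hnc
    · exact h
  set b : (Fin n → ℤ) → ℝ := fun I => a' I - a I with hb
  set δ := LΔ.inf' hLne b with hδ
  set M := LΔ.sup' hLne b with hM
  have hδM : δ < M := by
    rcases lt_or_ge δ M with h | h
    · exact h
    · exfalso
      apply hnc
      refine ⟨δ, fun I hI => ?_⟩
      have h1 : δ ≤ b I := Finset.inf'_le b hI
      have h2 : b I ≤ M := Finset.le_sup' b hI
      have h3 : b I = δ := le_antisymm (by linarith) h1
      have : a' I - a I = δ := h3
      linarith
  set S := LΔ.filter (fun I => b I = δ) with hS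
  have hSne : S.Nonempty := by
    obtain ⟨I, hI, hIe⟩ := Finset.exists_mem_eq_inf' hLne b
    exact ⟨I, Finset.mem_filter.2 ⟨hI, hIe.symm⟩⟩
  set L : Set (Fin n → ℝ) := toR '' (S : Set (Fin n → ℤ)) with hL
  have hLfin : L.Finite := (S.finite_toSet).image toR
  refine ⟨L, ?_, ?_, ?_, ?_⟩
  · obtain ⟨I, hI⟩ := hSne
    exact ⟨toR I, Set.mem_image_of_mem _ (Finset.mem_coe.2 hI)⟩
  · rintro z ⟨I, hIS, rfl⟩
    have hIL : I ∈ LΔ := (Finset.mem_filter.1 (Finset.mem_coe.1 hIS)).1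
    exact ⟨(hLΔ I).1 hIL, fun k => ⟨I k, rfl⟩⟩
  · -- a vertex with b = M is not in L
    obtain ⟨J₁, hJ₁mem, hJ₁⟩ := Finset.exists_mem_eq_sup' hLne b
    obtain ⟨y₁, hy₁⟩ := hsat' J₁ hJ₁mem
    set S' := LΔ.filter (fun I => b I = M) with hS'
    have hsub : Bset LΔ a y₁ ⊆ S' := by
      intro J hJ
      have hJL := (mem_Bset.1 hJ).1
      have h1 : a' J₁ + dotIR J₁ y₁ ≤ a' J + dotIR J y₁ := (mem_Bset.1 hy₁).2 J hJL
      have h2 : a J + dotIR J y₁ ≤ a J₁ + dotIR J₁ y₁ := (mem_Bset.1 hJ).2 J₁ hJ₁mem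
      have h3 : b J ≤ M := Finset.le_sup' b hJL
      refine Finset.mem_filter.2 ⟨hJL, le_antisymm h3 ?_⟩
      have h4 : b J₁ ≤ b J := by
        simp only [hb]
        linarith
      rw [hM, hJ₁]
      exact h4
    obtain ⟨Jv, hJvS', y', hy'⟩ := exists_vertex_in LΔ a S' (Bset LΔ a y₁).card y₁
      (Bset_nonempty a y₁ hLne) le_rfl hsub
    intro hvs
    have hvert : toR Jv ∈ vertexSet (dualComplex LΔ a) := by
      refine ⟨y', ?_⟩
      rw [dualCell, hy']
      simp
    obtain ⟨I, hIS, hIe⟩ := hvs hvert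
    have hIJ : I = Jv := toR_injective hIe
    subst hIJ
    have hb1 : b I = δ := (Finset.mem_filter.1 (Finset.mem_coe.1 hIS)).2
    have hb2 : b I = M := (Finset.mem_filter.1 hJvS').2
    rw [hb1] at hb2
    exact absurd hb2 (ne_of_lt hδM)
  · intro P hP
    obtain ⟨y, rfl⟩ := hP
    have hPLfin : (dualCell LΔ a y ∩ L).Finite := hLfin.subset Set.inter_subset_right
    by_cases hex : ∃ i, dualCell LΔ a y = dualCell LΔ a (x i)
    · obtain ⟨i, hPi⟩ := hex
      set Bi := Bset LΔ a (x i) with hBi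
      by_cases hBS : (Bi ∩ S).Nonempty
      · right
        obtain ⟨K₀, hK₀⟩ := hBS
        have hK₀B : K₀ ∈ Bi := (Finset.mem_inter.1 hK₀).1
        have hK₀S : K₀ ∈ S := (Finset.mem_inter.1 hK₀).2
        have hK₀δ : b K₀ = δ := (Finset.mem_filter.1 hK₀S).2
        have hK₀L : K₀ ∈ LΔ := (mem_Bset.1 hK₀B).1
        have hsub' : Bset LΔ a' (x i) ⊆ Bi ∩ S := by
          intro J hJ
          have hJL := (mem_Bset.1 hJ).1
          have h1 : a' J + dotIR J (x i) ≤ a' K₀ + dotIR K₀ (x i) :=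
            (mem_Bset.1 hJ).2 K₀ hK₀L
          have h2 : a K₀ + dotIR K₀ (x i) ≤ a J + dotIR J (x i) :=
            (mem_Bset.1 hK₀B).2 J hJL
          have hK₀e : a' K₀ - a K₀ = δ := hK₀δ
          have hbJ' : δ ≤ b J := Finset.inf'_le b hJL
          have hbJle : b J ≤ δ := by
            simp only [hb]
            linarith
          have hbJe : b J = δ := le_antisymm hbJle hbJ'
          have hbJe' : a' J - a J = δ := hbJe
          refine Finset.mem_inter.2 ⟨?_, Finset.mem_filter.2 ⟨hJL, hbJe⟩⟩
          refine mem_Bset.2 ⟨hJL, fun Q hQ => ?_⟩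
          have h3 : a K₀ + dotIR K₀ (x i) ≤ a Q + dotIR Q (x i) := (mem_Bset.1 hK₀B).2 Q hQ
          linarith
        have hcard : m i + 1 ≤ (Bi ∩ S).card :=
          le_trans (hmult' i) (Finset.card_le_card hsub')
        have himg : toR '' ((Bi ∩ S : Finset (Fin n → ℤ)) : Set (Fin n → ℤ))
            ⊆ dualCell LΔ a y ∩ L := by
          rintro z ⟨Q, hQ, rfl⟩
          have hQmem : Q ∈ Bi ∩ S := Finset.mem_coe.1 hQ
          constructor
          · rw [hPi]
            refine subset_convexHull ℝ _ ?_
            exact ⟨Q, Finset.mem_coe.2 (Finset.mem_inter.1 hQmem).1, rfl⟩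
          · exact ⟨Q, Finset.mem_coe.2 (Finset.mem_inter.1 hQmem).2, rfl⟩
        have h1 : (m i + 1 : ℕ) ≤ (toR '' ((Bi ∩ S : Finset (Fin n → ℤ)) : Set (Fin n → ℤ))).ncard := by
          rw [Set.ncard_image_of_injective _ toR_injective, Set.ncard_coe_finset]
          exact hcard
        have h2 := Set.ncard_le_ncard himg hPLfin
        have h3 : (m i + 1 : ℕ) ≤ (dualCell LΔ a y ∩ L).ncard := le_trans h1 h2
        have hμP : μ (dualCell LΔ a y) = m i := by rw [hPi]; exact hμ₁ i
        rw [hμP]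
        exact_mod_cast h3
      · left
        rw [Set.eq_empty_iff_forall_notMem]
        rintro z ⟨hzP, I, hIS, rfl⟩
        have hIS' : I ∈ S := Finset.mem_coe.1 hIS
        have hIL : I ∈ LΔ := (Finset.mem_filter.1 hIS').1
        rw [hPi] at hzP
        have hIB : I ∈ Bi := latticePoint_of_dualCell hsat hIL hzP
        exact hBS ⟨I, Finset.mem_inter.2 ⟨hIB, hIS'⟩⟩
    · have hμP : μ (dualCell LΔ a y) = 0 := by
        refine hμ₀ _ ⟨y, rfl⟩ fun i h => hex ⟨i, h⟩
      by_cases hPL : (dualCell LΔ a y ∩ L).Nonempty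
      · right
        rw [hμP]
        have : 0 < (dualCell LΔ a y ∩ L).ncard := (Set.ncard_pos hPLfin).2 hPL
        omega
      · left
        exact Set.not_nonempty_iff_eq_empty.1 hPL

end TropAux

namespace TropAux

section Cone

variable {F : Type*} [NormedAddCommGroup F] [NormedSpace ℝ F] [FiniteDimensional ℝ F]
variable {κ : Type*} [Fintype κ]

/-- The convex cone generated by a finite family of vectors. -/
def coneGen (w : κ → F) : Set F :=
  {z | ∃ lam : κ → ℝ, (∀ j, 0 ≤ lam j) ∧ z = ∑ j, lam j • w j}

lemma zero_mem_coneGen (w : κ → F) : (0 : F) ∈ coneGen w :=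
  ⟨0, fun _ => le_refl 0, by simp⟩

lemma gen_mem_coneGen (w : κ → F) (j₀ : κ) : w j₀ ∈ coneGen w := by
  classical
  refine ⟨fun j => if j = j₀ then 1 else 0, fun j => by positivity, ?_⟩
  rw [Finset.sum_eq_single j₀]
  · simp
  · intro j _ hj
    simp [hj]
  · intro h
    exact absurd (Finset.mem_univ j₀) h

lemma smul_mem_coneGen (w : κ → F) {z : F} (hz : z ∈ coneGen w) {t : ℝ} (ht : 0 ≤ t) :
    t • z ∈ coneGen w := by
  obtain ⟨lam, hlam0, rfl⟩ := hz
  refine ⟨fun j => t * lam j, fun j => mul_nonneg ht (hlam0 j), ?_⟩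
  rw [Finset.smul_sum]
  exact Finset.sum_congr rfl fun j _ => by rw [smul_smul]

lemma convex_coneGen (w : κ → F) : Convex ℝ (coneGen w) := by
  rintro z₁ hz₁ z₂ hz₂ s t hs ht hst
  obtain ⟨lam₁, h₁0, rfl⟩ := hz₁
  obtain ⟨lam₂, h₂0, rfl⟩ := hz₂
  refine ⟨fun j => s * lam₁ j + t * lam₂ j,
    fun j => add_nonneg (mul_nonneg hs (h₁0 j)) (mul_nonneg ht (h₂0 j)), ?_⟩
  rw [Finset.smul_sum, Finset.smul_sum, ← Finset.sum_add_distrib]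
  refine Finset.sum_congr rfl fun j _ => ?_
  rw [add_smul, smul_smul, smul_smul]

/-- The linear map sending coefficients to the corresponding combination. -/
noncomputable def comboMap (T : Finset κ) (w : κ → F) : (T → ℝ) →ₗ[ℝ] F where
  toFun := fun lam => ∑ j : T, lam j • w j
  map_add' := by
    intro lam₁ lam₂
    simp [add_smul, Finset.sum_add_distrib]
  map_smul' := by
    intro c lam
    simp [smul_smul, Finset.smul_sum]

/-- Conic Carathéodory: every element of the cone is a nonnegative combination of a
linearly independent subfamily. -/
lemma coneGen_carath_aux (w : κ → F) :
    ∀ (N : ℕ) (lam : κ → ℝ), (Finset.univ.filter fun j => lam j ≠ 0).card ≤ N →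
      (∀ j, 0 ≤ lam j) →
      ∃ T : Finset κ, LinearIndependent ℝ (fun j : T => w j) ∧
        (∑ j, lam j • w j) ∈ coneGen (fun j : T => w j) := by
  classical
  intro N
  induction N with
  | zero =>
    intro lam hcard _
    have hz : ∀ j, lam j = 0 := by
      intro j
      by_contra hj
      have : j ∈ Finset.univ.filter fun j => lam j ≠ 0 := Finset.mem_filter.2 ⟨Finset.mem_univ _, hj⟩
      have := Finset.card_pos.2 ⟨j, this⟩
      omega
    refine ⟨∅, ?_, ?_⟩
    · haveI : IsEmpty ((∅ : Finset κ) : Set κ) := ⟨fun x => absurd x.2 (by simp)⟩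
      exact linearIndependent_empty_type
    · have : ∑ j, lam j • w j = 0 := by
        refine Finset.sum_eq_zero fun j _ => by rw [hz j, zero_smul]
      rw [this]
      exact zero_mem_coneGen _
  | succ N ih =>
    intro lam hcard hlam0
    set supp := Finset.univ.filter fun j => lam j ≠ 0 with hsupp
    by_cases hind : LinearIndependent ℝ (fun j : supp => w j)
    · refine ⟨supp, hind, ⟨fun j => lam j, fun j => hlam0 j, ?_⟩⟩
      have h1 : ∑ j, lam j • w j = ∑ j ∈ supp, lam j • w j := by
        refine (Finset.sum_subset (Finset.subset_univ _) ?_).symm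
        intro j _ hj
        have : lam j = 0 := by
          by_contra hj'
          exact hj (Finset.mem_filter.2 ⟨Finset.mem_univ _, hj'⟩)
        rw [this, zero_smul]
      rw [h1, ← Finset.sum_coe_sort supp (fun j => lam j • w j)]
    · obtain ⟨g, hgsum, j₀, hgj₀⟩ := Fintype.not_linearIndependent_iff.1 hind
      -- extend g to κ, with the right sign
      have hmain : ∀ h : κ → ℝ, (∀ j, j ∉ supp → h j = 0) → (∑ j, h j • w j = 0) →
          (∃ j, 0 < h j) →
          ∃ T : Finset κ, LinearIndependent ℝ (fun j : T => w j) ∧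
            (∑ j, lam j • w j) ∈ coneGen (fun j : T => w j) := by
        intro h hsupp0 hsum ⟨jp, hjp⟩
        set Pos := Finset.univ.filter fun j => 0 < h j with hPos
        have hPosne : Pos.Nonempty := ⟨jp, Finset.mem_filter.2 ⟨Finset.mem_univ _, hjp⟩⟩
        set t := Pos.inf' hPosne (fun j => lam j / h j) with htdef
        obtain ⟨js, hjsPos, hjs⟩ := Finset.exists_mem_eq_inf' hPosne (fun j => lam j / h j)
        have hjsh : 0 < h js := (Finset.mem_filter.1 hjsPos).2
        have ht0 : 0 ≤ t := by
          rw [htdef]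
          apply Finset.le_inf'
          intro j hj
          exact div_nonneg (hlam0 j) (le_of_lt (Finset.mem_filter.1 hj).2)
        set lam' : κ → ℝ := fun j => lam j - t * h j with hlam'
        have hlam'0 : ∀ j, 0 ≤ lam' j := by
          intro j
          by_cases hjP : j ∈ Pos
          · have h1 : t ≤ lam j / h j := Finset.inf'_le _ hjP
            have h2 : 0 < h j := (Finset.mem_filter.1 hjP).2
            have := (le_div_iff₀ h2).1 h1
            simp only [hlam']
            linarith
          · have h2 : h j ≤ 0 := by
              by_contra hc
              exact hjP (Finset.mem_filter.2 ⟨Finset.mem_univ _, lt_of_not_ge hc⟩)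
            have : t * h j ≤ 0 := mul_nonpos_of_nonneg_of_nonpos ht0 h2
            have := hlam0 j
            simp only [hlam']
            linarith
        have hsum' : ∑ j, lam' j • w j = ∑ j, lam j • w j := by
          simp only [hlam', sub_smul]
          rw [Finset.sum_sub_distrib]
          have : ∑ j, (t * h j) • w j = t • ∑ j, h j • w j := by
            rw [Finset.smul_sum]
            exact Finset.sum_congr rfl fun j _ => by rw [smul_smul]
          rw [this, hsum, smul_zero, sub_zero]
        have hjs0 : lam' js = 0 := by
          simp only [hlam']
          rw [hjs] at htdef
          rw [htdef]
          field_simp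
          ring
        have hsubs : (Finset.univ.filter fun j => lam' j ≠ 0) ⊆ supp.erase js := by
          intro j hj
          have hj' := (Finset.mem_filter.1 hj).2
          refine Finset.mem_erase.2 ⟨?_, ?_⟩
          · intro hje
            rw [hje] at hj'
            exact hj' hjs0
          · by_contra hjs'
            have h1 : lam j = 0 := by
              by_contra hc
              exact hjs' (Finset.mem_filter.2 ⟨Finset.mem_univ _, hc⟩)
            have h2 : h j = 0 := hsupp0 j hjs'
            apply hj'
            simp only [hlam', h1, h2]
            ring
        have hjssupp : js ∈ supp := by
          by_contra hc
          exact absurd (hsupp0 js hc) (ne_of_gt hjsh)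
        have hcard' : (Finset.univ.filter fun j => lam' j ≠ 0).card ≤ N := by
          have h1 := Finset.card_le_card hsubs
          have h2 : (supp.erase js).card < supp.card := Finset.card_erase_lt_of_mem hjssupp
          omega
        obtain ⟨T, hT1, hT2⟩ := ih lam' hcard' hlam'0
        rw [hsum'] at hT2
        exact ⟨T, hT1, hT2⟩
      set ghat : κ → ℝ := fun j => if h : j ∈ supp then g ⟨j, h⟩ else 0 with hghat
      have hghatsum : ∑ j, ghat j • w j = 0 := by
        have h1 : ∑ j, ghat j • w j = ∑ j ∈ supp, ghat j • w j := by
          refine (Finset.sum_subset (Finset.subset_univ _) ?_).symm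
          intro j _ hj
          simp only [hghat, dif_neg hj, zero_smul]
        rw [h1, ← Finset.sum_coe_sort supp (fun j => ghat j • w j)]
        rw [← hgsum]
        refine Finset.sum_congr rfl fun j _ => ?_
        simp only [hghat, dif_pos j.2]
      have hghat0 : ∀ j, j ∉ supp → ghat j = 0 := fun j hj => by
        simp only [hghat, dif_neg hj]
      rcases lt_or_gt_of_ne hgj₀ with hneg | hpos
      · -- use -ghat
        refine hmain (fun j => -ghat j) (fun j hj => by show -ghat j = 0; rw [hghat0 j hj]; ring) ?_ ?_
        · rw [← neg_zero, ← hghatsum, ← Finset.sum_neg_distrib]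
          exact Finset.sum_congr rfl fun j _ => by rw [neg_smul]
        · refine ⟨j₀, ?_⟩
          have h5 : ghat (j₀ : κ) = g j₀ := by simp only [hghat, dif_pos j₀.2]
          show 0 < -ghat (j₀ : κ)
          rw [h5]
          linarith
      · refine hmain ghat hghat0 hghatsum ⟨j₀, ?_⟩
        have : ghat (j₀ : κ) = g j₀ := by simp only [hghat, dif_pos j₀.2]
        rw [this]
        exact hpos

lemma isClosed_coneGen (w : κ → F) : IsClosed (coneGen w) := by
  classical
  have hrep : coneGen w = ⋃ T : Finset κ,
      {z | (LinearIndependent ℝ (fun j : T => w j)) ∧ z ∈ coneGen (fun j : T => w j)} := by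
    apply Set.Subset.antisymm
    · rintro z ⟨lam, hlam0, rfl⟩
      obtain ⟨T, hT1, hT2⟩ := coneGen_carath_aux w (Finset.univ.filter fun j => lam j ≠ 0).card
        lam le_rfl hlam0
      exact Set.mem_iUnion.2 ⟨T, hT1, hT2⟩
    · rintro z hz
      obtain ⟨T, hT1, lam, hlam0, rfl⟩ := Set.mem_iUnion.1 hz
      refine ⟨fun j => if h : j ∈ T then lam ⟨j, h⟩ else 0, fun j => ?_, ?_⟩
      · by_cases h : j ∈ T
        · simpa [dif_pos h] using hlam0 ⟨j, h⟩
        · simp [dif_neg h]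
      · have h1 : ∑ j, (if h : j ∈ T then lam ⟨j, h⟩ else 0) • w j
            = ∑ j ∈ T, (if h : j ∈ T then lam ⟨j, h⟩ else 0) • w j := by
          refine (Finset.sum_subset (Finset.subset_univ _) ?_).symm
          intro j _ hj
          simp [dif_neg hj]
        rw [h1, ← Finset.sum_coe_sort T]
        refine Finset.sum_congr rfl fun j _ => ?_
        simp [dif_pos j.2]
  rw [hrep]
  refine isClosed_iUnion_of_finite fun T => ?_
  by_cases hT : LinearIndependent ℝ (fun j : T => w j)
  · have heq : {z | (LinearIndependent ℝ (fun j : T => w j)) ∧ z ∈ coneGen (fun j : T => w j)}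
        = (comboMap T w) '' {lam | ∀ j, 0 ≤ lam j} := by
      ext z
      simp only [Set.mem_setOf_eq, hT, true_and, Set.mem_image]
      constructor
      · rintro ⟨lam, hlam0, rfl⟩
        exact ⟨lam, hlam0, rfl⟩
      · rintro ⟨lam, hlam0, rfl⟩
        exact ⟨lam, hlam0, rfl⟩
    rw [heq]
    have hker : LinearMap.ker (comboMap T w) = ⊥ := by
      rw [LinearMap.ker_eq_bot']
      intro lam hlam
      exact funext (Fintype.linearIndependent_iff.1 hT lam hlam)
    have hembed := LinearMap.isClosedEmbedding_of_injective (f := comboMap T w) hker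
    refine hembed.isClosedMap _ ?_
    have : {lam : T → ℝ | ∀ j, 0 ≤ lam j} = ⋂ j, {lam : T → ℝ | 0 ≤ lam j} := by
      ext lam; simp [Set.mem_iInter]
    rw [this]
    exact isClosed_iInter fun j => isClosed_le continuous_const (continuous_apply j)
  · have : {z | (LinearIndependent ℝ (fun j : T => w j)) ∧ z ∈ coneGen (fun j : T => w j)}
        = (∅ : Set F) := by
      ext z; simp [hT]
    rw [this]
    exact isClosed_empty

end Cone

end TropAux

namespace TropAux

/-- Farkas' lemma over `Fin N → ℝ`. -/
lemma farkas {N : ℕ} {κ : Type*} [Fintype κ] (v : κ → (Fin N → ℝ)) (β : κ → ℝ)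
    (H : ∀ lam : κ → ℝ, (∀ j, 0 ≤ lam j) → ∑ j, lam j • v j = 0 →
      ∑ j, lam j * β j ≤ 0) :
    ∃ y : Fin N → ℝ, ∀ j, β j ≤ ∑ k, v j k * y k := by
  classical
  set F := (Fin N → ℝ) × ℝ
  set w : Option κ → F := fun o => o.elim ((0 : Fin N → ℝ), (-1 : ℝ)) (fun j => (v j, β j))
    with hw
  set C := coneGen w with hC
  set p : F := ((0 : Fin N → ℝ), (1 : ℝ)) with hp
  have hpC : p ∉ C := by
    rintro ⟨lam, hlam0, hsum⟩
    have h1 : (p : F).1 = ∑ o, lam o • (w o).1 := by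
      rw [hsum, Prod.fst_sum]
      exact Finset.sum_congr rfl fun o _ => rfl
    have h2 : (p : F).2 = ∑ o, lam o • (w o).2 := by
      rw [hsum, Prod.snd_sum]
      exact Finset.sum_congr rfl fun o _ => rfl
    rw [Fintype.sum_option] at h1 h2
    simp only [hw, Option.elim] at h1 h2
    have h1' : ∑ j, (lam (some j)) • v j = 0 := by
      have : (p : F).1 = lam none • (0 : Fin N → ℝ) + ∑ j, lam (some j) • v j := h1
      simp only [hp, smul_zero, zero_add] at this
      exact this.symm
    have hH := H (fun j => lam (some j)) (fun j => hlam0 _) h1'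
    have h2' : (1 : ℝ) = lam none * (-1) + ∑ j, lam (some j) * β j := by
      simpa [hp, smul_eq_mul] using h2
    have hnone := hlam0 none
    nlinarith
  obtain ⟨f, u, hfC, hfp⟩ :=
    geometric_hahn_banach_closed_point (convex_coneGen w) (isClosed_coneGen w) hpC
  have hu0 : 0 < u := by
    have := hfC 0 (zero_mem_coneGen w)
    simpa using this
  have hfC0 : ∀ z ∈ C, f z ≤ 0 := by
    intro z hz
    by_contra hc
    push_neg at hc
    have ht : 0 ≤ (u + 1) / f z := div_nonneg (by linarith) hc.le
    have := hfC _ (smul_mem_coneGen w hz ht)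
    rw [map_smul] at this
    simp only [smul_eq_mul] at this
    rw [div_mul_cancel₀ _ (ne_of_gt hc)] at this
    linarith
  set r := f p with hr
  have hr0 : 0 < r := lt_trans hu0 hfp
  have hfneg : f ((0 : Fin N → ℝ), (-1 : ℝ)) ≤ 0 := hfC0 _ (gen_mem_coneGen w none)
  -- decompose f
  set φ : (Fin N → ℝ) → ℝ := fun z => f (z, 0) with hφ
  have hdecomp : ∀ z : Fin N → ℝ, ∀ s : ℝ, f (z, s) = φ z + s * r := by
    intro z s
    have h1 : (z, s) = (z, (0 : ℝ)) + ((0 : Fin N → ℝ), s) := by simp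
    have h2 : ((0 : Fin N → ℝ), s) = s • ((0 : Fin N → ℝ), (1 : ℝ)) := by simp
    rw [h1, map_add, h2, map_smul]
    simp only [hφ, smul_eq_mul, hr, hp]
  have hφsum : ∀ z : Fin N → ℝ, φ z = ∑ k, z k * φ (Pi.single k 1) := by
    intro z
    have h1 : (z, (0 : ℝ)) = ∑ k, z k • ((Pi.single k 1 : Fin N → ℝ), (0 : ℝ)) := by
      have h2 : z = ∑ k, z k • (Pi.single k 1 : Fin N → ℝ) := by
        rw [← Finset.univ_sum_single z]
        refine Finset.sum_congr rfl fun k _ => ?_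
        ext k'
        by_cases h : k' = k
        · subst h; simp
        · simp [Pi.single_apply, h, Ne.symm h]
      rw [Prod.ext_iff]
      constructor
      · simpa [Prod.fst_sum] using h2
      · simp [Prod.snd_sum]
    simp only [hφ]
    rw [h1, map_sum]
    refine Finset.sum_congr rfl fun k _ => ?_
    rw [map_smul]
    simp
  refine ⟨fun k => -(φ (Pi.single k 1)) / r, fun j => ?_⟩
  have hj : f ((v j, β j) : F) ≤ 0 := hfC0 _ (gen_mem_coneGen w (some j))
  have : f ((v j, β j) : F) = φ (v j) + β j * r := hdecomp (v j) (β j)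
  rw [this] at hj
  rw [hφsum (v j)] at hj
  show β j ≤ ∑ k, v j k * (-(φ (Pi.single k 1)) / r)
  -- β j ≤ ∑ k, v j k * (-(φ (single k 1)) / r)
  have hterm : ∀ k : Fin N, v j k * (-(φ (Pi.single k 1)) / r)
      = -(v j k * φ (Pi.single k 1)) / r := fun k => by ring
  have hgoal : ∑ k, v j k * (-(φ (Pi.single k 1)) / r)
      = -(∑ k, v j k * φ (Pi.single k 1)) / r := by
    simp only [hterm]
    rw [← Finset.sum_div, Finset.sum_neg_distrib]
  rw [hgoal]
  rw [le_div_iff₀ hr0]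
  linarith

end TropAux

namespace TropAux

variable {n : ℕ}

/-- Convex combinations of exponents representing `I`. -/
def combSet (LΔ : Finset (Fin n → ℤ)) (I : Fin n → ℤ) : Set ((Fin n → ℤ) → ℝ) :=
  {lam | (∀ J, 0 ≤ lam J) ∧ (∀ J ∉ LΔ, lam J = 0) ∧
    (∑ J ∈ LΔ, lam J = 1) ∧ (∑ J ∈ LΔ, lam J • toR J = toR I)}

/-- The concavification of a coefficient vector. -/
noncomputable def concav (LΔ : Finset (Fin n → ℤ)) (c : (Fin n → ℤ) → ℝ) :
    (Fin n → ℤ) → ℝ := fun I =>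
  if I ∈ LΔ then sInf ((fun lam => ∑ J ∈ LΔ, lam J * c J) '' combSet LΔ I) else c I

lemma delta_mem_combSet {LΔ : Finset (Fin n → ℤ)} {I : Fin n → ℤ} (hI : I ∈ LΔ) :
    (fun J => if J = I then (1:ℝ) else 0) ∈ combSet LΔ I := by
  classical
  refine ⟨fun J => by positivity, fun J hJ => ?_, ?_, ?_⟩
  · have : J ≠ I := fun h => hJ (h ▸ hI)
    simp [this]
  · rw [Finset.sum_eq_single I]
    · simp
    · intro J _ hJ; simp [hJ]
    · intro h; exact absurd hI h
  · rw [Finset.sum_eq_single I]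
    · simp
    · intro J _ hJ; simp [hJ]
    · intro h; exact absurd hI h

lemma delta_value {LΔ : Finset (Fin n → ℤ)} {I : Fin n → ℤ} (hI : I ∈ LΔ)
    (c : (Fin n → ℤ) → ℝ) :
    ∑ J ∈ LΔ, (if J = I then (1:ℝ) else 0) * c J = c I := by
  rw [Finset.sum_eq_single I]
  · simp
  · intro J _ hJ; simp [hJ]
  · intro h; exact absurd hI h

lemma combSet_value_lb {LΔ : Finset (Fin n → ℤ)} (hne : LΔ.Nonempty)
    {I : Fin n → ℤ} (c : (Fin n → ℤ) → ℝ) {lam : (Fin n → ℤ) → ℝ}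
    (hlam : lam ∈ combSet LΔ I) :
    LΔ.inf' hne c ≤ ∑ J ∈ LΔ, lam J * c J := by
  obtain ⟨h0, _, h1, _⟩ := hlam
  calc LΔ.inf' hne c = ∑ J ∈ LΔ, lam J * LΔ.inf' hne c := by
        rw [← Finset.sum_mul, h1, one_mul]
    _ ≤ ∑ J ∈ LΔ, lam J * c J := by
        refine Finset.sum_le_sum fun J hJ => ?_
        exact mul_le_mul_of_nonneg_left (Finset.inf'_le c hJ) (h0 J)

lemma concav_bddBelow {LΔ : Finset (Fin n → ℤ)} (hne : LΔ.Nonempty)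
    (c : (Fin n → ℤ) → ℝ) (I : Fin n → ℤ) :
    BddBelow ((fun lam => ∑ J ∈ LΔ, lam J * c J) '' combSet LΔ I) := by
  refine ⟨LΔ.inf' hne c, ?_⟩
  rintro v ⟨lam, hlam, rfl⟩
  exact combSet_value_lb hne c hlam

lemma concav_le {LΔ : Finset (Fin n → ℤ)} (hne : LΔ.Nonempty) (c : (Fin n → ℤ) → ℝ)
    {I : Fin n → ℤ} (hI : I ∈ LΔ) {lam : (Fin n → ℤ) → ℝ} (hlam : lam ∈ combSet LΔ I) :
    concav LΔ c I ≤ ∑ J ∈ LΔ, lam J * c J := by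
  rw [concav, if_pos hI]
  exact csInf_le (concav_bddBelow hne c I) ⟨lam, hlam, rfl⟩

lemma concav_le_self {LΔ : Finset (Fin n → ℤ)} (hne : LΔ.Nonempty) (c : (Fin n → ℤ) → ℝ)
    {I : Fin n → ℤ} (hI : I ∈ LΔ) : concav LΔ c I ≤ c I := by
  have := concav_le hne c hI (delta_mem_combSet hI)
  rwa [delta_value hI c] at this

lemma le_concav {LΔ : Finset (Fin n → ℤ)} (c : (Fin n → ℤ) → ℝ)
    {I : Fin n → ℤ} (hI : I ∈ LΔ) {b : ℝ}
    (hb : ∀ lam ∈ combSet LΔ I, b ≤ ∑ J ∈ LΔ, lam J * c J) :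
    b ≤ concav LΔ c I := by
  rw [concav, if_pos hI]
  refine le_csInf ⟨c I, ⟨_, delta_mem_combSet hI, delta_value hI c⟩⟩ ?_
  rintro v ⟨lam, hlam, rfl⟩
  exact hb lam hlam

lemma isCompact_combSet (LΔ : Finset (Fin n → ℤ)) (I : Fin n → ℤ) :
    IsCompact (combSet LΔ I) := by
  classical
  have hsub : combSet LΔ I ⊆ Set.pi Set.univ
      (fun J => if J ∈ LΔ then Set.Icc (0:ℝ) 1 else {0}) := by
    rintro lam ⟨h0, hz, h1, _⟩ J _
    by_cases hJ : J ∈ LΔ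
    · simp only [if_pos hJ, Set.mem_Icc]
      refine ⟨h0 J, ?_⟩
      have := Finset.single_le_sum (f := fun J => lam J) (fun P _ => h0 P) hJ
      rw [h1] at this
      exact this
    · simp [if_neg hJ, hz J hJ]
  have hK : IsCompact (Set.pi Set.univ
      (fun J => if J ∈ LΔ then Set.Icc (0:ℝ) 1 else ({0} : Set ℝ))) := by
    refine isCompact_univ_pi fun J => ?_
    by_cases hJ : J ∈ LΔ
    · simp only [if_pos hJ]; exact isCompact_Icc
    · simp only [if_neg hJ]; exact isCompact_singleton
  refine IsCompact.of_isClosed_subset hK ?_ hsub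
  have h1 : IsClosed {lam : (Fin n → ℤ) → ℝ | ∀ J, 0 ≤ lam J} := by
    have : {lam : (Fin n → ℤ) → ℝ | ∀ J, 0 ≤ lam J} = ⋂ J, {lam | 0 ≤ lam J} := by
      ext lam; simp [Set.mem_iInter]
    rw [this]
    exact isClosed_iInter fun J => isClosed_le continuous_const (continuous_apply J)
  have h2 : IsClosed {lam : (Fin n → ℤ) → ℝ | ∀ J ∉ LΔ, lam J = 0} := by
    have : {lam : (Fin n → ℤ) → ℝ | ∀ J ∉ LΔ, lam J = 0}
        = ⋂ J, ⋂ (_ : J ∉ LΔ), {lam | lam J = 0} := by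
      ext lam; simp [Set.mem_iInter]
    rw [this]
    exact isClosed_iInter fun J => isClosed_iInter fun _ =>
      isClosed_eq (continuous_apply J) continuous_const
  have h3 : IsClosed {lam : (Fin n → ℤ) → ℝ | ∑ J ∈ LΔ, lam J = 1} :=
    isClosed_eq (by continuity) continuous_const
  have h4 : IsClosed {lam : (Fin n → ℤ) → ℝ | ∑ J ∈ LΔ, lam J • toR J = toR I} := by
    refine isClosed_eq ?_ continuous_const
    refine continuous_finset_sum _ fun J _ => ?_
    exact (continuous_apply J).smul continuous_const
  have : combSet LΔ I = {lam | ∀ J, 0 ≤ lam J} ∩ ({lam | ∀ J ∉ LΔ, lam J = 0}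
      ∩ ({lam | ∑ J ∈ LΔ, lam J = 1} ∩ {lam | ∑ J ∈ LΔ, lam J • toR J = toR I})) := by
    ext lam
    constructor
    · rintro ⟨u1, u2, u3, u4⟩
      exact ⟨u1, u2, u3, u4⟩
    · rintro ⟨u1, u2, u3, u4⟩
      exact ⟨u1, u2, u3, u4⟩
  rw [this]
  exact h1.inter (h2.inter (h3.inter h4))

lemma concav_exists {LΔ : Finset (Fin n → ℤ)} (hne : LΔ.Nonempty) (c : (Fin n → ℤ) → ℝ)
    {I : Fin n → ℤ} (hI : I ∈ LΔ) :
    ∃ lam ∈ combSet LΔ I, concav LΔ c I = ∑ J ∈ LΔ, lam J * c J := by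
  have hcomp := isCompact_combSet LΔ I
  have hnonempty : (combSet LΔ I).Nonempty := ⟨_, delta_mem_combSet hI⟩
  have hcont : ContinuousOn (fun lam : (Fin n → ℤ) → ℝ => ∑ J ∈ LΔ, lam J * c J)
      (combSet LΔ I) := by
    refine Continuous.continuousOn ?_
    refine continuous_finset_sum _ fun J _ => ?_
    exact (continuous_apply J).mul continuous_const
  obtain ⟨lam, hlam, hmin⟩ := hcomp.exists_isMinOn hnonempty hcont
  refine ⟨lam, hlam, ?_⟩
  have h1 := concav_le hne c hI hlam
  have h2 : concav LΔ c I ≥ ∑ J ∈ LΔ, lam J * c J := by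
    refine le_concav c hI fun mu hmu => ?_
    exact hmin hmu
  linarith

lemma concav_self_concave {LΔ : Finset (Fin n → ℤ)} (hne : LΔ.Nonempty)
    (c : (Fin n → ℤ) → ℝ) {I : Fin n → ℤ} (hI : I ∈ LΔ)
    {mu : (Fin n → ℤ) → ℝ} (hmu : mu ∈ combSet LΔ I) :
    concav LΔ c I ≤ ∑ J ∈ LΔ, mu J * concav LΔ c J := by
  classical
  -- choose optimal weights for each J
  have hch : ∀ J, ∃ lam, J ∈ LΔ → (lam ∈ combSet LΔ J ∧
      concav LΔ c J = ∑ P ∈ LΔ, lam P * c P) := by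
    intro J
    by_cases hJ : J ∈ LΔ
    · obtain ⟨lam, h1, h2⟩ := concav_exists hne c hJ
      exact ⟨lam, fun _ => ⟨h1, h2⟩⟩
    · exact ⟨0, fun h => absurd h hJ⟩
  choose lamstar hlamstar using hch
  set ν : (Fin n → ℤ) → ℝ := fun P => ∑ J ∈ LΔ, mu J * lamstar J P with hν
  obtain ⟨hmu0, hmuz, hmu1, hmuc⟩ := hmu
  have hνmem : ν ∈ combSet LΔ I := by
    refine ⟨fun P => ?_, fun P hP => ?_, ?_, ?_⟩
    · refine Finset.sum_nonneg fun J hJ => ?_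
      exact mul_nonneg (hmu0 J) (((hlamstar J hJ).1).1 P)
    · refine Finset.sum_eq_zero fun J hJ => ?_
      rw [((hlamstar J hJ).1).2.1 P hP, mul_zero]
    · rw [Finset.sum_comm]
      calc ∑ J ∈ LΔ, ∑ P ∈ LΔ, mu J * lamstar J P
          = ∑ J ∈ LΔ, mu J * ∑ P ∈ LΔ, lamstar J P := by
            refine Finset.sum_congr rfl fun J hJ => ?_
            rw [Finset.mul_sum]
        _ = ∑ J ∈ LΔ, mu J * 1 := by
            refine Finset.sum_congr rfl fun J hJ => ?_
            rw [((hlamstar J hJ).1).2.2.1]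
        _ = 1 := by simp [hmu1]
    · have : ∀ P ∈ LΔ, ν P • toR P = ∑ J ∈ LΔ, (mu J * lamstar J P) • toR P := by
        intro P _
        simp only [hν]
        exact Finset.sum_smul
      rw [Finset.sum_congr rfl this, Finset.sum_comm]
      calc ∑ J ∈ LΔ, ∑ P ∈ LΔ, (mu J * lamstar J P) • toR P
          = ∑ J ∈ LΔ, mu J • ∑ P ∈ LΔ, lamstar J P • toR P := by
            refine Finset.sum_congr rfl fun J hJ => ?_
            rw [Finset.smul_sum]
            exact Finset.sum_congr rfl fun P _ => by rw [smul_smul]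
        _ = ∑ J ∈ LΔ, mu J • toR J := by
            refine Finset.sum_congr rfl fun J hJ => ?_
            rw [((hlamstar J hJ).1).2.2.2]
        _ = toR I := hmuc
  calc concav LΔ c I ≤ ∑ P ∈ LΔ, ν P * c P := concav_le hne c hI hνmem
    _ = ∑ P ∈ LΔ, ∑ J ∈ LΔ, (mu J * lamstar J P) * c P := by
        refine Finset.sum_congr rfl fun P _ => ?_
        simp only [hν]
        rw [Finset.sum_mul]
    _ = ∑ J ∈ LΔ, ∑ P ∈ LΔ, (mu J * lamstar J P) * c P := Finset.sum_comm
    _ = ∑ J ∈ LΔ, mu J * concav LΔ c J := by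
        refine Finset.sum_congr rfl fun J hJ => ?_
        rw [(hlamstar J hJ).2, Finset.mul_sum]
        exact Finset.sum_congr rfl fun P _ => by ring

end TropAux

namespace TropAux

variable {n : ℕ}

lemma sum_subtype_expr {α M : Type*} [AddCommMonoid M] (s : Finset α) (F : α → M)
    (g : {x // x ∈ s} → M) (hFg : ∀ j : {x // x ∈ s}, F (j : α) = g j) :
    ∑ J ∈ s, F J = ∑ j : {x // x ∈ s}, g j := by
  rw [← Finset.sum_coe_sort s F]
  exact Finset.sum_congr rfl fun j _ => hFg j

lemma concav_saturated {LΔ : Finset (Fin n → ℤ)} (hne : LΔ.Nonempty)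
    (c : (Fin n → ℤ) → ℝ) : Saturated LΔ (concav LΔ c) := by
  classical
  intro I hI
  set β : {J // J ∈ LΔ} → ℝ :=
    fun j => concav LΔ c I - concav LΔ c (j : Fin n → ℤ) with hβ
  have H : ∀ lam : {J // J ∈ LΔ} → ℝ, (∀ j, 0 ≤ lam j) →
      ∑ j, lam j • (toR (j : Fin n → ℤ) - toR I) = 0 →
      ∑ j, lam j * β j ≤ 0 := by
    intro lam hlam0 hsum
    set s := ∑ j, lam j with hs
    have hs0 : 0 ≤ s := Finset.sum_nonneg fun j _ => hlam0 j
    rcases eq_or_lt_of_le hs0 with hs0' | hspos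
    · have hz : ∀ j, lam j = 0 := by
        intro j
        exact (Finset.sum_eq_zero_iff_of_nonneg fun j _ => hlam0 j).1 hs0'.symm j
          (Finset.mem_univ j)
      exact le_of_eq (Finset.sum_eq_zero fun j _ => by rw [hz j, zero_mul])
    · set mu : (Fin n → ℤ) → ℝ := fun J => if h : J ∈ LΔ then lam ⟨J, h⟩ / s else 0
        with hmu
      have hsne : s ≠ 0 := ne_of_gt hspos
      have hcomb : ∑ j, lam j • toR (j : Fin n → ℤ) = s • toR I := by
        have h1 : ∑ j, lam j • (toR (j : Fin n → ℤ) - toR I)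
            = ∑ j, lam j • toR (j : Fin n → ℤ) - ∑ j, lam j • toR I := by
          rw [← Finset.sum_sub_distrib]
          exact Finset.sum_congr rfl fun j _ => by rw [smul_sub]
        have h2 : ∑ j, lam j • toR I = s • toR I := by
          rw [hs]
          exact (Finset.sum_smul).symm
        rw [h1, h2] at hsum
        exact sub_eq_zero.1 hsum
      have hmumem : mu ∈ combSet LΔ I := by
        refine ⟨fun J => ?_, fun J hJ => by simp only [hmu, dif_neg hJ], ?_, ?_⟩
        · by_cases hJ : J ∈ LΔ
          · simp only [hmu, dif_pos hJ]
            exact div_nonneg (hlam0 _) hs0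
          · simp only [hmu, dif_neg hJ]
            exact le_refl 0
        · have h3 : ∑ J ∈ LΔ, mu J = ∑ j : {J // J ∈ LΔ}, lam j / s := by
            refine sum_subtype_expr LΔ _ _ fun j => ?_
            simp only [hmu, dif_pos j.2, Subtype.coe_eta]
          rw [h3, ← Finset.sum_div, ← hs, div_self hsne]
        · have h3 : ∑ J ∈ LΔ, mu J • toR J
              = ∑ j : {J // J ∈ LΔ}, (lam j / s) • toR (j : Fin n → ℤ) := by
            refine sum_subtype_expr LΔ _ _ fun j => ?_
            simp only [hmu, dif_pos j.2, Subtype.coe_eta]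
          rw [h3]
          have h4 : ∑ j : {J // J ∈ LΔ}, (lam j / s) • toR (j : Fin n → ℤ)
              = (1/s) • ∑ j, lam j • toR (j : Fin n → ℤ) := by
            rw [Finset.smul_sum]
            refine Finset.sum_congr rfl fun j _ => ?_
            rw [smul_smul]
            congr 1
            field_simp
          rw [h4, hcomb, smul_smul]
          rw [one_div, inv_mul_cancel₀ hsne, one_smul]
      have hcc := concav_self_concave hne c hI hmumem
      have hsum2 : ∑ J ∈ LΔ, mu J * concav LΔ c J
          = ∑ j : {J // J ∈ LΔ}, (lam j / s) * concav LΔ c (j : Fin n → ℤ) := by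
        refine sum_subtype_expr LΔ _ _ fun j => ?_
        simp only [hmu, dif_pos j.2, Subtype.coe_eta]
      rw [hsum2] at hcc
      have hβexp : ∑ j, lam j * β j
          = s * concav LΔ c I - ∑ j, lam j * concav LΔ c (j : Fin n → ℤ) := by
        calc ∑ j, lam j * β j
            = ∑ j : {J // J ∈ LΔ}, (lam j * concav LΔ c I
                - lam j * concav LΔ c (j : Fin n → ℤ)) := by
              refine Finset.sum_congr rfl fun j _ => ?_
              simp only [hβ]
              ring
          _ = (∑ j : {J // J ∈ LΔ}, lam j * concav LΔ c I)
                - ∑ j, lam j * concav LΔ c (j : Fin n → ℤ) := Finset.sum_sub_distrib _ _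
          _ = s * concav LΔ c I - ∑ j, lam j * concav LΔ c (j : Fin n → ℤ) := by
              rw [← Finset.sum_mul, ← hs]
      have hXeq : ∑ j, lam j * concav LΔ c (j : Fin n → ℤ)
          = s * ∑ j : {J // J ∈ LΔ}, (lam j / s) * concav LΔ c (j : Fin n → ℤ) := by
        rw [Finset.mul_sum]
        refine Finset.sum_congr rfl fun j _ => ?_
        field_simp
      rw [hβexp, hXeq]
      nlinarith [hcc, hspos]
  obtain ⟨y, hy⟩ := farkas (fun j : {J // J ∈ LΔ} => toR (j : Fin n → ℤ) - toR I) β H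
  refine ⟨y, mem_Bset.2 ⟨hI, fun J hJ => ?_⟩⟩
  have h1 := hy ⟨J, hJ⟩
  have h2 : ∑ k, (toR J - toR I) k * y k = dotIR J y - dotIR I y := by
    rw [dotIR, dotIR, ← Finset.sum_sub_distrib]
    refine Finset.sum_congr rfl fun k _ => ?_
    simp only [Pi.sub_apply, toR]
    ring
  rw [h2] at h1
  simp only [hβ] at h1
  linarith

lemma Bset_concav_mono {LΔ : Finset (Fin n → ℤ)} (hne : LΔ.Nonempty)
    (c : (Fin n → ℤ) → ℝ) (x : Fin n → ℝ) :
    Bset LΔ c x ⊆ Bset LΔ (concav LΔ c) x := by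
  intro I hI
  have hI' := mem_Bset.1 hI
  refine mem_Bset.2 ⟨hI'.1, fun J hJ => ?_⟩
  have hcI : concav LΔ c I ≤ c I := concav_le_self hne c hI'.1
  obtain ⟨lam, hlammem, heq⟩ := concav_exists hne c hJ
  obtain ⟨hlam0, hlamz, hlam1, hlamc⟩ := hlammem
  have hdot : ∑ P ∈ LΔ, lam P * dotIR P x = dotIR J x := dot_of_comb lam J hlamc x
  have hlb : c I + dotIR I x ≤ concav LΔ c J + dotIR J x := by
    have h1 : concav LΔ c J + dotIR J x = ∑ P ∈ LΔ, lam P * (c P + dotIR P x) := by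
      rw [heq, ← hdot, ← Finset.sum_add_distrib]
      exact Finset.sum_congr rfl fun P _ => by ring
    have h2 : ∑ P ∈ LΔ, lam P * (c P + dotIR P x)
        ≥ ∑ P ∈ LΔ, lam P * (c I + dotIR I x) := by
      refine Finset.sum_le_sum fun P hP => ?_
      exact mul_le_mul_of_nonneg_left (hI'.2 P hP) (hlam0 P)
    have h3 : ∑ P ∈ LΔ, lam P * (c I + dotIR I x) = c I + dotIR I x := by
      rw [← Finset.sum_mul, hlam1, one_mul]
    rw [h1]
    rw [h3] at h2
    exact h2
  linarith

end TropAux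

namespace TropAux

variable {n : ℕ}

lemma exists_gap {LΔ : Finset (Fin n → ℤ)} (hLne : LΔ.Nonempty) (a : (Fin n → ℤ) → ℝ)
    (y : Fin n → ℝ) :
    ∃ g : ℝ, 0 < g ∧ ∀ J ∈ LΔ, J ∉ Bset LΔ a y →
      ∀ P ∈ Bset LΔ a y, a P + dotIR P y + g ≤ a J + dotIR J y := by
  classical
  obtain ⟨J₁, hJ₁⟩ := Bset_nonempty a y hLne
  by_cases h : (LΔ \ Bset LΔ a y).Nonempty
  · refine ⟨((LΔ \ Bset LΔ a y).inf' h fun J => a J + dotIR J y)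
      - (a J₁ + dotIR J₁ y), ?_, ?_⟩
    · obtain ⟨P₂, hP₂mem, hP₂⟩ := Finset.exists_mem_eq_inf' h (fun J => a J + dotIR J y)
      have hP₂' := Finset.mem_sdiff.1 hP₂mem
      have hlb : a J₁ + dotIR J₁ y ≤ a P₂ + dotIR P₂ y := (mem_Bset.1 hJ₁).2 P₂ hP₂'.1
      have hne' : a P₂ + dotIR P₂ y ≠ a J₁ + dotIR J₁ y := by
        intro he
        refine hP₂'.2 (mem_Bset.2 ⟨hP₂'.1, fun Q hQ => ?_⟩)
        rw [he]
        exact (mem_Bset.1 hJ₁).2 Q hQ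
      rw [hP₂]
      have := lt_of_le_of_ne hlb (Ne.symm hne')
      linarith
    · intro J hJ hJB P hP
      have h1 : ((LΔ \ Bset LΔ a y).inf' h fun J => a J + dotIR J y) ≤ a J + dotIR J y :=
        Finset.inf'_le _ (Finset.mem_sdiff.2 ⟨hJ, hJB⟩)
      have h2 : a P + dotIR P y = a J₁ + dotIR J₁ y := Bset_val_eq hP hJ₁
      linarith
  · refine ⟨1, one_pos, fun J hJ hJB _ _ => ?_⟩
    exact absurd ⟨J, Finset.mem_sdiff.2 ⟨hJ, hJB⟩⟩ h

lemma nonunique_of_deformable {n K : ℕ}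
    (Δ : Set (Fin n → ℝ)) (LΔ : Finset (Fin n → ℤ)) (a : (Fin n → ℤ) → ℝ)
    (hLΔ : ∀ I : Fin n → ℤ, I ∈ LΔ ↔ toR I ∈ Δ)
    (hsat : Saturated LΔ a)
    (x : Fin K → Fin n → ℝ) (m : Fin K → ℕ)
    (hmult : ∀ i, m i + 1 ≤ (Bset LΔ a (x i)).card)
    (μ : Set (Fin n → ℝ) → ℤ)
    (hμ₁ : ∀ i, μ (dualCell LΔ a (x i)) = m i)
    (L : Set (Fin n → ℝ)) (hdef : Deformable Δ (dualComplex LΔ a) μ L) :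
    ∃ a' : (Fin n → ℤ) → ℝ, Saturated LΔ a' ∧
      (∀ i, m i + 1 ≤ (Bset LΔ a' (x i)).card) ∧
      ¬ ∃ c : ℝ, ∀ I ∈ LΔ, a' I = a I + c := by
  classical
  obtain ⟨hLne', hLsub, hLvert, hLcond⟩ := hdef
  -- a lattice exponent in L
  have hrep : ∀ z ∈ L, ∃ I : Fin n → ℤ, I ∈ LΔ ∧ toR I = z := by
    intro z hz
    obtain ⟨hzΔ, hzlat⟩ := hLsub hz
    refine ⟨fun k => Classical.choose (hzlat k), ?_, ?_⟩
    · refine (hLΔ _).2 ?_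
      have : toR (fun k => Classical.choose (hzlat k)) = z :=
        funext fun k => (Classical.choose_spec (hzlat k)).symm
      rw [this]
      exact hzΔ
    · exact funext fun k => (Classical.choose_spec (hzlat k)).symm
  obtain ⟨z₁, hz₁⟩ := hLne'
  obtain ⟨I₁, hI₁LΔ, hI₁z⟩ := hrep z₁ hz₁
  have hLne : LΔ.Nonempty := ⟨I₁, hI₁LΔ⟩
  set Λf : Finset (Fin n → ℤ) := LΔ.filter (fun I => toR I ∈ L) with hΛf
  have hI₁Λ : I₁ ∈ Λf := Finset.mem_filter.2 ⟨hI₁LΔ, by rw [hI₁z]; exact hz₁⟩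
  -- vertex outside L
  obtain ⟨v, hvvert, hvL⟩ := Set.not_subset.1 hLvert
  obtain ⟨y₀, hy₀⟩ := hvvert
  have hB₀ne : (Bset LΔ a y₀).Nonempty := by
    rcases Finset.eq_empty_or_nonempty (Bset LΔ a y₀) with h | h
    · exfalso
      rw [dualCell, h] at hy₀
      simp at hy₀
    · exact h
  have hB₀v : ∀ J ∈ Bset LΔ a y₀, toR J = v := by
    intro J hJ
    have : toR J ∈ dualCell LΔ a y₀ :=
      subset_convexHull ℝ _ ⟨J, Finset.mem_coe.2 hJ, rfl⟩
    rw [← hy₀] at this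
    exact this.symm ▸ rfl
  obtain ⟨J₀, hJ₀⟩ := hB₀ne
  have hJ₀v : toR J₀ = v := hB₀v J₀ hJ₀
  have hB₀ : Bset LΔ a y₀ = {J₀} := by
    refine Finset.eq_singleton_iff_unique_mem.2 ⟨hJ₀, fun J hJ => ?_⟩
    exact toR_injective (by rw [hB₀v J hJ, hJ₀v])
  have hJ₀LΔ : J₀ ∈ LΔ := (mem_Bset.1 hJ₀).1
  have hJ₀Λ : J₀ ∉ Λf := by
    intro hc
    exact hvL (hJ₀v ▸ (Finset.mem_filter.1 hc).2)
  -- gaps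
  have hgaps : ∀ i : Fin K, ∃ g : ℝ, 0 < g ∧ ∀ J ∈ LΔ, J ∉ Bset LΔ a (x i) →
      ∀ P ∈ Bset LΔ a (x i), a P + dotIR P (x i) + g ≤ a J + dotIR J (x i) :=
    fun i => exists_gap hLne a (x i)
  choose gi hgi0 hgi using hgaps
  obtain ⟨g₀, hg₀0, hg₀⟩ := exists_gap hLne a y₀
  set Gset : Finset ℝ := insert g₀ (Finset.univ.image gi) with hGset
  have hGne : Gset.Nonempty := ⟨g₀, Finset.mem_insert_self _ _⟩
  have hGpos : ∀ g ∈ Gset, 0 < g := by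
    intro g hg
    rcases Finset.mem_insert.1 hg with h | h
    · rw [h]; exact hg₀0
    · obtain ⟨i, _, rfl⟩ := Finset.mem_image.1 h
      exact hgi0 i
  set t : ℝ := Gset.min' hGne / 2 with ht
  have htpos : 0 < t := by
    have := hGpos _ (Gset.min'_mem hGne)
    rw [ht]
    linarith
  have htlt : ∀ g ∈ Gset, t < g := by
    intro g hg
    have h1 := Finset.min'_le Gset g hg
    have h2 := hGpos _ (Gset.min'_mem hGne)
    rw [ht]
    linarith
  have htltg₀ : t < g₀ := htlt g₀ (Finset.mem_insert_self _ _)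
  have htltgi : ∀ i, t < gi i := fun i =>
    htlt (gi i) (Finset.mem_insert.2 (Or.inr (Finset.mem_image.2 ⟨i, Finset.mem_univ _, rfl⟩)))
  -- the perturbed coefficients
  set c : (Fin n → ℤ) → ℝ := fun I => if I ∈ Λf then a I - t else a I with hc
  have hcle : ∀ I, c I ≤ a I := by
    intro I
    simp only [hc]
    split_ifs
    · linarith
    · exact le_refl _
  have hcge : ∀ I, a I - t ≤ c I := by
    intro I
    simp only [hc]
    split_ifs
    · exact le_refl _
    · linarith
  set a' : (Fin n → ℤ) → ℝ := concav LΔ c with ha'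
  refine ⟨a', concav_saturated hLne c, ?_, ?_⟩
  · -- multiplicities
    intro i
    set Bi := Bset LΔ a (x i) with hBi
    have hsubc : Bset LΔ c (x i) ⊆ Bset LΔ a' (x i) := Bset_concav_mono hLne c (x i)
    by_cases hBiΛ : (Bi ∩ Λf).Nonempty
    · -- L meets the cell: many points of the cell lie in L
      have hsub2 : Bi ∩ Λf ⊆ Bset LΔ c (x i) := by
        intro J hJ
        have hJB := (Finset.mem_inter.1 hJ).1
        have hJΛ := (Finset.mem_inter.1 hJ).2
        have hJLΔ := (mem_Bset.1 hJB).1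
        refine mem_Bset.2 ⟨hJLΔ, fun Q hQ => ?_⟩
        have hcJ : c J = a J - t := by simp only [hc, if_pos hJΛ]
        by_cases hQB : Q ∈ Bi
        · have hval : a Q + dotIR Q (x i) = a J + dotIR J (x i) := Bset_val_eq hQB hJB
          have := hcge Q
          rw [hcJ]
          linarith
        · have hgap := hgi i Q hQ hQB J hJB
          have := hcge Q
          have := hgi0 i
          rw [hcJ]
          linarith
      -- count: the deformability condition
      have hPcond := hLcond (dualCell LΔ a (x i)) ⟨x i, rfl⟩
      have hPL : dualCell LΔ a (x i) ∩ L ⊆ toR '' ((Bi ∩ Λf : Finset (Fin n → ℤ)) : Set (Fin n → ℤ)) := by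
        rintro z ⟨hzP, hzL⟩
        obtain ⟨I, hILΔ, rfl⟩ := hrep z hzL
        have hIB : I ∈ Bi := latticePoint_of_dualCell hsat hILΔ hzP
        exact ⟨I, Finset.mem_coe.2 (Finset.mem_inter.2 ⟨hIB,
          Finset.mem_filter.2 ⟨hILΔ, hzL⟩⟩), rfl⟩
      have hPLne : (dualCell LΔ a (x i) ∩ L).Nonempty := by
        obtain ⟨J, hJ⟩ := hBiΛ
        refine ⟨toR J, ?_, ?_⟩
        · exact subset_convexHull ℝ _ ⟨J, Finset.mem_coe.2 (Finset.mem_inter.1 hJ).1, rfl⟩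
        · exact (Finset.mem_filter.1 (Finset.mem_inter.1 hJ).2).2
      rcases hPcond with h | h
      · rw [Set.eq_empty_iff_forall_notMem] at h
        obtain ⟨z, hz⟩ := hPLne
        exact absurd hz (h z)
      · have hfin : (toR '' ((Bi ∩ Λf : Finset (Fin n → ℤ)) : Set (Fin n → ℤ))).Finite :=
          ((Bi ∩ Λf).finite_toSet).image toR
        have h1 := Set.ncard_le_ncard hPL hfin
        have h2 : (toR '' ((Bi ∩ Λf : Finset (Fin n → ℤ)) : Set (Fin n → ℤ))).ncard
            = (Bi ∩ Λf).card := by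
          rw [Set.ncard_image_of_injective _ toR_injective, Set.ncard_coe_finset]
        rw [hμ₁ i] at h
        have h3 : (m i : ℤ) + 1 ≤ ((Bi ∩ Λf).card : ℤ) := by
          calc (m i : ℤ) + 1 ≤ ((dualCell LΔ a (x i) ∩ L).ncard : ℤ) := h
            _ ≤ ((Bi ∩ Λf).card : ℤ) := by
                rw [← h2]
                exact_mod_cast h1
        have h4 : m i + 1 ≤ (Bi ∩ Λf).card := by exact_mod_cast h3
        calc m i + 1 ≤ (Bi ∩ Λf).card := h4
          _ ≤ (Bset LΔ c (x i)).card := Finset.card_le_card hsub2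
          _ ≤ (Bset LΔ a' (x i)).card := Finset.card_le_card hsubc
    · -- L misses the cell: nothing changes there
      have hsub2 : Bi ⊆ Bset LΔ c (x i) := by
        intro J hJB
        have hJLΔ := (mem_Bset.1 hJB).1
        have hJΛ : J ∉ Λf := fun hc' => hBiΛ ⟨J, Finset.mem_inter.2 ⟨hJB, hc'⟩⟩
        have hcJ : c J = a J := by simp only [hc, if_neg hJΛ]
        refine mem_Bset.2 ⟨hJLΔ, fun Q hQ => ?_⟩
        by_cases hQB : Q ∈ Bi
        · have hval : a Q + dotIR Q (x i) = a J + dotIR J (x i) := Bset_val_eq hQB hJB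
          have hQΛ : Q ∉ Λf := fun hc' => hBiΛ ⟨Q, Finset.mem_inter.2 ⟨hQB, hc'⟩⟩
          have hcQ : c Q = a Q := by simp only [hc, if_neg hQΛ]
          rw [hcJ, hcQ]
          linarith
        · have hgap := hgi i Q hQ hQB J hJB
          have := hcge Q
          have := htltgi i
          rw [hcJ]
          linarith
      calc m i + 1 ≤ Bi.card := hmult i
        _ ≤ (Bset LΔ c (x i)).card := Finset.card_le_card hsub2
        _ ≤ (Bset LΔ a' (x i)).card := Finset.card_le_card hsubc
  · -- nonconstancy
    rintro ⟨c₀, hc₀⟩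
    -- a' J₀ = a J₀
    have hval₀ : ∀ P ∈ LΔ, a J₀ + dotIR J₀ y₀ ≤ c P + dotIR P y₀ := by
      intro P hP
      by_cases hPJ : P = J₀
      · subst hPJ
        have : c P = a P := by
          simp only [hc, if_neg hJ₀Λ]
        rw [this]
      · have hPB : P ∉ Bset LΔ a y₀ := by
          rw [hB₀]
          simp [hPJ]
        have hgap := hg₀ P hP hPB J₀ hJ₀
        have := hcge P
        linarith
    have ha'J₀ : a' J₀ = a J₀ := by
      refine le_antisymm ?_ ?_
      · have h1 := concav_le_self hLne c hJ₀LΔ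
        have h2 : c J₀ = a J₀ := by simp only [hc, if_neg hJ₀Λ]
        rw [ha', ← h2]
        exact h1
      · rw [ha']
        refine le_concav c hJ₀LΔ fun lam hlam => ?_
        obtain ⟨hlam0, hlamz, hlam1, hlamc⟩ := hlam
        have hdot : ∑ P ∈ LΔ, lam P * dotIR P y₀ = dotIR J₀ y₀ := dot_of_comb lam J₀ hlamc y₀
        have h1 : ∑ P ∈ LΔ, lam P * (c P + dotIR P y₀)
            ≥ ∑ P ∈ LΔ, lam P * (a J₀ + dotIR J₀ y₀) := by
          refine Finset.sum_le_sum fun P hP => ?_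
          exact mul_le_mul_of_nonneg_left (hval₀ P hP) (hlam0 P)
        have h2 : ∑ P ∈ LΔ, lam P * (a J₀ + dotIR J₀ y₀) = a J₀ + dotIR J₀ y₀ := by
          rw [← Finset.sum_mul, hlam1, one_mul]
        have h3 : ∑ P ∈ LΔ, lam P * (c P + dotIR P y₀)
            = ∑ P ∈ LΔ, lam P * c P + dotIR J₀ y₀ := by
          rw [← hdot, ← Finset.sum_add_distrib]
          exact Finset.sum_congr rfl fun P _ => by ring
        rw [h3, h2] at h1
        linarith
    have hc₀0 : c₀ = 0 := by
      have := hc₀ J₀ hJ₀LΔ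
      rw [ha'J₀] at this
      linarith
    -- contradiction at I₁
    have h1 : a' I₁ ≤ a I₁ - t := by
      have h2 := concav_le_self hLne c hI₁LΔ
      have h3 : c I₁ = a I₁ - t := by simp only [hc, if_pos hI₁Λ]
      rw [ha', ← h3]
      exact h2
    have h4 := hc₀ I₁ hI₁LΔ
    rw [hc₀0, add_zero] at h4
    rw [h4] at h1
    linarith

end TropAux

/-- Points with multiplicities on a tropical hypersurface determine it uniquely iff the
induced weighting of the dual complex is rigid. -/
theorem unique_hypersurface_iff_rigid {n K : ℕ}
    (Δ : Set (Fin n → ℝ)) (LΔ : Finset (Fin n → ℤ)) (a : (Fin n → ℤ) → ℝ)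
    (hΔ : IsLatticePolytope Δ)
    (hLΔ : ∀ I : Fin n → ℤ, I ∈ LΔ ↔ toR I ∈ Δ)
    (hsat : Saturated LΔ a)
    (x : Fin K → Fin n → ℝ) (m : Fin K → ℕ) (hm : ∀ i, 1 ≤ m i)
    (hmult : ∀ i, m i + 1 ≤ (Bset LΔ a (x i)).card)
    (hdistinct : ∀ i j, i ≠ j → Bset LΔ a (x i) ≠ Bset LΔ a (x j))
    (μ : Set (Fin n → ℝ) → ℤ)
    (hμ₁ : ∀ i, μ (dualCell LΔ a (x i)) = m i)
    (hμ₀ : ∀ P ∈ dualComplex LΔ a, (∀ i, P ≠ dualCell LΔ a (x i)) → μ P = 0) :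
    ((∀ a' : (Fin n → ℤ) → ℝ, Saturated LΔ a' →
        (∀ i, m i + 1 ≤ (Bset LΔ a' (x i)).card) →
        ∃ c : ℝ, ∀ I ∈ LΔ, a' I = a I + c) ↔
      Rigid Δ (dualComplex LΔ a) μ) := by
  constructor
  · intro hU
    rintro ⟨L, hdef⟩
    obtain ⟨a', hsat', hmult', hnc⟩ :=
      TropAux.nonunique_of_deformable Δ LΔ a hLΔ hsat x m hmult μ hμ₁ L hdef
    exact hnc (hU a' hsat' hmult')
  · intro hR a' hsat' hmult'
    by_contra hnc
    exact hR (TropAux.deformable_of_nonunique Δ LΔ a hLΔ hsat x m μ hμ₁ hμ₀ a' hsat'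
      hmult' hnc)
end

section
/- Let a be a saturated tropical polynomial in two variables with support a lattice polygon Δ ⊂ ℝ² whose dual complex 𝒫_a is lattice simplicial (every 2-dimensional member contains exactly 3 lattice points). Let x_1, …, x_K be points of V(a), each lying in the relative interior of a 1-dimensional polyhedron (edge) of V(a), with no two x_i on the same edge. Let Γ be the graph with vertex set L(Δ) whose edges are the 1-dimensional members conv(B(x_i)) of 𝒫_a for i = 1, …, K. Then every saturated tropical polynomial a' with support Δ such that x_i ∈ V(a') for all i satisfies a' = a + c·(1, …, 1) for some c ∈ ℝ if and only if Γ is connected. -/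
open Set
open scoped Classical

/-- The dimension of a polytope: the rank of its direction space. -/
noncomputable def polyDim {n : ℕ} (P : Set (Fin n → ℝ)) : ℕ :=
  Module.finrank ℝ (vectorSpan ℝ P)

lemma toR_injective {n : ℕ} : Function.Injective (toR (n := n)) := by
  intro I J h
  funext k
  have h2 := congrFun h k
  simp only [toR] at h2
  exact_mod_cast h2

lemma dotIR_add_smul {n : ℕ} (J : Fin n → ℤ) (x w : Fin n → ℝ) (t : ℝ) :
    dotIR J (x + t • w) = dotIR J x + t * dotIR J w := by
  simp [dotIR, Pi.add_apply, Pi.smul_apply, smul_eq_mul, mul_add, Finset.sum_add_distrib,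
    Finset.mul_sum, mul_left_comm]

lemma exists_pos_functional {V : Type*} [AddCommGroup V] [Module ℝ V]
    {ι : Type*} [Fintype ι] {v : ι → V} (hv : LinearIndependent ℝ v) :
    ∃ φ : V →ₗ[ℝ] ℝ, ∀ j, φ (v j) = 1 := by
  classical
  have hr : LinearIndepOn ℝ id (Set.range v) := hv.linearIndepOn_id
  have hmem : ∀ j : ι, v j ∈ hr.extend (Set.subset_univ _) :=
    fun j => hr.subset_extend _ ⟨j, rfl⟩
  refine ⟨∑ j : ι, (Module.Basis.extend hr).coord ⟨v j, hmem j⟩, fun j => ?_⟩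
  have hval : ∀ j j' : ι,
      (Module.Basis.extend hr).coord ⟨v j', hmem j'⟩ (v j) = if j' = j then 1 else 0 := by
    intro j j'
    have hbj : v j = Module.Basis.extend hr ⟨v j, hmem j⟩ :=
      (Module.Basis.extend_apply_self hr ⟨v j, hmem j⟩).symm
    rw [hbj, Module.Basis.coord_apply, Module.Basis.repr_self, Finsupp.single_apply]
    by_cases h : j' = j
    · subst h; simp
    · rw [if_neg h, if_neg]
      intro hc
      exact h (hv.injective (by simpa [Subtype.ext_iff] using hc.symm))
  simp only [LinearMap.coe_sum, Finset.sum_apply]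
  simp [hval]

lemma lin_functional_eq_dot {n : ℕ} (φ : (Fin n → ℝ) →ₗ[ℝ] ℝ) (v : Fin n → ℝ) :
    φ v = ∑ k, v k * φ (Pi.single k (1:ℝ)) := by
  have hv : v = ∑ k, v k • (Pi.single k (1:ℝ) : Fin n → ℝ) := by
    have := pi_eq_sum_univ v
    convert this using 2 with k
    funext j
    by_cases h : j = k
    · subst h; simp
    · simp [Pi.single_apply, h, Ne.symm h]
  conv_lhs => rw [hv, map_sum]
  simp [smul_eq_mul]

noncomputable def posmin {α : Type*} (s : Finset α) (f : α → ℝ) : ℝ :=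
  (insert (1:ℝ) (s.image f)).min' (Finset.insert_nonempty _ _)

lemma posmin_pos {α : Type*} {s : Finset α} {f : α → ℝ} (h : ∀ j ∈ s, 0 < f j) :
    0 < posmin s f := by
  rw [posmin, Finset.lt_min'_iff]
  intro y hy
  rcases Finset.mem_insert.1 hy with rfl | hy
  · norm_num
  · obtain ⟨j, hj, rfl⟩ := Finset.mem_image.1 hy
    exact h j hj

lemma posmin_le {α : Type*} {s : Finset α} {f : α → ℝ} {j : α} (h : j ∈ s) :
    posmin s f ≤ f j :=
  Finset.min'_le _ _ (Finset.mem_insert.2 (Or.inr (Finset.mem_image.2 ⟨j, h, rfl⟩)))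

lemma bset_affineIndependent {LΔ : Finset (Fin 2 → ℤ)} {a : (Fin 2 → ℤ) → ℝ}
    (hsimp : ∀ P ∈ dualComplex LΔ a, (latticePts P).ncard = polyDim P + 1)
    (x₀ : Fin 2 → ℝ) (hne : (Bset LΔ a x₀).Nonempty) :
    AffineIndependent ℝ (fun J : ↥(Bset LΔ a x₀) => toR (J : Fin 2 → ℤ)) := by
  classical
  set B := Bset LΔ a x₀ with hB
  set P := dualCell LΔ a x₀ with hP
  have hPmem : P ∈ dualComplex LΔ a := ⟨x₀, rfl⟩
  have hcount := hsimp P hPmem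
  have hfin : (latticePts P).Finite := by
    by_contra h
    rw [Set.Infinite.ncard h] at hcount
    omega
  have hsub : toR '' (B : Set (Fin 2 → ℤ)) ⊆ latticePts P := by
    rintro y ⟨J, hJ, rfl⟩
    exact ⟨subset_convexHull ℝ _ ⟨J, hJ, rfl⟩, fun k => ⟨J k, rfl⟩⟩
  have hrange : Set.range (fun J : ↥B => toR (J : Fin 2 → ℤ)) = toR '' (B : Set (Fin 2 → ℤ)) := by
    ext y
    simp [Set.mem_image]
  have hcard_im : (toR '' (B : Set (Fin 2 → ℤ))).ncard = B.card := by
    rw [Set.ncard_image_of_injective _ toR_injective, Set.ncard_coe_finset]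
  have h1 : B.card ≤ polyDim P + 1 := by
    rw [← hcount, ← hcard_im]
    exact Set.ncard_le_ncard hsub hfin
  have hspan : vectorSpan ℝ P = vectorSpan ℝ (toR '' (B : Set (Fin 2 → ℤ))) := by
    rw [← direction_affineSpan, ← direction_affineSpan, hP, dualCell, affineSpan_convexHull]
  have hc1 : 1 ≤ B.card := Finset.card_pos.2 hne
  have hfc : Fintype.card ↥B = (B.card - 1) + 1 := by
    rw [Fintype.card_coe]; omega
  have h2 : Module.finrank ℝ (vectorSpan ℝ
      (Set.range (fun J : ↥B => toR (J : Fin 2 → ℤ)))) ≤ B.card - 1 :=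
    finrank_vectorSpan_range_le ℝ _ hfc
  rw [hrange, ← hspan] at h2
  have h2' : polyDim P ≤ B.card - 1 := h2
  have h3 : Fintype.card ↥B = polyDim P + 1 := by
    rw [Fintype.card_coe]; omega
  rw [affineIndependent_iff_finrank_vectorSpan_eq ℝ _ h3, hrange, ← hspan]
  show polyDim P = polyDim P
  rfl

lemma exists_strict_min {LΔ : Finset (Fin 2 → ℤ)} {a : (Fin 2 → ℤ) → ℝ}
    (hsimp : ∀ P ∈ dualComplex LΔ a, (latticePts P).ncard = polyDim P + 1)
    {I : Fin 2 → ℤ} (hI : I ∈ LΔ) {x₀ : Fin 2 → ℝ} (hIB : I ∈ Bset LΔ a x₀) :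
    ∃ x : Fin 2 → ℝ, ∀ J ∈ LΔ, J ≠ I → a I + dotIR I x < a J + dotIR J x := by
  classical
  set B := Bset LΔ a x₀ with hBdef
  have hne : B.Nonempty := ⟨I, hIB⟩
  have haff := bset_affineIndependent hsimp x₀ hne
  set i₀ : ↥B := ⟨I, hIB⟩ with hi₀
  have hli := (affineIndependent_iff_linearIndependent_vsub ℝ
    (fun J : ↥B => toR (J : Fin 2 → ℤ)) i₀).1 haff
  obtain ⟨φ, hφ⟩ := exists_pos_functional hli
  set w : Fin 2 → ℝ := fun k => φ (Pi.single k 1) with hw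
  -- For J ∈ B, J ≠ I : dotIR J w - dotIR I w = 1
  have hkey : ∀ J : Fin 2 → ℤ, J ∈ B → J ≠ I → dotIR J w - dotIR I w = 1 := by
    intro J hJ hJI
    have hsub : (⟨J, hJ⟩ : ↥B) ≠ i₀ := by
      simp [hi₀, Subtype.ext_iff, hJI]
    have := hφ ⟨⟨J, hJ⟩, hsub⟩
    have hveq : (fun J : ↥B => toR (J : Fin 2 → ℤ)) ⟨J, hJ⟩ -ᵥ
        (fun J : ↥B => toR (J : Fin 2 → ℤ)) i₀ = toR J - toR I := rfl
    rw [hveq, lin_functional_eq_dot] at this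
    rw [← this, dotIR, dotIR, ← Finset.sum_sub_distrib]
    congr 1
    funext k
    simp [toR, sub_mul, hw]
  -- minimal value at x₀
  have hImin : ∀ J ∈ LΔ, a I + dotIR I x₀ ≤ a J + dotIR J x₀ :=
    (Finset.mem_filter.1 hIB).2
  set m := a I + dotIR I x₀ with hm
  -- gap for J outside B
  set g := posmin (LΔ \ B) (fun J => a J + dotIR J x₀ - m) with hg
  have hgpos : 0 < g := by
    apply posmin_pos
    intro J hJ
    rcases Finset.mem_sdiff.1 hJ with ⟨hJL, hJB⟩
    rw [hBdef, Bset, Finset.mem_filter] at hJB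
    push_neg at hJB
    obtain ⟨K, hK, hKlt⟩ := hJB hJL
    have := hImin K hK
    simp only [sub_pos]
    linarith
  have hgle : ∀ J ∈ LΔ, J ∉ B → g ≤ a J + dotIR J x₀ - m :=
    fun J hJL hJB => posmin_le (Finset.mem_sdiff.2 ⟨hJL, hJB⟩)
  -- bound M
  set M := 1 + ∑ J ∈ LΔ, |dotIR I w - dotIR J w| with hM
  have hMpos : 0 < M := by
    have : (0:ℝ) ≤ ∑ J ∈ LΔ, |dotIR I w - dotIR J w| :=
      Finset.sum_nonneg fun J _ => abs_nonneg _
    linarith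
  have hMge : ∀ J ∈ LΔ, dotIR I w - dotIR J w ≤ M := by
    intro J hJ
    have h1 : dotIR I w - dotIR J w ≤ |dotIR I w - dotIR J w| := le_abs_self _
    have h2 : |dotIR I w - dotIR J w| ≤ ∑ J' ∈ LΔ, |dotIR I w - dotIR J' w| :=
      Finset.single_le_sum (f := fun J' => |dotIR I w - dotIR J' w|)
        (fun J' _ => abs_nonneg _) hJ
    linarith
  set t := g / (2 * M) with ht
  have htpos : 0 < t := div_pos hgpos (by linarith)
  refine ⟨x₀ + t • w, fun J hJL hJI => ?_⟩
  rw [dotIR_add_smul, dotIR_add_smul]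
  by_cases hJB : J ∈ B
  · -- a J + dotIR J x₀ = m and coefficient gap 1
    have hle : a J + dotIR J x₀ ≤ m := (Finset.mem_filter.1 hJB).2 I hI
    have hge : m ≤ a J + dotIR J x₀ := hImin J hJL
    have hde := hkey J hJB hJI
    nlinarith
  · have h1 := hgle J hJL hJB
    have h2 := hMge J hJL
    have h3 : t * (dotIR I w - dotIR J w) ≤ t * M :=
      mul_le_mul_of_nonneg_left h2 (le_of_lt htpos)
    have h4 : t * M = g / 2 := by
      rw [ht]; field_simp
    nlinarith

/-- A smooth tropical plane curve through points in the interiors of distinct edges is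
uniquely determined by those points iff the corresponding marked subgraph `Γ` of the dual
complex (with vertex set `L(Δ)` and an edge `B(x_i) = {p, q}` for each marked point) is
connected. -/
theorem unique_curve_iff_marked_subgraph_connected {K : ℕ}
    (Δ : Set (Fin 2 → ℝ)) (LΔ : Finset (Fin 2 → ℤ)) (a : (Fin 2 → ℤ) → ℝ)
    (hΔ : IsLatticePolytope Δ) (hdim : polyDim Δ = 2)
    (hLΔ : ∀ I : Fin 2 → ℤ, I ∈ LΔ ↔ toR I ∈ Δ)
    (hsat : Saturated LΔ a)
    (hsimp : ∀ P ∈ dualComplex LΔ a, (latticePts P).ncard = polyDim P + 1)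
    (x : Fin K → Fin 2 → ℝ)
    (hedge : ∀ i, (Bset LΔ a (x i)).card = 2)
    (hdistinct : ∀ i j, i ≠ j → Bset LΔ a (x i) ≠ Bset LΔ a (x j)) :
    ((∀ a' : (Fin 2 → ℤ) → ℝ, Saturated LΔ a' →
        (∀ i, 2 ≤ (Bset LΔ a' (x i)).card) →
        ∃ c : ℝ, ∀ I ∈ LΔ, a' I = a I + c) ↔
      ∀ u ∈ LΔ, ∀ v ∈ LΔ,
        Relation.ReflTransGen
          (fun p q : Fin 2 → ℤ => ∃ i, Bset LΔ a (x i) = {p, q}) u v) := by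
  classical
  obtain ⟨S, hS, hΔeq⟩ := hΔ
  have hSne : S.Nonempty := by
    rcases Finset.eq_empty_or_nonempty S with rfl | h
    · rw [Finset.coe_empty, convexHull_empty] at hΔeq
      rw [hΔeq, polyDim, vectorSpan_empty, finrank_bot] at hdim
      exact absurd hdim (by norm_num)
    · exact h
  obtain ⟨s, hs⟩ := hSne
  choose z hz using hS s hs
  have hLne : LΔ.Nonempty := by
    refine ⟨z, (hLΔ z).2 ?_⟩
    have hzs : toR z = s := funext fun k => (hz k).symm
    rw [hzs, hΔeq]
    exact subset_convexHull ℝ _ hs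
  have memB : ∀ (b : (Fin 2 → ℤ) → ℝ) (y : Fin 2 → ℝ) (J : Fin 2 → ℤ),
      J ∈ Bset LΔ b y ↔ J ∈ LΔ ∧ ∀ K' ∈ LΔ, b J + dotIR J y ≤ b K' + dotIR K' y := by
    intro b y J
    simp [Bset, Finset.mem_filter]
  constructor
  · -- uniqueness → connectivity
    intro huniq u hu v hv
    by_contra hnot
    set R : (Fin 2 → ℤ) → (Fin 2 → ℤ) → Prop :=
      fun p q => ∃ i, Bset LΔ a (x i) = {p, q} with hR
    have hstrict : ∀ I : Fin 2 → ℤ, ∃ xI : Fin 2 → ℝ,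
        I ∈ LΔ → ∀ J ∈ LΔ, J ≠ I → a I + dotIR I xI < a J + dotIR J xI := by
      intro I
      by_cases hI : I ∈ LΔ
      · obtain ⟨x₀, hx₀⟩ := hsat I hI
        obtain ⟨xI, hxI⟩ := exists_strict_min hsimp hI hx₀
        exact ⟨xI, fun _ => hxI⟩
      · exact ⟨0, fun h => absurd h hI⟩
    choose xs hxs using hstrict
    set δ : (Fin 2 → ℤ) → ℝ := fun I =>
      posmin (LΔ.erase I) (fun J => a J + dotIR J (xs I) - (a I + dotIR I (xs I))) with hδ
    have hδpos : ∀ I ∈ LΔ, 0 < δ I := by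
      intro I hI
      apply posmin_pos
      intro J hJ
      rcases Finset.mem_erase.1 hJ with ⟨hJI, hJL⟩
      have := hxs I hI J hJL hJI
      simp only [sub_pos]
      linarith
    have hδle : ∀ I ∈ LΔ, ∀ J ∈ LΔ, J ≠ I →
        δ I ≤ a J + dotIR J (xs I) - (a I + dotIR I (xs I)) :=
      fun I hI J hJL hJI => posmin_le (Finset.mem_erase.2 ⟨hJI, hJL⟩)
    set mv : Fin K → ℝ := fun i => LΔ.inf' hLne (fun J => a J + dotIR J (x i)) with hmv
    have hmval : ∀ i, ∀ p ∈ Bset LΔ a (x i), a p + dotIR p (x i) = mv i := by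
      intro i p hp
      obtain ⟨hpL, hpm⟩ := (memB a (x i) p).1 hp
      obtain ⟨J₀, hJ₀, hJeq⟩ := Finset.exists_mem_eq_inf' hLne (fun J => a J + dotIR J (x i))
      refine le_antisymm ?_ (Finset.inf'_le _ hpL)
      rw [hmv]
      simp only
      rw [hJeq]
      exact hpm J₀ hJ₀
    set γ : Fin K → ℝ := fun i =>
      posmin (LΔ \ Bset LΔ a (x i)) (fun J => a J + dotIR J (x i) - mv i) with hγ
    have hγpos : ∀ i, 0 < γ i := by
      intro i
      apply posmin_pos
      intro J hJ
      rcases Finset.mem_sdiff.1 hJ with ⟨hJL, hJB⟩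
      rw [memB] at hJB
      push_neg at hJB
      obtain ⟨K', hK', hKlt⟩ := hJB hJL
      have h2 : mv i ≤ a K' + dotIR K' (x i) := Finset.inf'_le _ hK'
      simp only [sub_pos]
      linarith
    have hγle : ∀ i, ∀ J ∈ LΔ, J ∉ Bset LΔ a (x i) →
        γ i ≤ a J + dotIR J (x i) - mv i :=
      fun i J hJL hJB => posmin_le (Finset.mem_sdiff.2 ⟨hJL, hJB⟩)
    set E := min (posmin LΔ δ) (posmin (Finset.univ : Finset (Fin K)) γ) with hE
    have hEpos : 0 < E := lt_min (posmin_pos hδpos) (posmin_pos (fun i _ => hγpos i))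
    set ε := E / 2 with hε
    have hεpos : 0 < ε := by positivity
    have hεδ : ∀ I ∈ LΔ, ε < δ I := by
      intro I hI
      have h1 : E ≤ δ I := le_trans (min_le_left _ _) (posmin_le hI)
      rw [hε]; linarith
    have hεγ : ∀ i, ε < γ i := by
      intro i
      have h1 : E ≤ γ i := le_trans (min_le_right _ _) (posmin_le (Finset.mem_univ i))
      rw [hε]; linarith
    set a' : (Fin 2 → ℤ) → ℝ :=
      fun I => a I + if Relation.ReflTransGen R u I then ε else 0 with ha'
    have ha'ge : ∀ J, a J ≤ a' J := by
      intro J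
      simp only [ha']
      split_ifs <;> linarith
    have ha'le : ∀ J, a' J ≤ a J + ε := by
      intro J
      simp only [ha']
      split_ifs <;> linarith
    have hsat' : Saturated LΔ a' := by
      intro I hI
      refine ⟨xs I, (memB a' (xs I) I).2 ⟨hI, fun J hJ => ?_⟩⟩
      by_cases hJI : J = I
      · subst hJI; exact le_rfl
      · have h1 := hδle I hI J hJ hJI
        have h2 := hεδ I hI
        have h3 := ha'ge J
        have h4 := ha'le I
        linarith
    have hcard' : ∀ i, 2 ≤ (Bset LΔ a' (x i)).card := by
      intro i
      obtain ⟨p, q, hpq, hsB⟩ := Finset.card_eq_two.1 (hedge i)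
      have key : ∀ r ∈ Bset LΔ a (x i), r ∈ Bset LΔ a' (x i) := by
        intro r hr
        obtain ⟨hrL, hrm⟩ := (memB a (x i) r).1 hr
        refine (memB a' (x i) r).2 ⟨hrL, fun J hJ => ?_⟩
        by_cases hJB : J ∈ Bset LΔ a (x i)
        · obtain ⟨hJL, hJm⟩ := (memB a (x i) J).1 hJB
          have hv1 : a r + dotIR r (x i) = a J + dotIR J (x i) :=
            le_antisymm (hrm J hJ) (hJm r hrL)
          have hiff : Relation.ReflTransGen R u r ↔ Relation.ReflTransGen R u J := by
            by_cases hrJ : r = J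
            · rw [hrJ]
            · have hrpq : r = p ∨ r = q := by
                have h := hr; rw [hsB] at h; simpa using h
              have hJpq : J = p ∨ J = q := by
                have h := hJB; rw [hsB] at h; simpa using h
              have hRrJ : R r J := by
                rcases hrpq with rfl | rfl <;> rcases hJpq with rfl | rfl
                · exact absurd rfl hrJ
                · exact ⟨i, hsB⟩
                · exact ⟨i, by rw [hsB]; exact Finset.pair_comm _ _⟩
                · exact absurd rfl hrJ
              have hRJr : R J r := by
                obtain ⟨i', hi'⟩ := hRrJ
                exact ⟨i', by rw [hi']; exact Finset.pair_comm r J⟩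
              exact ⟨fun h => h.tail hRrJ, fun h => h.tail hRJr⟩
          have hite : (if Relation.ReflTransGen R u r then ε else 0)
              = if Relation.ReflTransGen R u J then ε else 0 := by
            by_cases h : Relation.ReflTransGen R u r
            · rw [if_pos h, if_pos (hiff.1 h)]
            · rw [if_neg h, if_neg (fun h' => h (hiff.2 h'))]
          simp only [ha']
          linarith [hite, hv1]
        · have h1 := hγle i J hJ hJB
          have h2 := hεγ i
          have h3 := hmval i r hr
          have h4 := ha'ge J
          have h5 := ha'le r
          linarith
      have hsub : ({p, q} : Finset (Fin 2 → ℤ)) ⊆ Bset LΔ a' (x i) := by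
        intro r hrpq
        apply key
        rw [hsB]
        exact hrpq
      calc 2 = ({p, q} : Finset (Fin 2 → ℤ)).card := (Finset.card_pair hpq).symm
        _ ≤ _ := Finset.card_le_card hsub
    obtain ⟨c, hcs⟩ := huniq a' hsat' hcard'
    have hcu := hcs u hu
    have hcv := hcs v hv
    simp only [ha'] at hcu hcv
    rw [if_pos Relation.ReflTransGen.refl] at hcu
    rw [if_neg hnot] at hcv
    linarith
  · -- connectivity → uniqueness
    intro hconn a' _hsat' hB'
    set d : (Fin 2 → ℤ) → ℝ := fun I => a' I - a I with hd
    set c := LΔ.inf' hLne d with hc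
    refine ⟨c, fun J hJ => ?_⟩
    have step : ∀ p q : Fin 2 → ℤ, (∃ i, Bset LΔ a (x i) = {p, q}) → d p = c → d q = c := by
      rintro p q ⟨i, hi⟩ hp
      have hpB : p ∈ Bset LΔ a (x i) := by rw [hi]; exact Finset.mem_insert_self _ _
      obtain ⟨hpL, hpmin⟩ := (memB a (x i) p).1 hpB
      obtain ⟨r, hrB', hrp⟩ := Finset.exists_mem_ne
        (lt_of_lt_of_le one_lt_two (hB' i)) p
      obtain ⟨hrL, hrmin'⟩ := (memB a' (x i) r).1 hrB'
      have h1 : a' r + dotIR r (x i) ≤ a' p + dotIR p (x i) := hrmin' p hpL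
      have h2 : c ≤ d r := Finset.inf'_le _ hrL
      have h3 : a p + dotIR p (x i) ≤ a r + dotIR r (x i) := hpmin r hrL
      have hdp : a' p = a p + c := by
        rw [← hp]
        simp only [hd]
        ring
      have hda : a' r = a r + d r := by
        simp only [hd]
        ring
      have hdr : d r = c := by linarith
      have hreq : a r + dotIR r (x i) = a p + dotIR p (x i) := by linarith
      have hrB : r ∈ Bset LΔ a (x i) := (memB a (x i) r).2 ⟨hrL, fun K' hK' => by
        have := hpmin K' hK'
        linarith⟩
      rw [hi] at hrB
      rcases Finset.mem_insert.1 hrB with rfl | hrq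
      · exact absurd rfl hrp
      · rw [Finset.mem_singleton] at hrq
        exact hrq ▸ hdr
    obtain ⟨I₀, hI₀, hI₀eq⟩ := Finset.exists_mem_eq_inf' hLne d
    have hdJ : d J = c := by
      have h := hconn I₀ hI₀ J hJ
      clear hJ
      induction h with
      | refl => rw [hc]; exact hI₀eq.symm
      | tail _ hrel ih => exact step _ _ hrel ih
    have hfin : a' J - a J = c := hdJ
    linarith
end

section
/- Let 𝒫 be a lattice simplicial decomposition of a lattice polytope Δ ⊂ ℝⁿ with a weighting μ. Suppose 𝒦 is the union of s distinct connected components of supp(μ), and let L = 𝒦 ∩ ℤⁿ be the set of lattice points of 𝒦. Suppose there is a deficient member P' ∈ 𝒫 with |P' ∩ L| ≥ μ(P') + 1. Then used(L) ≥ |L| − s + μ(P'). -/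
open Set

/-- A lattice polyhedral decomposition of `Δ`. -/
def IsLatticeDecomp {n : ℕ} (Δ : Set (Fin n → ℝ)) (cplx : Finset (Set (Fin n → ℝ))) : Prop :=
  (∀ P ∈ cplx, P.Nonempty) ∧
  (∀ P ∈ cplx, IsLatticePolytope P) ∧
  (∀ P ∈ cplx, ∀ F : Set (Fin n → ℝ), IsExtreme ℝ P F → F.Nonempty → F ∈ cplx) ∧
  (∀ P ∈ cplx, ∀ Q ∈ cplx, IsExtreme ℝ P (P ∩ Q) ∧ IsExtreme ℝ Q (P ∩ Q)) ∧
  ⋃₀ (cplx : Set (Set (Fin n → ℝ))) = Δ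

/-- A weighting of `cplx`: `0 ≤ μ P ≤ |P| - 1` for all members `P`. -/
def IsWeighting {n : ℕ} (cplx : Finset (Set (Fin n → ℝ))) (μ : Set (Fin n → ℝ) → ℤ) : Prop :=
  ∀ P ∈ cplx, 0 ≤ μ P ∧ μ P ≤ ((latticePts P).ncard : ℤ) - 1

/-- `cplx` is lattice simplicial. -/
def LatticeSimplicial {n : ℕ} (cplx : Finset (Set (Fin n → ℝ))) : Prop :=
  ∀ P ∈ cplx, (latticePts P).ncard = polyDim P + 1

/-- The support of `μ`: the union of the full members (those with `μ P = |P| - 1`). -/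
def weightSupp {n : ℕ} (cplx : Finset (Set (Fin n → ℝ))) (μ : Set (Fin n → ℝ) → ℤ) :
    Set (Fin n → ℝ) :=
  ⋃₀ {P : Set (Fin n → ℝ) | P ∈ cplx ∧ μ P = ((latticePts P).ncard : ℤ) - 1}

/-- `used(L) = Σ_{P : |P ∩ L| ≥ μ(P) + 1} μ(P)`. -/
noncomputable def usedWeight {n : ℕ} (cplx : Finset (Set (Fin n → ℝ)))
    (μ : Set (Fin n → ℝ) → ℤ) (L : Set (Fin n → ℝ)) : ℤ :=
  ∑ P ∈ cplx, if μ P + 1 ≤ ((P ∩ L).ncard : ℤ) then μ P else 0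

section
open scoped Classical

lemma latticePts_mono {n : ℕ} {A B : Set (Fin n → ℝ)} (h : A ⊆ B) :
    latticePts A ⊆ latticePts B := fun x hx => ⟨h hx.1, hx.2⟩

lemma latticePts_union {n : ℕ} (A B : Set (Fin n → ℝ)) :
    latticePts (A ∪ B) = latticePts A ∪ latticePts B := by
  ext x; simp only [latticePts, mem_union, mem_setOf_eq, mem_sep_iff]; tauto

lemma latticePts_subset {n : ℕ} (A : Set (Fin n → ℝ)) : latticePts A ⊆ A := fun _ h => h.1

lemma finite_latticePts_of_isCompact {n : ℕ} {K : Set (Fin n → ℝ)} (hK : IsCompact K) :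
    (latticePts K).Finite := by
  obtain ⟨R, hR⟩ := hK.isBounded.subset_closedBall 0
  have : latticePts K ⊆ (fun z : Fin n → ℤ => fun i => (z i : ℝ)) ''
      (Set.pi univ (fun _ => Set.Icc (⌈-R⌉ : ℤ) ⌊R⌋)) := by
    intro x hx
    choose z hz using hx.2
    refine ⟨z, fun i _ => ?_, by ext i; exact (hz i).symm⟩
    have hxK := hR hx.1
    rw [Metric.mem_closedBall, dist_zero_right] at hxK
    have hxi : |x i| ≤ R := by
      calc |x i| = ‖x i‖ := (Real.norm_eq_abs _).symm
        _ ≤ ‖x‖ := norm_le_pi_norm x i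
        _ ≤ R := hxK
    rw [hz i] at hxi
    rw [abs_le] at hxi
    exact mem_Icc.2 ⟨Int.ceil_le.2 (by exact_mod_cast hxi.1), Int.le_floor.2 (by exact_mod_cast hxi.2)⟩
  exact Finite.subset (Finite.image _ (Set.Finite.pi fun _ => finite_Icc _ _)) this

lemma nonempty_latticePts_of_polytope {n : ℕ} {P : Set (Fin n → ℝ)}
    (h : IsLatticePolytope P) (hne : P.Nonempty) : (latticePts P).Nonempty := by
  obtain ⟨S, hS, rfl⟩ := h
  obtain ⟨v, hv⟩ : (S : Set (Fin n → ℝ)).Nonempty := by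
    by_contra hc
    simp only [not_nonempty_iff_eq_empty] at hc
    rw [hc, convexHull_empty] at hne
    exact hne.ne_empty rfl
  exact ⟨v, subset_convexHull ℝ _ hv, hS v hv⟩

lemma isCompact_of_polytope {n : ℕ} {P : Set (Fin n → ℝ)} (h : IsLatticePolytope P) :
    IsCompact P := by
  obtain ⟨S, -, rfl⟩ := h
  exact S.finite_toSet.isCompact_convexHull (𝕜 := ℝ)

lemma finite_latticePts_sUnion {n : ℕ} (H : Finset (Set (Fin n → ℝ)))
    (hfin : ∀ P ∈ H, (latticePts P).Finite) :
    (latticePts (⋃₀ (H : Set (Set (Fin n → ℝ))))).Finite := by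
  have hsub : latticePts (⋃₀ (H : Set (Set (Fin n → ℝ)))) ⊆
      ⋃ P ∈ (H : Set (Set (Fin n → ℝ))), latticePts P := by
    rintro x ⟨⟨P, hP, hxP⟩, hlat⟩
    exact mem_biUnion hP ⟨hxP, hlat⟩
  exact Finite.subset (Set.Finite.biUnion H.finite_toSet (fun P hP => hfin P hP)) hsub

lemma count_key {n : ℕ} (G : Finset (Set (Fin n → ℝ)))
    (hclosed : ∀ P ∈ G, IsClosed P) (hne : ∀ P ∈ G, P.Nonempty)
    (hfin : ∀ P ∈ G, (latticePts P).Finite)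
    (hlat : ∀ P ∈ G, ∀ Q ∈ G, (P ∩ Q).Nonempty → (latticePts (P ∩ Q)).Nonempty)
    (hconn : IsPreconnected (⋃₀ (G : Set (Set (Fin n → ℝ))))) :
    ∀ m : ℕ, ∀ H ⊆ G, H.Nonempty → (G \ H).card = m →
      ((latticePts (⋃₀ (G : Set (Set (Fin n → ℝ))))).ncard : ℤ) ≤
        ((latticePts (⋃₀ (H : Set (Set (Fin n → ℝ))))).ncard : ℤ) +
          ∑ P ∈ G \ H, (((latticePts P).ncard : ℤ) - 1) := by
  intro m
  induction m with
  | zero =>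
    intro H hHG _ hcard
    have hGH : G = H := by
      have := Finset.card_eq_zero.1 hcard
      apply Finset.Subset.antisymm _ hHG
      intro P hP
      by_contra hPH
      exact absurd (Finset.mem_sdiff.2 ⟨hP, hPH⟩) (by simp [this])
    subst hGH
    simp
  | succ m ih =>
    intro H hHG hHne hcard
    have hGHne : (G \ H).Nonempty := Finset.card_pos.1 (by omega)
    -- find P ∈ G \ H meeting ⋃₀ H
    set A : Set (Fin n → ℝ) := ⋃₀ (H : Set (Set (Fin n → ℝ))) with hA
    set B : Set (Fin n → ℝ) := ⋃₀ ((G \ H : Finset _) : Set (Set (Fin n → ℝ))) with hB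
    have hAclosed : IsClosed A := by
      rw [hA, sUnion_eq_biUnion]
      exact Set.Finite.isClosed_biUnion H.finite_toSet (fun P hP => hclosed P (hHG hP))
    have hBclosed : IsClosed B := by
      rw [hB, sUnion_eq_biUnion]
      exact Set.Finite.isClosed_biUnion (G \ H).finite_toSet
        (fun P hP => hclosed P (Finset.mem_sdiff.1 hP).1)
    have hsub : ⋃₀ (G : Set (Set (Fin n → ℝ))) ⊆ A ∪ B := by
      rintro x ⟨P, hP, hxP⟩
      by_cases hPH : P ∈ H
      · exact Or.inl ⟨P, hPH, hxP⟩
      · exact Or.inr ⟨P, Finset.mem_sdiff.2 ⟨hP, hPH⟩, hxP⟩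
    have hsA : (⋃₀ (G : Set (Set (Fin n → ℝ))) ∩ A).Nonempty := by
      obtain ⟨Q, hQ⟩ := hHne
      obtain ⟨x, hx⟩ := hne Q (hHG hQ)
      exact ⟨x, ⟨Q, hHG hQ, hx⟩, ⟨Q, hQ, hx⟩⟩
    have hsB : (⋃₀ (G : Set (Set (Fin n → ℝ))) ∩ B).Nonempty := by
      obtain ⟨P, hP⟩ := hGHne
      obtain ⟨x, hx⟩ := hne P (Finset.mem_sdiff.1 hP).1
      exact ⟨x, ⟨P, (Finset.mem_sdiff.1 hP).1, hx⟩, ⟨P, hP, hx⟩⟩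
    obtain ⟨x, -, hxA, hxB⟩ := isPreconnected_closed_iff.1 hconn A B hAclosed hBclosed hsub hsA hsB
    obtain ⟨Q, hQH, hxQ⟩ := hxA
    obtain ⟨P, hPGH, hxP⟩ := hxB
    have hPG : P ∈ G := (Finset.mem_sdiff.1 hPGH).1
    have hPnH : P ∉ H := (Finset.mem_sdiff.1 hPGH).2
    obtain ⟨y, hy⟩ := hlat P hPG Q (hHG hQH) ⟨x, hxP, hxQ⟩
    -- apply IH to insert P H
    have hH'G : insert P H ⊆ G := Finset.insert_subset hPG hHG
    have hcard' : (G \ insert P H).card = m := by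
      rw [Finset.sdiff_insert]
      rw [Finset.card_erase_of_mem hPGH]
      omega
    have IH := ih (insert P H) hH'G ⟨P, Finset.mem_insert_self _ _⟩ hcard'
    -- estimate |LP ⋃₀ (insert P H)| ≤ |LP ⋃₀ H| + |LP P| - 1
    have hLPH : (latticePts A).Finite := finite_latticePts_sUnion H (fun R hR => hfin R (hHG hR))
    have hLP : (latticePts P).Finite := hfin P hPG
    have hunion : latticePts (⋃₀ ((insert P H : Finset _) : Set (Set (Fin n → ℝ)))) =
        latticePts P ∪ latticePts A := by
      rw [Finset.coe_insert, sUnion_insert]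
      ext z
      constructor
      · rintro ⟨hz1 | hz1, hz2⟩
        · exact Or.inl ⟨hz1, hz2⟩
        · exact Or.inr ⟨hz1, hz2⟩
      · rintro (⟨hz1, hz2⟩ | ⟨hz1, hz2⟩)
        · exact ⟨Or.inl hz1, hz2⟩
        · exact ⟨Or.inr hz1, hz2⟩
    have hinter : 1 ≤ (latticePts P ∩ latticePts A).ncard := by
      have hyP : y ∈ latticePts P := ⟨hy.1.1, hy.2⟩
      have hyA : y ∈ latticePts A := ⟨⟨Q, hQH, hy.1.2⟩, hy.2⟩
      have hfin' : (latticePts P ∩ latticePts A).Finite := hLP.subset inter_subset_left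
      exact Set.ncard_pos hfin' |>.2 ⟨y, hyP, hyA⟩
    have hkey : ((latticePts (⋃₀ ((insert P H : Finset _) : Set (Set (Fin n → ℝ))))).ncard : ℤ) ≤
        ((latticePts A).ncard : ℤ) + ((latticePts P).ncard : ℤ) - 1 := by
      rw [hunion]
      have h1 := Set.ncard_union_add_ncard_inter (latticePts P) (latticePts A) hLP hLPH
      have h2 : 1 ≤ (latticePts P ∩ latticePts A).ncard := hinter
      have := h1
      push_cast [← this]
      omega
    -- sum decomposition
    have hsum : ∑ R ∈ G \ H, (((latticePts R).ncard : ℤ) - 1) =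
        (((latticePts P).ncard : ℤ) - 1) +
          ∑ R ∈ G \ insert P H, (((latticePts R).ncard : ℤ) - 1) := by
      rw [Finset.sdiff_insert, ← Finset.add_sum_erase _ _ hPGH]
    rw [hsum]
    omega

lemma ncard_iUnion_le_sum {α : Type*} {s : ℕ} (t : Fin s → Set α) :
    (⋃ k, t k).ncard ≤ ∑ k : Fin s, (t k).ncard := by
  have h : ∀ u : Finset (Fin s), (⋃ k ∈ u, t k).ncard ≤ ∑ k ∈ u, (t k).ncard := by
    intro u
    induction u using Finset.induction with
    | empty => simp
    | @insert a u' hx ih =>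
      rw [Finset.set_biUnion_insert, Finset.sum_insert hx]
      exact (Set.ncard_union_le _ _).trans (by omega)
  have := h Finset.univ
  simpa using this

/-- If `L` is the set of lattice points of a union of `s` distinct connected components of
`supp(μ)` and some deficient `P' ∈ cplx` satisfies `|P' ∩ L| ≥ μ(P') + 1`, then
`used(L) ≥ |L| - s + μ(P')`. -/
theorem used_ge_of_components {n : ℕ} (Δ : Set (Fin n → ℝ)) (cplx : Finset (Set (Fin n → ℝ)))
    (μ : Set (Fin n → ℝ) → ℤ)
    (hΔ : IsLatticePolytope Δ) (hdec : IsLatticeDecomp Δ cplx)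
    (hsimp : LatticeSimplicial cplx) (hw : IsWeighting cplx μ)
    (s : ℕ) (C : Fin s → Set (Fin n → ℝ))
    (hC : ∀ k, ∃ x ∈ weightSupp cplx μ, C k = connectedComponentIn (weightSupp cplx μ) x)
    (hCinj : Function.Injective C)
    (P' : Set (Fin n → ℝ)) (hP' : P' ∈ cplx)
    (hdef₁ : 0 < μ P') (hdef₂ : μ P' < ((latticePts P').ncard : ℤ) - 1)
    (hcut : μ P' + 1 ≤ (((P' ∩ latticePts (⋃ k, C k)).ncard : ℤ))) :
    ((latticePts (⋃ k, C k)).ncard : ℤ) - s + μ P' ≤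
      usedWeight cplx μ (latticePts (⋃ k, C k)) := by
  obtain ⟨hcne, hcpoly, hcface, hcinter, hcunion⟩ := hdec
  set S := weightSupp cplx μ with hS
  set L := latticePts (⋃ k, C k) with hL
  -- basic facts about members of cplx
  have hclosed : ∀ P ∈ cplx, IsClosed P := fun P hP =>
    (isCompact_of_polytope (hcpoly P hP)).isClosed
  have hfinP : ∀ P ∈ cplx, (latticePts P).Finite := fun P hP =>
    finite_latticePts_of_isCompact (isCompact_of_polytope (hcpoly P hP))
  have hlat : ∀ P ∈ cplx, ∀ Q ∈ cplx, (P ∩ Q).Nonempty → (latticePts (P ∩ Q)).Nonempty := by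
    intro P hP Q hQ hne
    have hface : IsExtreme ℝ P (P ∩ Q) := (hcinter P hP Q hQ).1
    have hmem : P ∩ Q ∈ cplx := hcface P hP (P ∩ Q) hface hne
    exact nonempty_latticePts_of_polytope (hcpoly _ hmem) hne
  -- the support is contained in the union of the complex
  have hSsub : S ⊆ ⋃₀ (cplx : Set (Set (Fin n → ℝ))) := by
    rintro x ⟨P, ⟨hP, -⟩, hx⟩; exact ⟨P, hP, hx⟩
  have hLfin : L.Finite := by
    have : L ⊆ latticePts (⋃₀ (cplx : Set (Set (Fin n → ℝ)))) := by
      apply latticePts_mono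
      rintro x ⟨_, ⟨k, rfl⟩, hx⟩
      have : C k ⊆ S := by
        obtain ⟨y, hy, hCk⟩ := hC k
        rw [hCk]; exact connectedComponentIn_subset _ _
      exact hSsub (this hx)
    exact (finite_latticePts_sUnion cplx hfinP).subset this
  -- each component C k is a union of full members
  set Fk : Fin s → Finset (Set (Fin n → ℝ)) := fun k =>
    cplx.filter (fun P => μ P = ((latticePts P).ncard : ℤ) - 1 ∧ P ⊆ C k) with hFk
  have hCkS : ∀ k, C k ⊆ S := by
    intro k
    obtain ⟨y, hy, hCk⟩ := hC k
    rw [hCk]; exact connectedComponentIn_subset _ _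
  have hCk_eq : ∀ k, C k = ⋃₀ ((Fk k : Finset _) : Set (Set (Fin n → ℝ))) := by
    intro k
    apply Subset.antisymm
    · intro x hx
      obtain ⟨P, ⟨hPc, hPfull⟩, hxP⟩ := hCkS k hx
      have hPconn : IsPreconnected P := by
        obtain ⟨T, -, rfl⟩ := hcpoly P hPc
        exact (convex_convexHull ℝ _).isPreconnected
      have hPS : P ⊆ S := fun z hz => ⟨P, ⟨hPc, hPfull⟩, hz⟩
      obtain ⟨y, hy, hCk⟩ := hC k
      have hxCk : x ∈ connectedComponentIn S y := hCk ▸ hx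
      have : connectedComponentIn S x = C k := by
        rw [hCk]; exact (connectedComponentIn_eq hxCk).symm
      have hPC : P ⊆ C k := by
        rw [← this]
        exact hPconn.subset_connectedComponentIn hxP hPS
      exact ⟨P, by simp [hFk, Finset.mem_filter, hPc, hPfull, hPC], hxP⟩
    · rintro x ⟨P, hP, hxP⟩
      rw [hFk] at hP
      simp only [Finset.coe_filter, mem_setOf_eq] at hP
      exact hP.2.2 hxP
  have hCkconn : ∀ k, IsPreconnected (C k) := by
    intro k
    obtain ⟨y, hy, hCk⟩ := hC k
    rw [hCk]; exact isPreconnected_connectedComponentIn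
  have hCkne : ∀ k, (C k).Nonempty := by
    intro k
    obtain ⟨y, hy, hCk⟩ := hC k
    exact ⟨y, hCk ▸ mem_connectedComponentIn hy⟩
  -- per-component counting
  have hcount : ∀ k, ((latticePts (C k)).ncard : ℤ) ≤
      (∑ P ∈ Fk k, (((latticePts P).ncard : ℤ) - 1)) + 1 := by
    intro k
    have hFsub : Fk k ⊆ cplx := Finset.filter_subset _ _
    obtain ⟨x, hx⟩ := hCkne k
    have hx' := hx
    rw [hCk_eq k] at hx'
    obtain ⟨P₀, hP₀, hxP₀⟩ := hx'
    have hP₀' : P₀ ∈ Fk k := by exact_mod_cast hP₀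
    have key := count_key (Fk k)
      (fun P hP => hclosed P (hFsub hP)) (fun P hP => hcne P (hFsub hP))
      (fun P hP => hfinP P (hFsub hP))
      (fun P hP Q hQ h => hlat P (hFsub hP) Q (hFsub hQ) h)
      (by rw [← hCk_eq k]; exact hCkconn k)
      (Fk k \ {P₀}).card {P₀} (Finset.singleton_subset_iff.2 hP₀')
      ⟨P₀, Finset.mem_singleton_self _⟩ rfl
    rw [← hCk_eq k] at key
    have hsingle : ⋃₀ (({P₀} : Finset (Set (Fin n → ℝ))) : Set (Set (Fin n → ℝ))) = P₀ := by
      simp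
    rw [hsingle] at key
    have hLP₀ : 1 ≤ ((latticePts P₀).ncard : ℤ) := by
      have hne' := nonempty_latticePts_of_polytope (hcpoly P₀ (hFsub hP₀')) (hcne _ (hFsub hP₀'))
      have hfin' := hfinP P₀ (hFsub hP₀')
      have := (Set.ncard_pos hfin').2 hne'
      omega
    have hsplit : ∑ P ∈ Fk k, (((latticePts P).ncard : ℤ) - 1) =
        (((latticePts P₀).ncard : ℤ) - 1) + ∑ P ∈ Fk k \ {P₀}, (((latticePts P).ncard : ℤ) - 1) := by
      rw [Finset.sdiff_singleton_eq_erase, ← Finset.add_sum_erase _ _ hP₀']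
    omega
  -- Fk are pairwise disjoint
  have hFkdisj : ∀ k j, k ≠ j → Disjoint (Fk k) (Fk j) := by
    intro k j hkj
    rw [Finset.disjoint_left]
    intro P hPk hPj
    simp only [hFk, Finset.mem_filter] at hPk hPj
    obtain ⟨x, hx⟩ := hcne P hPk.1
    have hxk : x ∈ C k := hPk.2.2 hx
    have hxj : x ∈ C j := hPj.2.2 hx
    obtain ⟨y, hy, hCk⟩ := hC k
    obtain ⟨z, hz, hCj⟩ := hC j
    have hxk' : x ∈ connectedComponentIn S y := by rw [← hCk]; exact hxk
    have hxj' : x ∈ connectedComponentIn S z := by rw [← hCj]; exact hxj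
    have h1 : connectedComponentIn S x = C k := by
      rw [hCk]; exact (connectedComponentIn_eq hxk').symm
    have h2 : connectedComponentIn S x = C j := by
      rw [hCj]; exact (connectedComponentIn_eq hxj').symm
    exact hkj (hCinj (h1 ▸ h2))
  set F : Finset (Set (Fin n → ℝ)) := Finset.univ.biUnion Fk with hF
  have hFsum : ∑ P ∈ F, μ P = ∑ k : Fin s, ∑ P ∈ Fk k, μ P := by
    rw [hF]
    exact Finset.sum_biUnion (fun k _ j _ hkj => hFkdisj k j hkj)
  have hFfull : ∀ P ∈ F, μ P = ((latticePts P).ncard : ℤ) - 1 ∧ ∃ k, P ⊆ C k := by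
    intro P hP
    rw [hF, Finset.mem_biUnion] at hP
    obtain ⟨k, -, hPk⟩ := hP
    simp only [hFk, Finset.mem_filter] at hPk
    exact ⟨hPk.2.1, k, hPk.2.2⟩
  have hFcplx : F ⊆ cplx := by
    intro P hP
    rw [hF, Finset.mem_biUnion] at hP
    obtain ⟨k, -, hPk⟩ := hP
    exact Finset.mem_filter.1 hPk |>.1
  have hP'F : P' ∉ F := by
    intro hPF
    have := (hFfull P' hPF).1
    omega
  -- condition holds for every P ∈ F
  have hcond : ∀ P ∈ F, μ P + 1 ≤ ((P ∩ L).ncard : ℤ) := by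
    intro P hP
    obtain ⟨hfull, k, hPC⟩ := hFfull P hP
    have hsub : latticePts P ⊆ P ∩ L := by
      intro x hx
      refine ⟨hx.1, ?_⟩
      rw [hL]
      exact latticePts_mono (subset_iUnion_of_subset k hPC) hx
    have hle := Set.ncard_le_ncard hsub (hLfin.subset inter_subset_right)
    rw [hfull]
    omega
  -- lower bound on usedWeight by restricting the sum to insert P' F
  have hused : ∑ P ∈ insert P' F, μ P ≤ usedWeight cplx μ L := by
    rw [usedWeight]
    have hsub : insert P' F ⊆ cplx := Finset.insert_subset hP' hFcplx
    calc ∑ P ∈ insert P' F, μ P = ∑ P ∈ insert P' F, (if μ P + 1 ≤ ((P ∩ L).ncard : ℤ) then μ P else 0) := by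
          apply Finset.sum_congr rfl
          intro P hP
          rw [if_pos]
          rcases Finset.mem_insert.1 hP with rfl | hPF
          · exact hcut
          · exact hcond P hPF
      _ ≤ ∑ P ∈ cplx, (if μ P + 1 ≤ ((P ∩ L).ncard : ℤ) then μ P else 0) := by
          apply Finset.sum_le_sum_of_subset_of_nonneg hsub
          intro P hP _
          split
          · exact (hw P hP).1
          · exact le_refl 0
  -- combine
  have hLle : (L.ncard : ℤ) ≤ ∑ k : Fin s, ((latticePts (C k)).ncard : ℤ) := by
    have hLeq : L = ⋃ k, latticePts (C k) := by
      rw [hL]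
      ext x
      constructor
      · rintro ⟨⟨_, ⟨k, rfl⟩, hx⟩, hlat'⟩
        exact mem_iUnion.2 ⟨k, hx, hlat'⟩
      · rintro hx
        obtain ⟨k, hx1, hx2⟩ := mem_iUnion.1 hx
        exact ⟨mem_iUnion.2 ⟨k, hx1⟩, hx2⟩
    rw [hLeq]
    have := ncard_iUnion_le_sum (fun k => latticePts (C k))
    push_cast
    exact_mod_cast this
  have hwsum : (L.ncard : ℤ) - s ≤ ∑ P ∈ F, μ P := by
    have h1 : ∀ k, ((latticePts (C k)).ncard : ℤ) - 1 ≤ ∑ P ∈ Fk k, μ P := by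
      intro k
      have h2 : ∑ P ∈ Fk k, μ P = ∑ P ∈ Fk k, (((latticePts P).ncard : ℤ) - 1) := by
        apply Finset.sum_congr rfl
        intro P hP
        exact (Finset.mem_filter.1 hP).2.1
      rw [h2]
      have := hcount k
      omega
    have h3 : ∑ k : Fin s, (((latticePts (C k)).ncard : ℤ) - 1) ≤ ∑ k : Fin s, ∑ P ∈ Fk k, μ P :=
      Finset.sum_le_sum (fun k _ => h1 k)
    rw [hFsum]
    have h4 : ∑ k : Fin s, (((latticePts (C k)).ncard : ℤ) - 1) =
        (∑ k : Fin s, ((latticePts (C k)).ncard : ℤ)) - s := by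
      rw [Finset.sum_sub_distrib]
      simp
    omega
  have hfinal : ∑ P ∈ insert P' F, μ P = μ P' + ∑ P ∈ F, μ P := Finset.sum_insert hP'F
  omega

end
end
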